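/- arXiv:1405.5183 — 10 statements merged into one kernel-verified Lean document; each statement's English description precedes it below -/
import Mathlib

section
/- Let A_1, A_2, …, A_k be nonempty, convex, closed subsets of a real Hilbert space H. Then for every r > 0 the set F_r = {α ∈ [0,1] : the composition P_{A_k}^α ∘ P_{A_{k−1}}^α ∘ ⋯ ∘ P_{A_1}^α has a fixed point x satisfying ‖x‖ ≤ r} is closed in [0,1]. -/
/-- `P` is the metric projection onto `A`: for every `x`, `P x` belongs to `A` and
is a point of `A` nearest to `x`. -/
def IsMetricProj {H : Type*} [NormedAddCommGroup H] (A : Set H) (P : H → H) : Prop :=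
  ∀ x, P x ∈ A ∧ ∀ y ∈ A, dist x (P x) ≤ dist x y

/-- The `α`-relaxed version of a map `P`: `x ↦ α • P x + (1 - α) • x`. -/
def relax {H : Type*} [AddCommGroup H] [Module ℝ H] (α : ℝ) (P : H → H) : H → H :=
  fun x => α • P x + (1 - α) • x

/-- The composition `T (k-1) ∘ ⋯ ∘ T 1 ∘ T 0` (so `T 0` is applied first). -/
def compFold {H : Type*} {k : ℕ} (T : Fin k → H → H) : H → H :=
  (List.ofFn T).foldl (fun g f => f ∘ g) id

open Filter

set_option linter.unusedSectionVars false

section Aux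
variable {H : Type*} [NormedAddCommGroup H] [InnerProductSpace ℝ H]


lemma proj_inner_le {A : Set H} {P : H → H} (hA : Convex ℝ A)
    (hP : IsMetricProj A P) (x : H) : ∀ w ∈ A, inner ℝ (x - P x) (w - P x) ≤ (0:ℝ) := by
  have hPx : P x ∈ A := (hP x).1
  have : Nonempty A := ⟨⟨P x, hPx⟩⟩
  rw [← norm_eq_iInf_iff_real_inner_le_zero hA hPx]
  refine le_antisymm (le_ciInf fun w => ?_) (ciInf_le (⟨0, fun b hb => ?_⟩ : BddBelow _) (⟨P x, hPx⟩ : A))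
  · have := (hP x).2 w w.2
    simpa [dist_eq_norm] using this
  · obtain ⟨w, rfl⟩ := hb; exact norm_nonneg _

lemma proj_nonexp {A : Set H} {P : H → H} (hA : Convex ℝ A)
    (hP : IsMetricProj A P) (x y : H) : ‖P x - P y‖ ≤ ‖x - y‖ := by
  have h1 := proj_inner_le hA hP x (P y) (hP y).1
  have h2 := proj_inner_le hA hP y (P x) (hP x).1
  have key : ‖P x - P y‖^2 ≤ inner ℝ (x - y) (P x - P y) := by
    have e : (x - y) - ((x - P x) - (y - P y)) = P x - P y := by abel
    have h3 : inner ℝ ((x - P x) - (y - P y)) (P x - P y) ≥ (0:ℝ) := by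
      rw [inner_sub_left]
      have h1' : inner ℝ (x - P x) (P x - P y) ≥ (0:ℝ) := by
        have : P y - P x = -(P x - P y) := by abel
        rw [this, inner_neg_right] at h1; linarith
      have h2' : inner ℝ (y - P y) (P x - P y) ≤ (0:ℝ) := h2
      linarith
    have := real_inner_self_eq_norm_sq (P x - P y)
    calc ‖P x - P y‖^2 = inner ℝ (P x - P y) (P x - P y) := this.symm
      _ ≤ inner ℝ (P x - P y) (P x - P y) + inner ℝ ((x - P x) - (y - P y)) (P x - P y) := by linarith
      _ = inner ℝ (x - y) (P x - P y) := by rw [← inner_add_left]; congr 1; abel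
  have hcs := real_inner_le_norm (x - y) (P x - P y)
  nlinarith [norm_nonneg (P x - P y), norm_nonneg (x - y)]



lemma relax_nonexp {P : H → H} (hP : ∀ x y, ‖P x - P y‖ ≤ ‖x - y‖)
    {α : ℝ} (h0 : 0 ≤ α) (h1 : α ≤ 1) (x y : H) :
    ‖relax α P x - relax α P y‖ ≤ ‖x - y‖ := by
  have e : relax α P x - relax α P y = α • (P x - P y) + (1-α) • (x - y) := by
    simp only [relax, smul_sub]; abel
  rw [e]
  calc ‖α • (P x - P y) + (1-α) • (x - y)‖ ≤ ‖α • (P x - P y)‖ + ‖(1-α) • (x - y)‖ :=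
        norm_add_le _ _
    _ = α * ‖P x - P y‖ + (1-α) * ‖x - y‖ := by
        rw [norm_smul, norm_smul, Real.norm_eq_abs, Real.norm_eq_abs,
          abs_of_nonneg h0, abs_of_nonneg (by linarith)]
    _ ≤ α * ‖x - y‖ + (1-α) * ‖x - y‖ := by nlinarith [hP x y]
    _ = ‖x - y‖ := by ring

lemma relax_diff (P : H → H) (α β : ℝ) (y : H) :
    ‖relax α P y - relax β P y‖ = |α - β| * ‖P y - y‖ := by
  have e : relax α P y - relax β P y = (α - β) • (P y - y) := by
    simp only [relax, smul_sub, sub_smul, one_smul]; abel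
  rw [e, norm_smul, Real.norm_eq_abs]

def FL {H : Type*} (L : List (H → H)) : H → H := L.foldl (fun g f => f ∘ g) id


lemma FL_foldl (L : List (H → H)) (g : H → H) (x : H) :
    (L.foldl (fun g f => f ∘ g) g) x = FL L (g x) := by
  induction L generalizing g x with
  | nil => simp [FL]
  | cons f L ih =>
      simp only [List.foldl_cons, FL]
      rw [ih, ih (f ∘ id)]
      rfl

lemma FL_cons (f : H → H) (L : List (H → H)) (x : H) : FL (f :: L) x = FL L (f x) := by
  simp only [FL, List.foldl_cons]
  exact FL_foldl L (f ∘ id) x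

lemma FL_nonexp (L : List (H → H)) (h : ∀ f ∈ L, ∀ x y, ‖f x - f y‖ ≤ ‖x - y‖) :
    ∀ x y, ‖FL L x - FL L y‖ ≤ ‖x - y‖ := by
  induction L with
  | nil => intro x y; simp [FL]
  | cons f L ih =>
      intro x y
      rw [FL_cons, FL_cons]
      calc ‖FL L (f x) - FL L (f y)‖ ≤ ‖f x - f y‖ :=
            ih (fun g hg => h g (List.mem_cons_of_mem _ hg)) _ _
        _ ≤ ‖x - y‖ := h f (List.mem_cons_self) x y

lemma FL_diff (L : List ((H → H) × (H → H))) (C R δ : ℝ)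
    (hne : ∀ p ∈ L, ∀ x y, ‖p.1 x - p.1 y‖ ≤ ‖x - y‖)
    (hgrow : ∀ p ∈ L, ∀ y : H, ‖p.2 y‖ ≤ ‖y‖ + C)
    (hdiff : ∀ p ∈ L, ∀ y : H, ‖y‖ ≤ R → ‖p.1 y - p.2 y‖ ≤ δ)
    (hC : 0 ≤ C) :
    ∀ x : H, ‖x‖ + L.length * C ≤ R →
      ‖FL (L.map Prod.fst) x - FL (L.map Prod.snd) x‖ ≤ L.length * δ := by
  induction L with
  | nil => intro x _; simp [FL]
  | cons p L ih =>
      intro x hx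
      have hxR : ‖x‖ ≤ R := by
        have : (0:ℝ) ≤ (p :: L).length * C := by positivity
        linarith
      have hδ0 : 0 ≤ δ := le_trans (norm_nonneg _) (hdiff p (List.mem_cons_self) x hxR)
      simp only [List.map_cons, List.length_cons]
      rw [FL_cons, FL_cons]
      have hL1ne : ∀ f ∈ L.map Prod.fst, ∀ x y, ‖f x - f y‖ ≤ ‖x - y‖ := by
        intro f hf
        obtain ⟨q, hq, rfl⟩ := List.mem_map.mp hf
        exact hne q (List.mem_cons_of_mem _ hq)
      have step1 : ‖FL (L.map Prod.fst) (p.1 x) - FL (L.map Prod.fst) (p.2 x)‖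
          ≤ ‖p.1 x - p.2 x‖ := FL_nonexp _ hL1ne _ _
      have step2 : ‖FL (L.map Prod.fst) (p.2 x) - FL (L.map Prod.snd) (p.2 x)‖
          ≤ L.length * δ := by
        refine ih (fun q hq => hne q (List.mem_cons_of_mem _ hq))
          (fun q hq => hgrow q (List.mem_cons_of_mem _ hq))
          (fun q hq => hdiff q (List.mem_cons_of_mem _ hq)) _ ?_
        have := hgrow p (List.mem_cons_self) x
        have hlen : ((p :: L).length : ℝ) * C = L.length * C + C := by
          push_cast [List.length_cons]; ring
        rw [hlen] at hx
        linarith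
      calc ‖FL (L.map Prod.fst) (p.1 x) - FL (L.map Prod.snd) (p.2 x)‖
          ≤ ‖FL (L.map Prod.fst) (p.1 x) - FL (L.map Prod.fst) (p.2 x)‖
            + ‖FL (L.map Prod.fst) (p.2 x) - FL (L.map Prod.snd) (p.2 x)‖ :=
            norm_sub_le_norm_sub_add_norm_sub _ _ _
        _ ≤ ‖p.1 x - p.2 x‖ + L.length * δ := add_le_add step1 step2
        _ ≤ δ + L.length * δ := by
            have := hdiff p (List.mem_cons_self) x hxR; linarith
        _ = (L.length + 1) * δ := by ring
        _ = ((p :: L).length : ℝ) * δ := by push_cast [List.length_cons]; ring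

variable [CompleteSpace H]


lemma fixed_of_approx (T : H → H) (hT : ∀ x y, ‖T x - T y‖ ≤ ‖x - y‖)
    (r : ℝ) (hr : 0 ≤ r) (x : ℕ → H) (hx : ∀ n, ‖x n‖ ≤ r)
    (ε : ℕ → ℝ) (hε : Tendsto ε atTop (nhds 0))
    (happ : ∀ n, ‖x n - T (x n)‖ ≤ ε n) :
    ∃ z, T z = z ∧ ‖z‖ ≤ r := by
  classical
  set U : Ultrafilter ℕ := Ultrafilter.of atTop with hUdef
  have hU : (U : Filter ℕ) ≤ atTop := Ultrafilter.of_le _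
  have hex : ∀ a : H, ∃ L : ℝ, Tendsto (fun n => ‖x n - a‖) U (nhds L) := by
    intro a
    have hmem : (↑(U.map (fun n => ‖x n - a‖)) : Filter ℝ) ≤ 𝓟 (Set.Icc 0 (r + ‖a‖)) := by
      rw [Ultrafilter.coe_map, le_principal_iff, mem_map]
      apply Filter.mem_of_superset Filter.univ_mem
      intro n _
      refine ⟨norm_nonneg _, ?_⟩
      calc ‖x n - a‖ ≤ ‖x n‖ + ‖a‖ := norm_sub_le _ _
        _ ≤ r + ‖a‖ := by linarith [hx n]
    obtain ⟨L, _, hL⟩ := (isCompact_Icc (a := (0:ℝ)) (b := r + ‖a‖)).ultrafilter_le_nhds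
      (U.map (fun n => ‖x n - a‖)) hmem
    exact ⟨L, by rw [Ultrafilter.coe_map] at hL; exact hL⟩
  choose ψ hψ using hex
  have hψ0 : ∀ a, 0 ≤ ψ a := fun a =>
    ge_of_tendsto (hψ a) (Eventually.of_forall fun n => norm_nonneg _)
  have hlip : ∀ a b : H, ψ a ≤ ψ b + ‖b - a‖ := by
    intro a b
    exact le_of_tendsto_of_tendsto' (hψ a) ((hψ b).add tendsto_const_nhds)
      fun n => norm_sub_le_norm_sub_add_norm_sub _ _ _
  have hpar : ∀ a b : H, 4 * (ψ ((1/2 : ℝ) • (a + b)))^2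
      = 2 * (ψ a)^2 + 2 * (ψ b)^2 - ‖a - b‖^2 := by
    intro a b
    have hpt : ∀ n, 4 * ‖x n - (1/2 : ℝ) • (a + b)‖^2
        = 2 * ‖x n - a‖^2 + 2 * ‖x n - b‖^2 - ‖a - b‖^2 := by
      intro n
      have hp := parallelogram_law_with_norm ℝ (x n - a) (x n - b)
      have e1 : (x n - a) + (x n - b) = (2:ℝ) • (x n - (1/2 : ℝ) • (a + b)) := by
        module
      have e2 : (x n - a) - (x n - b) = b - a := by abel
      rw [e1, e2, norm_smul] at hp
      have e3 : ‖a - b‖ = ‖b - a‖ := norm_sub_rev _ _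
      rw [e3]
      simp only [Real.norm_ofNat] at hp
      nlinarith [hp]
    have h1 : Tendsto (fun n => 4 * ‖x n - (1/2 : ℝ) • (a + b)‖^2) U
        (nhds (4 * (ψ ((1/2 : ℝ) • (a + b)))^2)) := ((hψ _).pow 2).const_mul 4
    have h2 : Tendsto (fun n => 2 * ‖x n - a‖^2 + 2 * ‖x n - b‖^2 - ‖a - b‖^2) U
        (nhds (2 * (ψ a)^2 + 2 * (ψ b)^2 - ‖a - b‖^2)) :=
      ((((hψ a).pow 2).const_mul 2).add (((hψ b).pow 2).const_mul 2)).sub tendsto_const_nhds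
    rw [funext hpt] at h1
    exact tendsto_nhds_unique h1 h2
  have hTle : ∀ a : H, ψ (T a) ≤ ψ a := by
    intro a
    have hεU : Tendsto ε U (nhds 0) := hε.mono_left hU
    have h2 : Tendsto (fun n => ε n + ‖x n - a‖) U (nhds (ψ a)) := by
      have := hεU.add (hψ a); simpa using this
    refine le_of_tendsto_of_tendsto' (hψ (T a)) h2 fun n => ?_
    calc ‖x n - T a‖ ≤ ‖x n - T (x n)‖ + ‖T (x n) - T a‖ :=
          norm_sub_le_norm_sub_add_norm_sub _ _ _
      _ ≤ ε n + ‖x n - a‖ := add_le_add (happ n) (hT _ _)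
  -- minimize (ψ ·)^2
  have hgrange : (Set.range fun a : H => (ψ a)^2).Nonempty := ⟨(ψ 0)^2, ⟨0, rfl⟩⟩
  have hgbdd : BddBelow (Set.range fun a : H => (ψ a)^2) := ⟨0, by rintro _ ⟨a, rfl⟩; positivity⟩
  set m : ℝ := sInf (Set.range fun a : H => (ψ a)^2) with hmdef
  have hm_le : ∀ a : H, m ≤ (ψ a)^2 := fun a => csInf_le hgbdd ⟨a, rfl⟩
  have hy : ∀ j : ℕ, ∃ a : H, (ψ a)^2 < m + 1/(j+1) := by
    intro j
    have hlt : m < m + 1/((j:ℝ)+1) := by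
      have : (0:ℝ) < 1/((j:ℝ)+1) := by positivity
      linarith
    obtain ⟨_, ⟨a, rfl⟩, ha⟩ := exists_lt_of_csInf_lt hgrange hlt
    exact ⟨a, ha⟩
  choose y hyj using hy
  have hdistbd : ∀ i j : ℕ, ‖y i - y j‖^2 ≤ 2*(1/((i:ℝ)+1)) + 2*(1/((j:ℝ)+1)) := by
    intro i j
    have hmid := hm_le ((1/2 : ℝ) • (y i + y j))
    have hp := hpar (y i) (y j)
    have hi := hyj i
    have hj := hyj j
    linarith
  have hcauchy : CauchySeq y := by
    rw [Metric.cauchySeq_iff]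
    intro δ hδ
    obtain ⟨N, hN⟩ := exists_nat_gt (4 / δ^2)
    refine ⟨N, fun i hi j hj => ?_⟩
    have h1 := hdistbd i j
    have hNi : 1/((i:ℝ)+1) ≤ 1/((N:ℝ)+1) := by
      apply div_le_div_of_nonneg_left (by norm_num) (by positivity)
      have : (N:ℝ) ≤ i := Nat.cast_le.mpr hi
      linarith
    have hNj : 1/((j:ℝ)+1) ≤ 1/((N:ℝ)+1) := by
      apply div_le_div_of_nonneg_left (by norm_num) (by positivity)
      have : (N:ℝ) ≤ j := Nat.cast_le.mpr hj
      linarith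
    have h3 : 4*(1/((N:ℝ)+1)) < δ^2 := by
      rw [mul_one_div, div_lt_iff₀ (by positivity)]
      rw [div_lt_iff₀ (by positivity)] at hN
      nlinarith
    rw [dist_eq_norm]
    nlinarith [norm_nonneg (y i - y j), hδ.le, sq_nonneg (‖y i - y j‖ - δ)]
  obtain ⟨z, hz⟩ := cauchySeq_tendsto_of_complete hcauchy
  have hψcont : Tendsto (fun j => ψ (y j)) atTop (nhds (ψ z)) := by
    rw [Metric.tendsto_atTop]
    intro δ hδ
    rw [Metric.tendsto_atTop] at hz
    obtain ⟨N, hN⟩ := hz δ hδ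
    refine ⟨N, fun j hj => ?_⟩
    have h1 := hlip (y j) z
    have h2 := hlip z (y j)
    have h3 := hN j hj
    rw [dist_eq_norm] at h3 ⊢
    rw [Real.norm_eq_abs, abs_lt]
    have e1 : ‖z - y j‖ = ‖y j - z‖ := norm_sub_rev _ _
    rw [e1] at h1
    constructor <;> linarith
  have hgz : (ψ z)^2 = m := by
    have h1 : Tendsto (fun j => (ψ (y j))^2) atTop (nhds ((ψ z)^2)) := hψcont.pow 2
    have h2 : Tendsto (fun j => (ψ (y j))^2) atTop (nhds m) := by
      have hup : Tendsto (fun j : ℕ => m + 1/((j:ℝ)+1)) atTop (nhds m) := by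
        have h0 : Tendsto (fun j : ℕ => 1/((j:ℝ)+1)) atTop (nhds 0) :=
          tendsto_one_div_add_atTop_nhds_zero_nat
        simpa using tendsto_const_nhds.add h0
      exact tendsto_of_tendsto_of_tendsto_of_le_of_le tendsto_const_nhds hup
        (fun j => hm_le (y j)) (fun j => (hyj j).le)
    exact tendsto_nhds_unique h1 h2
  have hmineq : ∀ w : H, (ψ w)^2 ≤ m → w = z := by
    intro w hw
    have hmid := hm_le ((1/2 : ℝ) • (w + z))
    have hp := hpar w z
    have hsq : ‖w - z‖^2 ≤ 0 := by nlinarith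
    have h0 : ‖w - z‖ = 0 := by nlinarith [norm_nonneg (w - z), sq_nonneg ‖w - z‖]
    exact sub_eq_zero.mp (norm_eq_zero.mp h0)
  -- T z = z
  have hTz : T z = z := by
    apply hmineq
    have h1 : ψ (T z) ≤ ψ z := hTle z
    have := hψ0 (T z)
    nlinarith [hgz, hψ0 z]
  -- ‖z‖ ≤ r
  have hzr : ‖z‖ ≤ r := by
    by_contra hcon
    push_neg at hcon
    set t : ℝ := r / ‖z‖ with ht
    have hznorm : 0 < ‖z‖ := lt_of_le_of_lt hr hcon
    have ht0 : 0 ≤ t := div_nonneg hr hznorm.le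
    have ht1 : t < 1 := (div_lt_one hznorm).mpr hcon
    have htz : t * ‖z‖ = r := div_mul_cancel₀ r hznorm.ne'
    have hQle : ∀ n, ‖x n - t • z‖ ≤ ‖x n - z‖ := by
      intro n
      have hip : inner ℝ (x n) z ≤ ‖x n‖ * ‖z‖ := real_inner_le_norm _ _
      have e1 : ‖x n - z‖^2 = ‖x n‖^2 - 2 * inner ℝ (x n) z + ‖z‖^2 := norm_sub_sq_real _ _
      have e2 : ‖x n - t • z‖^2 = ‖x n‖^2 - 2 * (t * inner ℝ (x n) z) + t^2 * ‖z‖^2 := by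
        rw [norm_sub_sq_real, real_inner_smul_right, norm_smul, Real.norm_eq_abs,
          abs_of_nonneg ht0]
        ring
      have hxr := hx n
      nlinarith [norm_nonneg (x n - t • z), norm_nonneg (x n - z), sq_nonneg (1 - t),
        norm_nonneg (x n)]
    have hψQ : ψ (t • z) ≤ ψ z :=
      le_of_tendsto_of_tendsto' (hψ (t • z)) (hψ z) hQle
    have hQz : t • z = z := by
      apply hmineq
      nlinarith [hψ0 (t • z), hψ0 z, hgz]
    have : t * ‖z‖ = ‖z‖ := by
      conv_rhs => rw [← hQz]
      rw [norm_smul, Real.norm_eq_abs, abs_of_nonneg ht0]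
    nlinarith
  exact ⟨z, hTz, hzr⟩

end Aux

theorem stmt_2 {H : Type*} [NormedAddCommGroup H] [InnerProductSpace ℝ H] [CompleteSpace H]
    (k : ℕ) (hk : 1 ≤ k) (A : Fin k → Set H)
    (hA : ∀ i, (A i).Nonempty ∧ Convex ℝ (A i) ∧ IsClosed (A i))
    (P : Fin k → H → H) (hP : ∀ i, IsMetricProj (A i) (P i))
    (r : ℝ) (hr : 0 < r) :
    IsClosed {α : ℝ | α ∈ Set.Icc (0 : ℝ) 1 ∧
      ∃ x, compFold (fun i => relax α (P i)) x = x ∧ ‖x‖ ≤ r} := by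
  classical
  -- projections are nonexpansive
  have hPn : ∀ i, ∀ x y : H, ‖P i x - P i y‖ ≤ ‖x - y‖ :=
    fun i => proj_nonexp (hA i).2.1 (hP i)
  -- constants
  set C : ℝ := ∑ i : Fin k, ‖P i 0‖ with hCdef
  have hC0 : 0 ≤ C := Finset.sum_nonneg fun i _ => norm_nonneg _
  have hCi : ∀ i, ‖P i 0‖ ≤ C :=
    fun i => Finset.single_le_sum (f := fun j => ‖P j 0‖) (fun j _ => norm_nonneg _) (Finset.mem_univ i)
  set R : ℝ := r + k * C with hRdef
  set M : ℝ := 2 * R + C with hMdef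
  have hR0 : 0 ≤ R := by positivity
  -- growth of relaxed projections
  have hgrow : ∀ i, ∀ β : ℝ, 0 ≤ β → β ≤ 1 → ∀ y : H, ‖relax β (P i) y‖ ≤ ‖y‖ + C := by
    intro i β hβ0 hβ1 y
    have h1 : ‖P i y‖ ≤ ‖y‖ + C := by
      have := hPn i y 0
      have h2 := hCi i
      calc ‖P i y‖ ≤ ‖P i y - P i 0‖ + ‖P i 0‖ :=
            (norm_le_norm_add_norm_sub' (P i y) (P i 0)).trans_eq (add_comm _ _)
        _ ≤ ‖y - 0‖ + C := add_le_add (hPn i y 0) h2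
        _ = ‖y‖ + C := by rw [sub_zero]
    calc ‖relax β (P i) y‖ ≤ ‖β • P i y‖ + ‖(1-β) • y‖ := norm_add_le _ _
      _ = β * ‖P i y‖ + (1-β) * ‖y‖ := by
          rw [norm_smul, norm_smul, Real.norm_eq_abs, Real.norm_eq_abs,
            abs_of_nonneg hβ0, abs_of_nonneg (by linarith)]
      _ ≤ β * (‖y‖ + C) + (1-β) * ‖y‖ := by nlinarith
      _ = ‖y‖ + β * C := by ring
      _ ≤ ‖y‖ + C := by nlinarith
  -- bound of displacement on ball R
  have hdisp : ∀ i, ∀ y : H, ‖y‖ ≤ R → ‖P i y - y‖ ≤ M := by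
    intro i y hy
    calc ‖P i y - y‖ ≤ ‖P i y - P i 0‖ + ‖P i 0 - y‖ := norm_sub_le_norm_sub_add_norm_sub _ _ _
      _ ≤ ‖y - 0‖ + (‖P i 0‖ + ‖y‖) := add_le_add (hPn i y 0) (norm_sub_le _ _)
      _ ≤ R + (C + R) := by
          rw [sub_zero]
          exact add_le_add hy (add_le_add (hCi i) hy)
      _ = M := by rw [hMdef]; ring
  -- sequential closedness
  apply IsSeqClosed.isClosed
  intro αs α hmem hlim
  have hIcc : ∀ n, αs n ∈ Set.Icc (0:ℝ) 1 := fun n => (hmem n).1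
  have hαIcc : α ∈ Set.Icc (0:ℝ) 1 :=
    isClosed_Icc.mem_of_tendsto hlim (Eventually.of_forall hIcc)
  choose xs hfix hxr using fun n => (hmem n).2
  refine ⟨hαIcc, ?_⟩
  -- T_α is nonexpansive
  have hTne : ∀ β : ℝ, 0 ≤ β → β ≤ 1 →
      ∀ x y : H, ‖compFold (fun i => relax β (P i)) x - compFold (fun i => relax β (P i)) y‖
        ≤ ‖x - y‖ := by
    intro β hβ0 hβ1 x y
    apply FL_nonexp
    intro f hf
    rw [List.mem_ofFn] at hf
    obtain ⟨i, rfl⟩ := hf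
    exact relax_nonexp (hPn i) hβ0 hβ1
  -- approximate fixed point bound
  have happ : ∀ n, ‖xs n - compFold (fun i => relax α (P i)) (xs n)‖
      ≤ k * (|α - αs n| * M) := by
    intro n
    set L : List ((H → H) × (H → H)) :=
      List.ofFn (fun i => (relax α (P i), relax (αs n) (P i))) with hLdef
    have hmap1 : L.map Prod.fst = List.ofFn (fun i => relax α (P i)) := by
      rw [hLdef, List.map_ofFn]; rfl
    have hmap2 : L.map Prod.snd = List.ofFn (fun i => relax (αs n) (P i)) := by
      rw [hLdef, List.map_ofFn]; rfl
    have hlen : L.length = k := by rw [hLdef, List.length_ofFn]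
    have key := FL_diff L C R (|α - αs n| * M)
      (by
        intro p hp x y
        rw [hLdef, List.mem_ofFn] at hp
        obtain ⟨i, rfl⟩ := hp
        exact relax_nonexp (hPn i) hαIcc.1 hαIcc.2 x y)
      (by
        intro p hp y
        rw [hLdef, List.mem_ofFn] at hp
        obtain ⟨i, rfl⟩ := hp
        exact hgrow i (αs n) (hIcc n).1 (hIcc n).2 y)
      (by
        intro p hp y hy
        rw [hLdef, List.mem_ofFn] at hp
        obtain ⟨i, rfl⟩ := hp
        rw [relax_diff]
        have hM := hdisp i y hy
        have : (0:ℝ) ≤ |α - αs n| := abs_nonneg _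
        exact mul_le_mul_of_nonneg_left hM this)
      hC0 (xs n)
      (by rw [hlen]; have := hxr n; rw [hRdef]; linarith)
    rw [hmap1, hmap2, hlen] at key
    have hfx := hfix n
    calc ‖xs n - compFold (fun i => relax α (P i)) (xs n)‖
        = ‖compFold (fun i => relax α (P i)) (xs n)
            - compFold (fun i => relax (αs n) (P i)) (xs n)‖ := by
          rw [← norm_sub_rev]
          congr 1
          rw [hfx]
      _ ≤ k * (|α - αs n| * M) := key
  -- ε tends to zero
  have hε : Tendsto (fun n => (k:ℝ) * (|α - αs n| * M)) atTop (nhds 0) := by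
    have h1 : Tendsto (fun n => α - αs n) atTop (nhds 0) := by
      have := tendsto_const_nhds (x := α) (f := atTop (α := ℕ)) |>.sub hlim
      simpa using this
    have h2 : Tendsto (fun n => |α - αs n|) atTop (nhds 0) := by
      have := h1.abs; simpa using this
    have h3 := (h2.mul_const M).const_mul (k:ℝ)
    simpa using h3
  obtain ⟨z, hz1, hz2⟩ := fixed_of_approx (compFold (fun i => relax α (P i)))
    (hTne α hαIcc.1 hαIcc.2) r hr.le xs hxr _ hε happ
  exact ⟨z, hz1, hz2⟩
end

section
/- There exists a decreasing and continuous function φ : (0,1] → [0,1] such that for every α, β ∈ (0,1], if u_{α,β} denotes the unique fixed point of P_{B_3}^α ∘ P_{B_2}^α ∘ P_{B_1}^β, then P_{B_1}(u_{α,β}) = (φ(α), φ(α)²). In particular, P_{B_1}(u_{α,β}) does not depend on β. -/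
set_option maxHeartbeats 1600000

lemma aux_theta (a M : ℝ) (h : ∀ θ : ℝ, 0 < θ → θ ≤ 1 → a * θ ≤ M * θ ^ 2) : a ≤ 0 := by
  by_contra ha
  push_neg at ha
  have hM : 0 < M := by have := h 1 one_pos le_rfl; nlinarith
  have hθpos : (0:ℝ) < min 1 (a / (2 * M)) := lt_min one_pos (by positivity)
  have h2 : min 1 (a / (2*M)) ≤ a / (2*M) := min_le_right _ _
  have h1 : min 1 (a / (2*M)) ≤ 1 := min_le_left _ _
  have hh := h _ hθpos h1
  have key : M * (min 1 (a/(2*M))) ≤ a / 2 := by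
    have : M * (a/(2*M)) = a/2 := by field_simp
    nlinarith
  nlinarith

lemma main_comp (α β s σ u0 u1 : ℝ) (hα0 : 0 < α) (hα1 : α ≤ 1) (hβ0 : 0 < β) (hβ1 : β ≤ 1)
    (hmem : s^2 ≤ σ)
    (h0 : (1 - α) * (α + (1 - α) * (β * s + (1 - β) * u0)) = u0)
    (h1 : (1 - α) * ((1 - α) * (β * σ + (1 - β) * u1)) = u1)
    (hmin : ∀ y0 y1 : ℝ, y0^2 ≤ y1 →
      (u0 - s)^2 + (u1 - σ)^2 ≤ (u0 - y0)^2 + (u1 - y1)^2) :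
    σ = s^2 ∧ α*(2-α)*(2*s^3 + s) = α*(1-α) := by
  obtain ⟨D, hDdef⟩ : ∃ D : ℝ, D = 1 - (1-α)^2*(1-β) := ⟨_, rfl⟩
  obtain ⟨c, hcdef⟩ : ∃ c : ℝ, c = α*(2-α) := ⟨_, rfl⟩
  have hD : 0 < D := by rw [hDdef]; nlinarith [sq_nonneg (1-α)]
  have hD1 : D ≤ 1 := by rw [hDdef]; nlinarith [sq_nonneg (1-α)]
  have hc : 0 < c := by rw [hcdef]; nlinarith
  have A1 : D * (u0 - s) = α*(1-α) - c*s := by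
    rw [hDdef, hcdef]; linear_combination -h0
  have A2 : D * (u1 - σ) = -(c*σ) := by
    rw [hDdef, hcdef]; linear_combination -h1
  have master : ∀ y0 y1 : ℝ, y0^2 ≤ y1 →
      0 ≤ D*((y0-s)^2 + (y1-σ)^2) - 2*(α*(1-α)-c*s)*(y0-s) + 2*c*σ*(y1-σ) := by
    intro y0 y1 hy
    have hm := hmin y0 y1 hy
    have hm' : 0 ≤ (y0-s)^2 - 2*(u0-s)*(y0-s) + (y1-σ)^2 - 2*(u1-σ)*(y1-σ) := by nlinarith
    have hEq : D*((y0-s)^2 + (y1-σ)^2) - 2*(α*(1-α)-c*s)*(y0-s) + 2*c*σ*(y1-σ)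
        = D * ((y0-s)^2 - 2*(u0-s)*(y0-s) + (y1-σ)^2 - 2*(u1-σ)*(y1-σ)) := by
      linear_combination (2*(y0-s))*A1 + (2*(y1-σ))*A2
    rw [hEq]
    exact mul_nonneg hD.le hm'
  have hσ0 : 0 ≤ σ := le_trans (sq_nonneg s) hmem
  have stepA : σ = s^2 := by
    have hA : ∀ θ : ℝ, 0 < θ → θ ≤ 1 →
        (2*c*σ*(σ - s^2)) * θ ≤ (D*(σ - s^2)^2) * θ^2 := by
      intro θ hθ hθ1
      have hfeas : s^2 ≤ σ + θ*(s^2 - σ) := by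
        nlinarith [mul_nonneg (sub_nonneg.mpr hθ1) (sub_nonneg.mpr hmem)]
      have hmast := master s (σ + θ*(s^2 - σ)) hfeas
      linarith [hmast]
    have hle := aux_theta _ _ hA
    by_contra hne
    have hlt : s^2 < σ := lt_of_le_of_ne hmem (fun h => hne h.symm)
    have hσpos : 0 < σ := lt_of_le_of_lt (sq_nonneg s) hlt
    nlinarith [mul_pos (mul_pos hc hσpos) (sub_pos.mpr hlt)]
  subst stepA
  obtain ⟨F, hFdef⟩ : ∃ F : ℝ, F = c*(2*s^3 + s) - α*(1-α) := ⟨_, rfl⟩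
  have stepB : F = 0 := by
    have hB : ∀ θ : ℝ, 0 < θ → θ ≤ 1 →
        (2*F^2) * θ ≤ ((1 + 8*s^2 + 2*F^2 + 2*c*s^2) * F^2) * θ^2 := by
      intro θ hθ hθ1
      have hm := master (s - θ*F) ((s - θ*F)^2) (le_refl _)
      have key : (2*F^2)*θ ≤ (D*(1+(2*s-θ*F)^2) + 2*c*s^2) * F^2 * θ^2 := by
        have hexp : D*(((s-θ*F)-s)^2 + ((s-θ*F)^2-s^2)^2)
            - 2*(α*(1-α)-c*s)*((s-θ*F)-s) + 2*c*s^2*((s-θ*F)^2-s^2)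
            = (D*(1+(2*s-θ*F)^2) + 2*c*s^2) * F^2 * θ^2 - (2*F^2)*θ := by
          linear_combination (2*θ*F)*hFdef
        rw [hexp] at hm; linarith
      have hθsq : θ^2 ≤ 1 := by nlinarith
      have hb1 : (2*s-θ*F)^2 ≤ 8*s^2 + 2*F^2 := by
        nlinarith [sq_nonneg (2*s+θ*F), mul_nonneg (sub_nonneg.mpr hθsq) (sq_nonneg F)]
      have hb2 : D*(1+(2*s-θ*F)^2) + 2*c*s^2 ≤ 1 + 8*s^2 + 2*F^2 + 2*c*s^2 := by
        nlinarith [sq_nonneg (2*s-θ*F), mul_nonneg (sub_nonneg.mpr hD1) (sq_nonneg (2*s-θ*F))]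
      have h2 : (0:ℝ) ≤ F^2*θ^2 := by positivity
      nlinarith [mul_nonneg h2 (sub_nonneg.mpr hb2)]
    have hle := aux_theta _ _ hB
    nlinarith [sq_nonneg F]
  refine ⟨rfl, ?_⟩
  subst hcdef
  rw [hFdef] at stepB
  linarith

noncomputable def gcube : ℝ → ℝ := fun t => 2*t^3 + t

lemma gcube_mono : StrictMono gcube := by
  intro a b h
  simp only [gcube]
  nlinarith [sq_nonneg (a+b), sq_nonneg (a-b), sq_nonneg a, sq_nonneg b]

lemma gcube_surj : Function.Surjective gcube := by
  intro y
  have hle : -(|y|+1) ≤ (|y|+1) := by have := abs_nonneg y; linarith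
  have := intermediate_value_Icc hle
    ((by unfold gcube; continuity : Continuous gcube).continuousOn)
  have hy : y ∈ Set.Icc (gcube (-(|y|+1))) (gcube (|y|+1)) := by
    have h1 := abs_nonneg y
    have h2 := le_abs_self y
    have h3 := neg_abs_le y
    constructor <;> simp only [gcube] <;> nlinarith [pow_pos (show (0:ℝ) < |y|+1 by linarith) 3]
  obtain ⟨x, _, hx⟩ := this hy
  exact ⟨x, hx⟩

noncomputable def eiso : ℝ ≃o ℝ := StrictMono.orderIsoOfSurjective gcube gcube_mono gcube_surj

noncomputable def phi : ℝ → ℝ := fun x => eiso.symm ((1-x)/(2-x))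

lemma eiso_apply (x : ℝ) : eiso x = gcube x := by
  rw [eiso, StrictMono.coe_orderIsoOfSurjective]

lemma phi_props : StrictAntiOn phi (Set.Ioc 0 1) ∧ ContinuousOn phi (Set.Ioc 0 1) ∧
    (∀ α ∈ Set.Ioc (0:ℝ) 1, phi α ∈ Set.Icc (0:ℝ) 1) := by
  refine ⟨?_, ?_, ?_⟩
  · intro a ha b hb hab
    apply eiso.symm.strictMono
    rw [div_lt_div_iff₀ (by linarith [hb.2] : (0:ℝ) < 2 - b) (by linarith [ha.2] : (0:ℝ) < 2 - a)]
    nlinarith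
  · exact eiso.symm.continuous.comp_continuousOn
      (ContinuousOn.div (by fun_prop) (by fun_prop)
        (fun x hx => by have := hx.2; intro h; linarith [sub_eq_zero.mp h]))
  · intro α hα
    have hr0 : (0:ℝ) ≤ (1-α)/(2-α) := div_nonneg (by linarith [hα.2]) (by linarith [hα.2])
    have hr1 : (1-α)/(2-α) ≤ 3 := by
      rw [div_le_iff₀ (by linarith [hα.2])]; nlinarith [hα.1, hα.2]
    constructor
    · have : eiso.symm (eiso 0) ≤ eiso.symm ((1-α)/(2-α)) := by
        apply eiso.symm.monotone; rw [eiso_apply]; simpa [gcube] using hr0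
      simpa [phi] using this
    · have : eiso.symm ((1-α)/(2-α)) ≤ eiso.symm (eiso 1) := by
        apply eiso.symm.monotone; rw [eiso_apply]; simp only [gcube]; norm_num; linarith
      simpa [phi] using this

theorem stmt_5
    (B₁ B₂ B₃ : Set (EuclideanSpace ℝ (Fin 2)))
    (hB₁ : B₁ = {p | (p 0) ^ 2 ≤ p 1})
    (hB₂ : B₂ = {p | p 0 = 1 ∧ p 1 = 0})
    (hB₃ : B₃ = {p | p 0 = 0 ∧ p 1 = 0})
    (P₁ P₂ P₃ : EuclideanSpace ℝ (Fin 2) → EuclideanSpace ℝ (Fin 2))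
    (hP₁ : IsMetricProj B₁ P₁) (hP₂ : IsMetricProj B₂ P₂) (hP₃ : IsMetricProj B₃ P₃) :
    ∃ φ : ℝ → ℝ, StrictAntiOn φ (Set.Ioc 0 1) ∧ ContinuousOn φ (Set.Ioc 0 1) ∧
      (∀ α ∈ Set.Ioc (0 : ℝ) 1, φ α ∈ Set.Icc (0 : ℝ) 1) ∧
      ∀ α ∈ Set.Ioc (0 : ℝ) 1, ∀ β ∈ Set.Ioc (0 : ℝ) 1,
        ∀ u : EuclideanSpace ℝ (Fin 2), relax α P₃ (relax α P₂ (relax β P₁ u)) = u →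
          P₁ u 0 = φ α ∧ P₁ u 1 = (φ α) ^ 2 := by
  obtain ⟨hanti, hcont, hrange⟩ := phi_props
  refine ⟨phi, hanti, hcont, hrange, ?_⟩
  intro α hα β hβ u hu
  -- P₂ and P₃ are constant maps
  have hP2val : ∀ x, P₂ x = (!₂[1,0] : EuclideanSpace ℝ (Fin 2)) := by
    intro x
    have h := (hP₂ x).1
    rw [hB₂] at h
    ext i
    fin_cases i
    · simpa using h.1
    · simpa using h.2
  have hP3val : ∀ x, P₃ x = (0 : EuclideanSpace ℝ (Fin 2)) := by
    intro x
    have h := (hP₃ x).1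
    rw [hB₃] at h
    ext i
    fin_cases i
    · simpa using h.1
    · simpa using h.2
  simp only [relax] at hu
  rw [hP2val, hP3val] at hu
  have h0 := congrArg (fun v : EuclideanSpace ℝ (Fin 2) => v 0) hu
  have h1 := congrArg (fun v : EuclideanSpace ℝ (Fin 2) => v 1) hu
  simp only [PiLp.add_apply, PiLp.smul_apply, smul_eq_mul, PiLp.zero_apply, PiLp.toLp_apply,
    Matrix.cons_val_zero, Matrix.cons_val_one, Matrix.head_cons, mul_zero, zero_add,
    mul_one] at h0 h1
  have hmem : (P₁ u 0)^2 ≤ P₁ u 1 := by have := (hP₁ u).1; rw [hB₁] at this; exact this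
  have hmin : ∀ y0 y1 : ℝ, y0^2 ≤ y1 →
      (u 0 - P₁ u 0)^2 + (u 1 - P₁ u 1)^2 ≤ (u 0 - y0)^2 + (u 1 - y1)^2 := by
    intro y0 y1 hy
    have hymem : (!₂[y0,y1] : EuclideanSpace ℝ (Fin 2)) ∈ B₁ := by
      rw [hB₁]; simpa using hy
    have hd := (hP₁ u).2 _ hymem
    rw [EuclideanSpace.dist_eq, EuclideanSpace.dist_eq] at hd
    simp only [Fin.sum_univ_two, Real.dist_eq, sq_abs, Matrix.cons_val_zero,
      Matrix.cons_val_one, Matrix.head_cons, PiLp.toLp_apply] at hd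
    have h2 := pow_le_pow_left₀ (Real.sqrt_nonneg _) hd 2
    rw [Real.sq_sqrt (by positivity), Real.sq_sqrt (by positivity)] at h2
    exact h2
  obtain ⟨hσ, hcube⟩ := main_comp α β (P₁ u 0) (P₁ u 1) (u 0) (u 1)
    hα.1 hα.2 hβ.1 hβ.2 hmem h0 h1 hmin
  have h2α : (0:ℝ) < 2 - α := by linarith [hα.2]
  have h' : (2-α)*(2*(P₁ u 0)^3 + P₁ u 0) = 1-α := by
    apply mul_left_cancel₀ (ne_of_gt hα.1)
    linear_combination hcube
  have hg : gcube (P₁ u 0) = (1-α)/(2-α) := by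
    rw [gcube, eq_div_iff (ne_of_gt h2α)]
    linear_combination h'
  have hphi : phi α = P₁ u 0 := by
    rw [phi, ← hg, ← eiso_apply, OrderIso.symm_apply_apply]
  exact ⟨hphi.symm, by rw [hσ, hphi]⟩
end

section
/- Let α, β ∈ (0,1] and let u ∈ ℝ² be a fixed point of P_{B_3}^α ∘ P_{B_2}^α ∘ P_{B_1}^β. Then P_{B_1}(u) = (x, x²) for some x ∈ [0,1], and this x satisfies 2x³ + x = (1−α)/(2−α). -/
set_option maxHeartbeats 1000000

lemma aux_le_zero (c M : ℝ) (hM : 0 < M) (h : ∀ δ : ℝ, 0 < δ → δ ≤ 1 → c ≤ δ * M) : c ≤ 0 := by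
  by_contra hc
  push_neg at hc
  have hδpos : 0 < min 1 (c / (2 * M)) := lt_min one_pos (div_pos hc (by linarith))
  have h1 := h _ hδpos (min_le_left _ _)
  have h2 : min 1 (c / (2 * M)) ≤ c / (2 * M) := min_le_right _ _
  have h3 : min 1 (c / (2 * M)) * M ≤ (c / (2 * M)) * M :=
    mul_le_mul_of_nonneg_right h2 hM.le
  have h4 : (c / (2 * M)) * M = c / 2 := by field_simp
  linarith

theorem stmt_6
    (B₁ B₂ B₃ : Set (EuclideanSpace ℝ (Fin 2)))
    (hB₁ : B₁ = {p | (p 0) ^ 2 ≤ p 1})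
    (hB₂ : B₂ = {p | p 0 = 1 ∧ p 1 = 0})
    (hB₃ : B₃ = {p | p 0 = 0 ∧ p 1 = 0})
    (P₁ P₂ P₃ : EuclideanSpace ℝ (Fin 2) → EuclideanSpace ℝ (Fin 2))
    (hP₁ : IsMetricProj B₁ P₁) (hP₂ : IsMetricProj B₂ P₂) (hP₃ : IsMetricProj B₃ P₃)
    (α β : ℝ) (hα : α ∈ Set.Ioc (0 : ℝ) 1) (hβ : β ∈ Set.Ioc (0 : ℝ) 1)
    (u : EuclideanSpace ℝ (Fin 2)) (hu : relax α P₃ (relax α P₂ (relax β P₁ u)) = u) :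
    ∃ x ∈ Set.Icc (0 : ℝ) 1, P₁ u 0 = x ∧ P₁ u 1 = x ^ 2 ∧
      2 * x ^ 3 + x = (1 - α) / (2 - α) := by
  obtain ⟨hα0, hα1⟩ := hα
  obtain ⟨hβ0, hβ1⟩ := hβ
  have hmem : P₁ u ∈ B₁ := (hP₁ u).1
  rw [hB₁] at hmem
  set v0 := P₁ u 0 with hv0def
  set v1 := P₁ u 1 with hv1def
  have hmem' : v0 ^ 2 ≤ v1 := hmem
  have h2 := (hP₂ (relax β P₁ u)).1
  rw [hB₂] at h2
  have h3 := (hP₃ (relax α P₂ (relax β P₁ u))).1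
  rw [hB₃] at h3
  simp only [relax] at h2 h3
  -- componentwise fixed-point equations
  have eq0 : (1 - α) * (α * 1 + (1 - α) * (β * v0 + (1 - β) * u 0)) = u 0 := by
    have := congrArg (· 0) hu
    simp only [relax, PiLp.add_apply, PiLp.smul_apply, smul_eq_mul] at this
    rw [h3.1, h2.1] at this
    linarith [this]
  have eq1 : (1 - α) * ((1 - α) * (β * v1 + (1 - β) * u 1)) = u 1 := by
    have := congrArg (· 1) hu
    simp only [relax, PiLp.add_apply, PiLp.smul_apply, smul_eq_mul] at this
    rw [h3.2, h2.2] at this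
    linarith [this]
  -- optimality of the projection, squared
  have key : ∀ a b : ℝ, a ^ 2 ≤ b →
      (u 0 - v0) ^ 2 + (u 1 - v1) ^ 2 ≤ (u 0 - a) ^ 2 + (u 1 - b) ^ 2 := by
    intro a b hab
    have hp : (!₂[a, b] : EuclideanSpace ℝ (Fin 2)) ∈ B₁ := by
      rw [hB₁]
      show ((!₂[a, b] : EuclideanSpace ℝ (Fin 2)) 0) ^ 2 ≤ (!₂[a, b] : EuclideanSpace ℝ (Fin 2)) 1
      simpa using hab
    have hd := (hP₁ u).2 _ hp
    rw [EuclideanSpace.dist_eq] at hd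
    rw [EuclideanSpace.dist_eq] at hd
    have hS1 : (0:ℝ) ≤ ∑ i, dist (u i) (P₁ u i) ^ 2 := by positivity
    have hS2 : (0:ℝ) ≤ ∑ i, dist (u i) ((!₂[a, b] : EuclideanSpace ℝ (Fin 2)) i) ^ 2 := by
      positivity
    have hsq := pow_le_pow_left₀ (Real.sqrt_nonneg _) hd 2
    rw [Real.sq_sqrt hS1, Real.sq_sqrt hS2] at hsq
    simpa [Fin.sum_univ_two, Real.dist_eq, sq_abs, hv0def, hv1def] using hsq
  -- auxiliary positivity
  have hs : 0 < 1 - (1 - α) ^ 2 * (1 - β) := by nlinarith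
  have h1d : 0 < 1 - (1 - α) ^ 2 := by nlinarith
  have eqt : (1 - (1 - α) ^ 2 * (1 - β)) * (v1 - u 1) = (1 - (1 - α) ^ 2) * v1 := by
    linear_combination eq1
  have eq0' : (1 - (1 - α) ^ 2 * (1 - β)) * (u 0 - v0)
      = α * (1 - α) - (1 - (1 - α) ^ 2) * v0 := by
    linear_combination -eq0
  have hv1nn : 0 ≤ v1 := le_trans (sq_nonneg v0) hmem'
  have htnn : 0 ≤ v1 - u 1 := by nlinarith [eqt]
  -- Claim A : v lies on the parabola
  have hA : v1 = v0 ^ 2 := by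
    by_contra hne
    have hlt : v0 ^ 2 < v1 := lt_of_le_of_ne hmem' (Ne.symm hne)
    have hv1pos : 0 < v1 := lt_of_le_of_lt (sq_nonneg v0) hlt
    have htpos : 0 < v1 - u 1 := by nlinarith [eqt]
    have hε : 0 < min (v1 - u 1) (v1 - v0 ^ 2) := lt_min htpos (by linarith)
    have hεle : min (v1 - u 1) (v1 - v0 ^ 2) ≤ v1 - u 1 := min_le_left _ _
    have hb : v0 ^ 2 ≤ v1 - min (v1 - u 1) (v1 - v0 ^ 2) := by
      have := min_le_right (v1 - u 1) (v1 - v0 ^ 2); linarith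
    have hk := key v0 (v1 - min (v1 - u 1) (v1 - v0 ^ 2)) hb
    nlinarith [hk, hε, hεle, mul_pos hε hε,
      mul_nonneg hε.le (sub_nonneg.mpr hεle)]
  -- stationarity
  have hineq : ∀ h : ℝ, 0 ≤ (4 * (v1 - u 1) * v0 - 2 * (u 0 - v0)) * h
      + h ^ 2 * (1 + 2 * (v1 - u 1) + (2 * v0 + h) ^ 2) := by
    intro h
    have hk := key (v0 + h) ((v0 + h) ^ 2) (le_refl _)
    rw [hA] at hk
    have hid : (4 * (v0 ^ 2 - u 1) * v0 - 2 * (u 0 - v0)) * h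
        + h ^ 2 * (1 + 2 * (v0 ^ 2 - u 1) + (2 * v0 + h) ^ 2)
        = ((u 0 - (v0 + h)) ^ 2 + (u 1 - (v0 + h) ^ 2) ^ 2)
          - ((u 0 - v0) ^ 2 + (u 1 - v0 ^ 2) ^ 2) := by ring
    have hA' : v1 - u 1 = v0 ^ 2 - u 1 := by rw [hA]
    rw [hA']
    linarith [hk, hid.ge, hid.le]
  have hMpos : 0 < 3 + 2 * (v1 - u 1) + 8 * v0 ^ 2 := by nlinarith
  have boundp : ∀ δ : ℝ, 0 < δ → δ ≤ 1 → (2 * v0 + δ) ^ 2 ≤ 2 + 8 * v0 ^ 2 := by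
    intro δ hδ0 hδ1; nlinarith [sq_nonneg (2 * v0 - δ)]
  have boundm : ∀ δ : ℝ, 0 < δ → δ ≤ 1 → (2 * v0 + -δ) ^ 2 ≤ 2 + 8 * v0 ^ 2 := by
    intro δ hδ0 hδ1; nlinarith [sq_nonneg (2 * v0 + δ)]
  have hK1 : 4 * (v1 - u 1) * v0 - 2 * (u 0 - v0) ≤ 0 := by
    apply aux_le_zero _ _ hMpos
    intro δ hδ0 hδ1
    have h1 := hineq (-δ)
    have h2 := boundm δ hδ0 hδ1
    have h3 : (4 * (v1 - u 1) * v0 - 2 * (u 0 - v0)) * δ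
        ≤ δ ^ 2 * (3 + 2 * (v1 - u 1) + 8 * v0 ^ 2) := by
      nlinarith [mul_le_mul_of_nonneg_left h2 (sq_nonneg δ)]
    nlinarith [h3, hδ0, mul_pos hδ0 hδ0]
  have hK2 : -(4 * (v1 - u 1) * v0 - 2 * (u 0 - v0)) ≤ 0 := by
    apply aux_le_zero _ _ hMpos
    intro δ hδ0 hδ1
    have h1 := hineq δ
    have h2 := boundp δ hδ0 hδ1
    have h3 : -(4 * (v1 - u 1) * v0 - 2 * (u 0 - v0)) * δ
        ≤ δ ^ 2 * (3 + 2 * (v1 - u 1) + 8 * v0 ^ 2) := by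
      nlinarith [mul_le_mul_of_nonneg_left h2 (sq_nonneg δ)]
    nlinarith [h3, hδ0, mul_pos hδ0 hδ0]
  have hK0 : 4 * (v1 - u 1) * v0 - 2 * (u 0 - v0) = 0 := le_antisymm hK1 (by linarith)
  -- conclude
  have hK0' : u 0 - v0 = 2 * (v1 - u 1) * v0 := by linarith
  have h5 : (1 - (1 - α) ^ 2 * (1 - β)) * (2 * (v1 - u 1) * v0)
      = α * (1 - α) - (1 - (1 - α) ^ 2) * v0 := by rw [← hK0']; exact eq0'
  have h6 : (1 - (1 - α) ^ 2 * (1 - β)) * (2 * (v1 - u 1) * v0)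
      = 2 * v0 * ((1 - (1 - α) ^ 2) * v1) := by rw [← eqt]; ring
  rw [h6, hA] at h5
  have hz : (1 - (1 - α) ^ 2) * (2 * v0 ^ 3 + v0) = α * (1 - α) := by
    linear_combination h5
  have hfin : (2 - α) * (2 * v0 ^ 3 + v0) = 1 - α := by
    apply mul_left_cancel₀ hα0.ne'
    linear_combination hz
  have hx0 : 0 ≤ v0 := by
    by_contra hv
    push_neg at hv
    have hc : v0 ^ 3 < 0 := by nlinarith [mul_pos (mul_pos (neg_pos.mpr hv) (neg_pos.mpr hv)) (neg_pos.mpr hv)]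
    have hneg : (2 - α) * (2 * v0 ^ 3 + v0) < 0 :=
      mul_neg_of_pos_of_neg (by linarith) (by linarith)
    linarith
  have hx1 : v0 ≤ 1 := by
    by_contra hv
    push_neg at hv
    have hc : 1 < v0 ^ 3 := by nlinarith [hv, sq_nonneg (v0 - 1), sq_nonneg (v0 + 1)]
    have h2a : (1:ℝ) ≤ 2 - α := by linarith
    nlinarith [hfin, hc, h2a]
  refine ⟨v0, ⟨hx0, hx1⟩, rfl, hA, ?_⟩
  rw [eq_div_iff (by linarith : (2:ℝ) - α ≠ 0)]
  linarith [hfin]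
end

section
/- Let A be a nonempty, convex, closed subset of a real Hilbert space H and let α, β ∈ [0,1]. Then P_A^α ∘ P_A^β = P_A^{1−(1−α)(1−β)}. Consequently, for every integer m ≥ 1, the m-fold composition (P_A^α)^m equals P_A^{1−(1−α)^m}. -/
open scoped RealInnerProductSpace in
lemma proj_unique {H : Type*} [NormedAddCommGroup H] [InnerProductSpace ℝ H]
    {A : Set H} (hconv : Convex ℝ A) {u v w : H} (hv : v ∈ A) (hw : w ∈ A)
    (hvn : ∀ y ∈ A, dist u v ≤ dist u y) (hwn : ∀ y ∈ A, dist u w ≤ dist u y) :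
    v = w := by
  letI : Nonempty A := ⟨⟨v, hv⟩⟩
  have hbdd : BddBelow (Set.range fun y : A => ‖u - (y : H)‖) := by
    refine ⟨0, ?_⟩
    rintro r ⟨y, rfl⟩
    exact norm_nonneg _
  have h1 : ‖u - v‖ = ⨅ y : A, ‖u - (y : H)‖ := by
    refine le_antisymm (le_ciInf fun y => ?_) (ciInf_le hbdd ⟨v, hv⟩)
    simpa [dist_eq_norm] using hvn y y.2
  have h2 : ‖u - w‖ = ⨅ y : A, ‖u - (y : H)‖ := by
    refine le_antisymm (le_ciInf fun y => ?_) (ciInf_le hbdd ⟨w, hw⟩)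
    simpa [dist_eq_norm] using hwn y y.2
  have i1 := (norm_eq_iInf_iff_real_inner_le_zero hconv hv).mp h1 w hw
  have i2 := (norm_eq_iInf_iff_real_inner_le_zero hconv hw).mp h2 v hv
  have key : ⟪w - v, w - v⟫ = ⟪u - v, w - v⟫ + ⟪u - w, v - w⟫ := by
    rw [show w - v = (u - v) - (u - w) by abel, inner_sub_left,
      show v - w = -((u - v) - (u - w)) by abel, inner_neg_right]
    ring
  have hz : w - v = 0 := by
    have := real_inner_self_nonpos.mp (by linarith : ⟪w - v, w - v⟫ ≤ 0)
    exact this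
  have := sub_eq_zero.mp hz
  exact this.symm


lemma relax_proj_eq {H : Type*} [NormedAddCommGroup H] [InnerProductSpace ℝ H]
    {A : Set H} (hconv : Convex ℝ A) {P : H → H} (hP : IsMetricProj A P)
    {β : ℝ} (hβ : β ∈ Set.Icc (0 : ℝ) 1) (x : H) : P (relax β P x) = P x := by
  set z := relax β P x with hzdef
  have hx1 : dist x z = β * dist x (P x) := by
    rw [dist_eq_norm, dist_eq_norm]
    have h : x - z = β • (x - P x) := by
      rw [hzdef]; simp only [relax]; module
    rw [h, norm_smul, Real.norm_eq_abs, abs_of_nonneg hβ.1]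
  have hz1 : dist z (P x) = (1 - β) * dist x (P x) := by
    rw [dist_eq_norm, dist_eq_norm]
    have h : z - P x = (1 - β) • (x - P x) := by
      rw [hzdef]; simp only [relax]; module
    rw [h, norm_smul, Real.norm_eq_abs, abs_of_nonneg (by linarith [hβ.2])]
  have hnear : ∀ y ∈ A, dist z (P x) ≤ dist z y := by
    intro y hy
    have h1 := (hP x).2 y hy
    have htri := dist_triangle x z y
    linarith
  exact proj_unique hconv (hP z).1 (hP x).1 (hP z).2 hnear

lemma relax_comp {H : Type*} [NormedAddCommGroup H] [InnerProductSpace ℝ H]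
    {A : Set H} (hconv : Convex ℝ A) {P : H → H} (hP : IsMetricProj A P)
    (α : ℝ) {β : ℝ} (hβ : β ∈ Set.Icc (0 : ℝ) 1) :
    relax α P ∘ relax β P = relax (1 - (1 - α) * (1 - β)) P := by
  funext x
  have hz := relax_proj_eq hconv hP hβ x
  simp only [Function.comp_apply, relax] at hz ⊢
  rw [hz]
  module

theorem stmt_9 {H : Type*} [NormedAddCommGroup H] [InnerProductSpace ℝ H] [CompleteSpace H]
    (A : Set H) (hA : A.Nonempty ∧ Convex ℝ A ∧ IsClosed A)
    (P : H → H) (hP : IsMetricProj A P)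
    (α β : ℝ) (hα : α ∈ Set.Icc (0 : ℝ) 1) (hβ : β ∈ Set.Icc (0 : ℝ) 1) :
    relax α P ∘ relax β P = relax (1 - (1 - α) * (1 - β)) P ∧
    ∀ m : ℕ, 1 ≤ m → (relax α P)^[m] = relax (1 - (1 - α) ^ m) P := by
  obtain ⟨hne, hconv, hcl⟩ := hA
  suffices key : ∀ m : ℕ, (relax α P)^[m] = relax (1 - (1 - α) ^ m) P by
    exact ⟨relax_comp hconv hP α hβ, fun m _ => key m⟩
  intro m
  induction m with
  | zero =>
    simp only [Function.iterate_zero, pow_zero, sub_self]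
    funext x
    simp [relax]
  | succ n ih =>
    have hmem : 1 - (1 - α) ^ n ∈ Set.Icc (0 : ℝ) 1 := by
      have h1 : (1 - α) ^ n ≤ 1 :=
        pow_le_one₀ (by linarith [hα.2]) (by linarith [hα.1])
      have h2 : (0:ℝ) ≤ (1 - α) ^ n := pow_nonneg (by linarith [hα.2]) n
      exact ⟨by linarith, by linarith⟩
    rw [Function.iterate_succ', ih, relax_comp hconv hP α hmem]
    ring_nf
end

section
/- The function f is twice continuously differentiable on ℝ×[0,∞) and is convex on ℝ×[0,∞). -/
set_option maxHeartbeats 1000000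

open Set Filter

lemma quad_nonneg (A B C dx dz : ℝ) (hA : 0 ≤ A) (hC : 0 ≤ C) (hB : B^2 ≤ A*C) :
    0 ≤ A*dx^2 + 2*B*(dx*dz) + C*dz^2 := by
  rcases eq_or_lt_of_le hA with h|h
  · have hB0 : B = 0 := by nlinarith [sq_nonneg B]
    rw [← h, hB0]
    have : (0:ℝ)*dx^2 + 2*0*(dx*dz) + C*dz^2 = C*dz^2 := by ring
    rw [this]; positivity
  · nlinarith [sq_nonneg (A*dx + B*dz), mul_nonneg hA hC, sq_nonneg dz, sq_nonneg dx]

lemma Qkey (u v m M cc dx dz : ℝ) (hu : 0 ≤ u) (hv : 0 ≤ v) (huv : u + v ≤ 3)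
    (hm : 0 ≤ m) (hmM : m ≤ M) (hcc : 0 ≤ cc) :
    0 ≤ 2*((81^2/6)*M^3*cc)*dx^2
      + cc*((6*(u*v)*(u^2 - 3*(u*v) + v^2)*m^3)*dx^2
        + 2*((3*(u^2*v^2)*(v-u))*(-(3*m^2)))*(dx*dz) + ((u^3*v^3)*(6*m))*dz^2) := by
  have hM : 0 ≤ M := le_trans hm hmM
  have hs : 0 ≤ u*v := mul_nonneg hu hv
  have hs94 : u*v ≤ 9/4 := by nlinarith [sq_nonneg (u-v)]
  have hm3 : m^3 ≤ M^3 := pow_le_pow_left₀ hm hmM 3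
  have hm30 : 0 ≤ m^3 := by positivity
  have key : 2*((81^2/6)*M^3*cc)*dx^2
      + cc*((6*(u*v)*(u^2 - 3*(u*v) + v^2)*m^3)*dx^2
        + 2*((3*(u^2*v^2)*(v-u))*(-(3*m^2)))*(dx*dz) + ((u^3*v^3)*(6*m))*dz^2)
      = (2*((81^2/6)*M^3*cc) + cc*(6*(u*v)*(u^2 - 3*(u*v) + v^2)*m^3))*dx^2
        + 2*(cc*(-(9*(u^2*v^2)*(v-u)*m^2)))*(dx*dz) + (cc*(6*(u^3*v^3)*m))*dz^2 := by ring
  rw [key]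
  set A := 2*((81^2/6)*M^3*cc) + cc*(6*(u*v)*(u^2 - 3*(u*v) + v^2)*m^3) with hAdef
  set B := cc*(-(9*(u^2*v^2)*(v-u)*m^2)) with hBdef
  set C := cc*(6*(u^3*v^3)*m) with hCdef
  have inner : 2156*m^3 ≤ 2187*M^3 + 6*(u*v)*(u^2 - 3*(u*v) + v^2)*m^3 := by
    have h1 : 6*(u*v)*(u^2 - 3*(u*v) + v^2) ≥ -31 := by nlinarith [sq_nonneg (u-v)]
    have h2 : 6*(u*v)*(u^2 - 3*(u*v) + v^2)*m^3 ≥ (-31)*m^3 :=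
      mul_le_mul_of_nonneg_right h1 hm30
    have h3 : 2156*m^3 ≤ 2187*m^3 + (-31)*m^3 := by linarith
    nlinarith
  have hA2 : cc*(2156*m^3) ≤ A := by
    rw [hAdef]
    have := mul_le_mul_of_nonneg_left inner hcc
    nlinarith
  have hA : 0 ≤ A := le_trans (by positivity) hA2
  have hC : 0 ≤ C := by rw [hCdef]; positivity
  apply quad_nonneg _ _ _ _ _ hA hC
  have hS : 0 ≤ (u*v)^3*m^4 := by positivity
  have hB2 : B^2 ≤ cc^2 * (1641 * ((u*v)^3 * m^4)) := by
    rw [hBdef]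
    have e : (cc*(-(9*(u^2*v^2)*(v-u)*m^2)))^2 = cc^2*((u*v)^4*((v-u)^2*m^4))*81 := by ring
    rw [e]
    have hvu : (v-u)^2 ≤ 9 := by nlinarith
    have hm4 : (0:ℝ) ≤ m^4 := by positivity
    have h1 : (v-u)^2*m^4 ≤ 9*m^4 := mul_le_mul_of_nonneg_right hvu hm4
    have h2 : (u*v)^4*((v-u)^2*m^4) ≤ (u*v)^4*(9*m^4) :=
      mul_le_mul_of_nonneg_left h1 (by positivity)
    have h3 : (u*v)^4*m^4 ≤ (9/4)*((u*v)^3*m^4) := by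
      have h4 : (u*v)^4 ≤ (9/4)*(u*v)^3 := by
        calc (u*v)^4 = (u*v)*(u*v)^3 := by ring
        _ ≤ (9/4)*(u*v)^3 := mul_le_mul_of_nonneg_right hs94 (by positivity)
      nlinarith [pow_nonneg hm 4]
    nlinarith [sq_nonneg cc]
  have hAC : cc^2*(1641*((u*v)^3*m^4)) ≤ A*C := by
    have h6 : (cc*(2156*m^3))*(cc*(6*(u^3*v^3)*m)) ≤ A*C :=
      mul_le_mul hA2 le_rfl (by positivity) hA
    have e2 : (cc*(2156*m^3))*(cc*(6*(u^3*v^3)*m)) = cc^2*(12936*((u*v)^3*m^4)) := by ring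
    rw [e2] at h6
    nlinarith [mul_nonneg (sq_nonneg cc) hS]
  exact le_trans hB2 hAC

noncomputable def psi (z : ℝ) : ℝ := if 0 ≤ z then z else z / (1 + z^2)
noncomputable def psi1 (z : ℝ) : ℝ := if 0 ≤ z then 1 else (1 - z^2) / (1 + z^2)^2
noncomputable def psi2 (z : ℝ) : ℝ := if 0 ≤ z then 0 else (2*z^3 - 6*z) / (1 + z^2)^3

lemma psi_of_nonneg {z : ℝ} (h : 0 ≤ z) : psi z = z := if_pos h
lemma psi1_of_nonneg {z : ℝ} (h : 0 ≤ z) : psi1 z = 1 := if_pos h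
lemma psi2_of_nonneg {z : ℝ} (h : 0 ≤ z) : psi2 z = 0 := if_pos h

lemma one_add_sq_pos (z : ℝ) : (0:ℝ) < 1 + z^2 := by positivity

lemma q_hasDeriv (z : ℝ) : HasDerivAt (fun w : ℝ => w / (1 + w^2)) ((1 - z^2)/(1+z^2)^2) z := by
  have h1 : HasDerivAt (fun w : ℝ => w) 1 z := hasDerivAt_id z
  have h2 : HasDerivAt (fun w : ℝ => 1 + w^2) (2*z) z := by
    simpa using ((hasDerivAt_pow 2 z).const_add 1)
  have := h1.fun_div h2 (ne_of_gt (one_add_sq_pos z))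
  refine this.congr_deriv ?_
  field_simp
  ring
lemma q1_hasDeriv (z : ℝ) : HasDerivAt (fun w : ℝ => (1 - w^2)/(1+w^2)^2)
    ((2*z^3 - 6*z)/(1+z^2)^3) z := by
  have h1 : HasDerivAt (fun w : ℝ => 1 - w^2) (-(2*z)) z := by
    simpa using ((hasDerivAt_pow 2 z).const_sub 1)
  have h2 : HasDerivAt (fun w : ℝ => (1 + w^2)^2) (2*(1+z^2)*(2*z)) z := by
    have hb : HasDerivAt (fun w : ℝ => 1 + w^2) (2*z) z := by
      simpa using ((hasDerivAt_pow 2 z).const_add 1)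
    have := hb.fun_pow 2
    refine this.congr_deriv ?_
    ring
  have := h1.fun_div h2 (by positivity)
  refine this.congr_deriv ?_
  have hz := ne_of_gt (one_add_sq_pos z)
  field_simp
  ring

lemma psi_hasDeriv (z : ℝ) : HasDerivAt psi (psi1 z) z := by
  rcases lt_trichotomy z 0 with hz|hz|hz
  · have hev : psi =ᶠ[nhds z] (fun w : ℝ => w / (1 + w^2)) := by
      filter_upwards [Iio_mem_nhds hz] with w hw
      simp [psi, not_le.mpr (mem_Iio.mp hw)]
    rw [psi1, if_neg (not_le.mpr hz)]
    exact (q_hasDeriv z).congr_of_eventuallyEq hev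
  · subst hz
    rw [psi1, if_pos le_rfl]
    have hl : HasDerivWithinAt psi 1 (Iic 0) 0 := by
      have h0 : HasDerivWithinAt (fun w : ℝ => w / (1 + w^2)) 1 (Iic 0) 0 := by
        have := (q_hasDeriv 0).hasDerivWithinAt (s := Iic 0)
        simpa using this
      apply h0.congr
      · intro w hw
        rcases eq_or_lt_of_le (mem_Iic.mp hw) with h|h
        · subst h; simp [psi]
        · simp [psi, not_le.mpr h]
      · simp [psi]
    have hr : HasDerivWithinAt psi 1 (Ici 0) 0 := by
      have h0 : HasDerivWithinAt (fun w : ℝ => w) 1 (Ici 0) 0 :=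
        (hasDerivAt_id 0).hasDerivWithinAt
      apply h0.congr
      · intro w hw; simp [psi, mem_Ici.mp hw]
      · simp [psi]
    have := hl.union hr
    rwa [Iic_union_Ici, hasDerivWithinAt_univ] at this
  · have hev : psi =ᶠ[nhds z] (fun w : ℝ => w) := by
      filter_upwards [Ioi_mem_nhds hz] with w hw
      simp [psi, le_of_lt (mem_Ioi.mp hw)]
    rw [psi1, if_pos (le_of_lt hz)]
    exact (hasDerivAt_id z).congr_of_eventuallyEq hev

lemma psi1_hasDeriv (z : ℝ) : HasDerivAt psi1 (psi2 z) z := by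
  rcases lt_trichotomy z 0 with hz|hz|hz
  · have hev : psi1 =ᶠ[nhds z] (fun w : ℝ => (1 - w^2)/(1+w^2)^2) := by
      filter_upwards [Iio_mem_nhds hz] with w hw
      simp [psi1, not_le.mpr (mem_Iio.mp hw)]
    rw [psi2, if_neg (not_le.mpr hz)]
    exact (q1_hasDeriv z).congr_of_eventuallyEq hev
  · subst hz
    rw [psi2, if_pos le_rfl]
    have hl : HasDerivWithinAt psi1 0 (Iic 0) 0 := by
      have h0 : HasDerivWithinAt (fun w : ℝ => (1 - w^2)/(1+w^2)^2) 0 (Iic 0) 0 := by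
        have := (q1_hasDeriv 0).hasDerivWithinAt (s := Iic 0)
        simpa using this
      apply h0.congr
      · intro w hw
        rcases eq_or_lt_of_le (mem_Iic.mp hw) with h|h
        · subst h; simp [psi1]
        · simp [psi1, not_le.mpr h]
      · simp [psi1]
    have hr : HasDerivWithinAt psi1 0 (Ici 0) 0 := by
      have h0 : HasDerivWithinAt (fun _ : ℝ => (1:ℝ)) 0 (Ici 0) 0 :=
        (hasDerivAt_const 0 1).hasDerivWithinAt
      apply h0.congr
      · intro w hw; simp [psi1, mem_Ici.mp hw]
      · simp [psi1]
    have := hl.union hr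
    rwa [Iic_union_Ici, hasDerivWithinAt_univ] at this
  · have hev : psi1 =ᶠ[nhds z] (fun _ : ℝ => (1:ℝ)) := by
      filter_upwards [Ioi_mem_nhds hz] with w hw
      simp [psi1, le_of_lt (mem_Ioi.mp hw)]
    rw [psi2, if_pos (le_of_lt hz)]
    exact (hasDerivAt_const z 1).congr_of_eventuallyEq hev

lemma psi2_continuous : Continuous psi2 := by
  have : psi2 = fun z : ℝ => if (0:ℝ) ≤ z then (fun _ : ℝ => (0:ℝ)) z
      else (fun w => (2*w^3 - 6*w) / (1 + w^2)^3) z := rfl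
  rw [this]
  apply Continuous.if_le
  · exact continuous_const
  · exact Continuous.div (by continuity) (by continuity)
      (fun w => by positivity)
  · exact continuous_const
  · exact continuous_id
  · intro w hw
    simp [← hw]
  
lemma psi_ge (z : ℝ) : -(1/2) ≤ psi z := by
  rw [psi]
  split_ifs with h
  · linarith
  · rw [le_div_iff₀ (one_add_sq_pos z)]
    nlinarith [sq_nonneg (1+z)]

lemma psi1_abs (z : ℝ) : |psi1 z| ≤ 1 := by
  rw [psi1, abs_le]
  split_ifs with h
  · constructor <;> norm_num
  · have h2 := one_add_sq_pos z
    constructor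
    · rw [le_div_iff₀ (by positivity)]
      nlinarith [sq_nonneg z, sq_nonneg (z^2)]
    · rw [div_le_iff₀ (by positivity)]
      nlinarith [sq_nonneg z, sq_nonneg (z^2)]

lemma psi2_abs (z : ℝ) : |psi2 z| ≤ 8 := by
  rw [psi2, abs_le]
  split_ifs with h
  · constructor <;> norm_num
  · have h2 := one_add_sq_pos z
    have hz : z < 0 := not_le.mp h
    constructor
    · rw [le_div_iff₀ (by positivity)]
      nlinarith [sq_nonneg (z+1), sq_nonneg (z-1), sq_nonneg (z^2-1), sq_nonneg z, sq_nonneg (z^2+2*z), sq_nonneg (z^2-2*z), sq_nonneg (z^3+z), sq_nonneg (z^3-z)]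
    · rw [div_le_iff₀ (by positivity)]
      nlinarith [sq_nonneg (z+1), sq_nonneg (z-1), sq_nonneg (z^2-1), sq_nonneg z, sq_nonneg (z^2+2*z), sq_nonneg (z^2-2*z), sq_nonneg (z^3+z), sq_nonneg (z^3-z)]

noncomputable def cp (t : ℝ) : ℝ := max t 0 ^ 3
noncomputable def cp1 (t : ℝ) : ℝ := 3 * max t 0 ^ 2
noncomputable def cp2 (t : ℝ) : ℝ := 6 * max t 0

lemma cp_of_nonneg {t : ℝ} (h : 0 ≤ t) : cp t = t^3 := by rw [cp, max_eq_left h]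
lemma cp_of_nonpos {t : ℝ} (h : t ≤ 0) : cp t = 0 := by rw [cp, max_eq_right h]; ring

lemma cp_hasDeriv (t : ℝ) : HasDerivAt cp (cp1 t) t := by
  rcases lt_trichotomy t 0 with ht|ht|ht
  · have hev : cp =ᶠ[nhds t] (fun _ : ℝ => (0:ℝ)) := by
      filter_upwards [Iio_mem_nhds ht] with w hw
      exact cp_of_nonpos (le_of_lt (mem_Iio.mp hw))
    rw [cp1, max_eq_right (le_of_lt ht)]
    simpa using (hasDerivAt_const t (0:ℝ)).congr_of_eventuallyEq hev
  · subst ht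
    rw [cp1]; simp only [max_self]
    have hl : HasDerivWithinAt cp 0 (Iic 0) 0 := by
      have h0 : HasDerivWithinAt (fun _ : ℝ => (0:ℝ)) 0 (Iic 0) 0 :=
        (hasDerivAt_const 0 (0:ℝ)).hasDerivWithinAt
      apply h0.congr
      · intro w hw; exact cp_of_nonpos (mem_Iic.mp hw)
      · exact cp_of_nonpos le_rfl
    have hr : HasDerivWithinAt cp 0 (Ici 0) 0 := by
      have h0 : HasDerivWithinAt (fun w : ℝ => w^3) 0 (Ici 0) 0 := by
        have := (hasDerivAt_pow 3 (0:ℝ)).hasDerivWithinAt (s := Ici 0)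
        simpa using this
      apply h0.congr
      · intro w hw; exact cp_of_nonneg (mem_Ici.mp hw)
      · exact cp_of_nonneg le_rfl
    have := hl.union hr
    rw [Iic_union_Ici, hasDerivWithinAt_univ] at this
    simpa using this
  · have hev : cp =ᶠ[nhds t] (fun w : ℝ => w^3) := by
      filter_upwards [Ioi_mem_nhds ht] with w hw
      exact cp_of_nonneg (le_of_lt (mem_Ioi.mp hw))
    rw [cp1, max_eq_left (le_of_lt ht)]
    exact (hasDerivAt_pow 3 t).congr_of_eventuallyEq hev

lemma cp1_hasDeriv (t : ℝ) : HasDerivAt cp1 (cp2 t) t := by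
  rcases lt_trichotomy t 0 with ht|ht|ht
  · have hev : cp1 =ᶠ[nhds t] (fun _ : ℝ => (0:ℝ)) := by
      filter_upwards [Iio_mem_nhds ht] with w hw
      rw [cp1, max_eq_right (le_of_lt (mem_Iio.mp hw))]; ring
    rw [cp2, max_eq_right (le_of_lt ht)]
    simpa using (hasDerivAt_const t (0:ℝ)).congr_of_eventuallyEq hev
  · subst ht
    rw [cp2]; simp only [max_self]
    have hl : HasDerivWithinAt cp1 0 (Iic 0) 0 := by
      have h0 : HasDerivWithinAt (fun _ : ℝ => (0:ℝ)) 0 (Iic 0) 0 :=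
        (hasDerivAt_const 0 (0:ℝ)).hasDerivWithinAt
      apply h0.congr
      · intro w hw; rw [cp1, max_eq_right (mem_Iic.mp hw)]; ring
      · rw [cp1]; simp
    have hr : HasDerivWithinAt cp1 0 (Ici 0) 0 := by
      have h0 : HasDerivWithinAt (fun w : ℝ => 3*w^2) 0 (Ici 0) 0 := by
        have := ((hasDerivAt_pow 2 (0:ℝ)).const_mul 3).hasDerivWithinAt (s := Ici 0)
        simpa using this
      apply h0.congr
      · intro w hw; rw [cp1, max_eq_left (mem_Ici.mp hw)]
      · rw [cp1]; simp
    have := hl.union hr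
    rw [Iic_union_Ici, hasDerivWithinAt_univ] at this
    simpa using this
  · have hev : cp1 =ᶠ[nhds t] (fun w : ℝ => 3*w^2) := by
      filter_upwards [Ioi_mem_nhds ht] with w hw
      rw [cp1, max_eq_left (le_of_lt (mem_Ioi.mp hw))]
    rw [cp2, max_eq_left (le_of_lt ht)]
    exact ((hasDerivAt_pow 2 t).const_mul 3).congr_of_eventuallyEq hev |>.congr_deriv (by
      simp [Nat.cast_ofNat]; ring)

lemma cp2_continuous : Continuous cp2 :=
  continuous_const.mul (continuous_id.max continuous_const)

noncomputable def Bf (M z : ℝ) : ℝ := cp (M - psi z)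
noncomputable def Bf1 (M z : ℝ) : ℝ := -(cp1 (M - psi z) * psi1 z)
noncomputable def Bf2 (M z : ℝ) : ℝ := cp2 (M - psi z) * (psi1 z)^2 - cp1 (M - psi z) * psi2 z

lemma psi_continuous : Continuous psi := by
  rw [continuous_iff_continuousAt]; exact fun z => (psi_hasDeriv z).continuousAt

lemma psi1_continuous : Continuous psi1 := by
  rw [continuous_iff_continuousAt]; exact fun z => (psi1_hasDeriv z).continuousAt

lemma cp_continuous : Continuous cp := by
  rw [continuous_iff_continuousAt]; exact fun t => (cp_hasDeriv t).continuousAt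
lemma cp1_continuous : Continuous cp1 := by
  rw [continuous_iff_continuousAt]; exact fun t => (cp1_hasDeriv t).continuousAt

lemma Bf_hasDeriv (M z : ℝ) : HasDerivAt (Bf M) (Bf1 M z) z := by
  have inner : HasDerivAt (fun w : ℝ => M - psi w) (-(psi1 z)) z := by
    simpa using (psi_hasDeriv z).const_sub M
  have := (cp_hasDeriv (M - psi z)).comp z inner
  refine this.congr_deriv ?_
  rw [Bf1]; ring

lemma Bf1_hasDeriv (M z : ℝ) : HasDerivAt (Bf1 M) (Bf2 M z) z := by
  have inner : HasDerivAt (fun w : ℝ => M - psi w) (-(psi1 z)) z := by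
    simpa using (psi_hasDeriv z).const_sub M
  have h1 := (cp1_hasDeriv (M - psi z)).comp z inner
  have h2 := (h1.fun_mul (psi1_hasDeriv z)).fun_neg
  refine h2.congr_deriv ?_
  rw [Bf2]; simp only [Function.comp_apply]; ring

lemma Bf2_continuous (M : ℝ) : Continuous (Bf2 M) := by
  apply Continuous.sub
  · exact (cp2_continuous.comp (continuous_const.sub psi_continuous)).mul (psi1_continuous.pow 2)
  · exact (cp1_continuous.comp (continuous_const.sub psi_continuous)).mul psi2_continuous

lemma maxw_bound {M z : ℝ} (hM : 1 ≤ M) : max (M - psi z) 0 ≤ 2*M := by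
  apply max_le _ (by linarith)
  have := psi_ge z
  linarith

lemma Bf_nonneg (M z : ℝ) : 0 ≤ Bf M z := by
  rw [Bf, cp]; positivity

lemma Bf_le {M : ℝ} (hM : 1 ≤ M) (z : ℝ) : Bf M z ≤ 8*M^3 := by
  rw [Bf, cp]
  calc max (M - psi z) 0 ^ 3 ≤ (2*M)^3 :=
        pow_le_pow_left₀ (le_max_right _ _) (maxw_bound hM) 3
    _ = 8*M^3 := by ring

lemma Bf1_abs {M : ℝ} (hM : 1 ≤ M) (z : ℝ) : |Bf1 M z| ≤ 12*M^2 := by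
  have hw := maxw_bound (z := z) hM
  have h0 : (0:ℝ) ≤ max (M - psi z) 0 := le_max_right _ _
  have hcp1 : |cp1 (M - psi z)| ≤ 12*M^2 := by
    rw [cp1, abs_of_nonneg (by positivity)]; nlinarith
  calc |Bf1 M z| = |cp1 (M - psi z)| * |psi1 z| := by rw [Bf1, abs_neg, abs_mul]
    _ ≤ (12*M^2) * 1 := mul_le_mul hcp1 (psi1_abs z) (abs_nonneg _) (by positivity)
    _ = 12*M^2 := mul_one _

lemma Bf2_abs {M : ℝ} (hM : 1 ≤ M) (z : ℝ) : |Bf2 M z| ≤ 108*M^2 := by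
  have hw := maxw_bound (z := z) hM
  have h0 : (0:ℝ) ≤ max (M - psi z) 0 := le_max_right _ _
  have h1 : |cp2 (M - psi z) * (psi1 z)^2| ≤ 12*M := by
    rw [abs_mul, cp2, abs_of_nonneg (by positivity)]
    have hp : |(psi1 z)^2| ≤ 1 := by
      rw [abs_of_nonneg (sq_nonneg _)]
      nlinarith [psi1_abs z, abs_nonneg (psi1 z), sq_abs (psi1 z)]
    nlinarith [abs_nonneg ((psi1 z)^2)]
  have h2 : |cp1 (M - psi z) * psi2 z| ≤ 96*M^2 := by
    rw [abs_mul]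
    have hcp1 : |cp1 (M - psi z)| ≤ 12*M^2 := by
      rw [cp1, abs_of_nonneg (by positivity)]; nlinarith
    have := psi2_abs z
    have := abs_nonneg (psi2 z)
    nlinarith [abs_nonneg (cp1 (M - psi z))]
  have hMM : M ≤ M^2 := by nlinarith
  calc |Bf2 M z| ≤ |cp2 (M - psi z) * (psi1 z)^2| + |cp1 (M - psi z) * psi2 z| := abs_sub _ _
    _ ≤ 108*M^2 := by linarith

lemma Bf_val {M z : ℝ} (hz : 0 ≤ z) : Bf M z = max (M - z) 0 ^ 3 := by
  rw [Bf, cp, psi_of_nonneg hz]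
lemma Bf1_val {M z : ℝ} (hz : 0 ≤ z) : Bf1 M z = -(3 * max (M - z) 0 ^ 2) := by
  rw [Bf1, cp1, psi_of_nonneg hz, psi1_of_nonneg hz, mul_one]
lemma Bf2_val {M z : ℝ} (hz : 0 ≤ z) : Bf2 M z = 6 * max (M - z) 0 := by
  rw [Bf2, cp2, psi_of_nonneg hz, psi1_of_nonneg hz, psi2_of_nonneg hz]
  ring

noncomputable def Gf (an bn : ℝ → ℝ) (x : ℝ) : ℝ := (x - an x)^3 * (bn x - x)^3
noncomputable def Gf1 (an bn : ℝ → ℝ) (x : ℝ) : ℝ :=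
  3*((x - an x)^2*(bn x - x)^2)*((bn x - x) - (x - an x))
noncomputable def Gf2 (an bn : ℝ → ℝ) (x : ℝ) : ℝ :=
  6*((x - an x)*(bn x - x))*((x - an x)^2 - 3*((x - an x)*(bn x - x)) + (bn x - x)^2)

section Gap

variable {En : Set ℝ} {an bn : ℝ → ℝ}

lemma aeq (ha : ∀ x, IsGreatest (En ∩ Iic x) (an x)) {x : ℝ} (hx : x ∈ En) : an x = x :=
  le_antisymm (ha x).1.2 ((ha x).2 ⟨hx, Set.mem_Iic.mpr le_rfl⟩)

lemma beq (hb : ∀ x, IsLeast (En ∩ Ici x) (bn x)) {x : ℝ} (hx : x ∈ En) : bn x = x :=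
  le_antisymm ((hb x).2 ⟨hx, Set.mem_Ici.mpr le_rfl⟩) (hb x).1.2

lemma gap_empty (ha : ∀ x, IsGreatest (En ∩ Iic x) (an x))
    (hb : ∀ x, IsLeast (En ∩ Ici x) (bn x)) (x : ℝ) {e : ℝ} (he : e ∈ En)
    (h1 : an x < e) (h2 : e < bn x) : False := by
  rcases le_or_gt e x with h|h
  · exact absurd ((ha x).2 ⟨he, h⟩) (not_le.mpr h1)
  · exact absurd ((hb x).2 ⟨he, le_of_lt h⟩) (not_le.mpr h2)

lemma mem_Ioo_of_not (hbig : (Set.Ioo (-1:ℝ) 2)ᶜ ⊆ En) {x : ℝ} (hx : x ∉ En) :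
    x ∈ Set.Ioo (-1:ℝ) 2 := by
  by_contra h; exact hx (hbig h)

lemma an_lt (ha : ∀ x, IsGreatest (En ∩ Iic x) (an x)) {x : ℝ} (hx : x ∉ En) : an x < x :=
  lt_of_le_of_ne (ha x).1.2 (fun h => hx (h ▸ (ha x).1.1))

lemma bn_gt (hb : ∀ x, IsLeast (En ∩ Ici x) (bn x)) {x : ℝ} (hx : x ∉ En) : x < bn x :=
  lt_of_le_of_ne (hb x).1.2 (fun h => hx (h ▸ (hb x).1.1))

lemma neg_one_mem (hbig : (Set.Ioo (-1:ℝ) 2)ᶜ ⊆ En) : (-1:ℝ) ∈ En :=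
  hbig (by simp [Set.mem_Ioo])

lemma two_mem (hbig : (Set.Ioo (-1:ℝ) 2)ᶜ ⊆ En) : (2:ℝ) ∈ En :=
  hbig (by simp [Set.mem_Ioo])

lemma gap_in (ha : ∀ x, IsGreatest (En ∩ Iic x) (an x))
    (hb : ∀ x, IsLeast (En ∩ Ici x) (bn x)) (hbig : (Set.Ioo (-1:ℝ) 2)ᶜ ⊆ En)
    {x : ℝ} (hx : x ∉ En) : -1 ≤ an x ∧ bn x ≤ 2 := by
  have hxI := mem_Ioo_of_not hbig hx
  constructor
  · exact (ha x).2 ⟨neg_one_mem hbig, le_of_lt hxI.1⟩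
  · exact (hb x).2 ⟨two_mem hbig, le_of_lt hxI.2⟩

lemma uv_basic (ha : ∀ x, IsGreatest (En ∩ Iic x) (an x))
    (hb : ∀ x, IsLeast (En ∩ Ici x) (bn x)) (hbig : (Set.Ioo (-1:ℝ) 2)ᶜ ⊆ En) (x : ℝ) :
    0 ≤ x - an x ∧ 0 ≤ bn x - x ∧ (x - an x) + (bn x - x) ≤ 3 := by
  refine ⟨by linarith [Set.mem_Iic.mp (ha x).1.2], by linarith [Set.mem_Ici.mp (hb x).1.2], ?_⟩
  by_cases hx : x ∈ En
  · rw [aeq ha hx, beq hb hx]; norm_num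
  · have := gap_in ha hb hbig hx; linarith [this.1, this.2]

lemma locconst (ha : ∀ x, IsGreatest (En ∩ Iic x) (an x))
    (hb : ∀ x, IsLeast (En ∩ Ici x) (bn x)) {x y : ℝ}
    (h1 : an x < y) (h2 : y < bn x) : an y = an x ∧ bn y = bn x := by
  constructor
  · have hy1 : an x ≤ an y := (ha y).2 ⟨(ha x).1.1, le_of_lt h1⟩
    have hy2 : an y ≤ an x := by
      by_contra h
      push_neg at h
      exact gap_empty ha hb x (ha y).1.1 h (lt_of_le_of_lt (ha y).1.2 h2)
    exact le_antisymm hy2 hy1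
  · have hy1 : bn y ≤ bn x := (hb y).2 ⟨(hb x).1.1, le_of_lt h2⟩
    have hy2 : bn x ≤ bn y := by
      by_contra h
      push_neg at h
      exact gap_empty ha hb x (hb y).1.1 (lt_of_lt_of_le h1 (hb y).1.2) h
    exact le_antisymm hy1 hy2

lemma key_small (ha : ∀ x, IsGreatest (En ∩ Iic x) (an x))
    (hb : ∀ x, IsLeast (En ∩ Ici x) (bn x)) (hbig : (Set.Ioo (-1:ℝ) 2)ᶜ ⊆ En)
    {x : ℝ} (hx : x ∈ En) (y : ℝ) : (y - an y)*(bn y - y) ≤ 3*|y - x| := by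
  obtain ⟨hu, hv, hsum⟩ := uv_basic ha hb hbig y
  rcases le_total x y with h|h
  · have hxa : x ≤ an y := (ha y).2 ⟨hx, h⟩
    rw [abs_of_nonneg (by linarith)]
    nlinarith
  · have hxb : bn y ≤ x := (hb y).2 ⟨hx, h⟩
    rw [abs_of_nonpos (by linarith)]
    nlinarith

lemma Gf_hasDeriv (ha : ∀ x, IsGreatest (En ∩ Iic x) (an x))
    (hb : ∀ x, IsLeast (En ∩ Ici x) (bn x)) (hbig : (Set.Ioo (-1:ℝ) 2)ᶜ ⊆ En)
    (x : ℝ) : HasDerivAt (Gf an bn) (Gf1 an bn x) x := by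
  by_cases hx : x ∈ En
  · have hGx : Gf an bn x = 0 := by rw [Gf, aeq ha hx, beq hb hx]; ring
    have hG1x : Gf1 an bn x = 0 := by rw [Gf1, aeq ha hx, beq hb hx]; ring
    rw [hasDerivAt_iff_isLittleO, hGx, hG1x]
    simp only [smul_zero, sub_zero]
    have h1 : (fun y : ℝ => Gf an bn y) =O[nhds x] (fun y => (y-x)*((y-x)*(y-x))) := by
      rw [Asymptotics.isBigO_iff]
      refine ⟨27, Filter.Eventually.of_forall fun y => ?_⟩
      obtain ⟨hu, hv, hsum⟩ := uv_basic ha hb hbig y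
      have hk := key_small ha hb hbig hx y
      have huv : 0 ≤ (y - an y)*(bn y - y) := mul_nonneg hu hv
      have hGy : Gf an bn y = ((y - an y)*(bn y - y))^3 := by rw [Gf]; ring
      rw [Real.norm_eq_abs, Real.norm_eq_abs, hGy, abs_of_nonneg (by positivity)]
      have hr : |(y-x)*((y-x)*(y-x))| = |y-x|^3 := by
        rw [abs_mul, abs_mul]; ring
      rw [hr]
      have h3 : ((y - an y)*(bn y - y))^3 ≤ (3*|y-x|)^3 :=
        pow_le_pow_left₀ huv hk 3
      nlinarith [abs_nonneg (y-x), pow_nonneg (abs_nonneg (y-x)) 3]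
    have h3 : (fun y : ℝ => (y-x)*(y-x)) =o[nhds x] (fun _ : ℝ => (1:ℝ)) := by
      rw [Asymptotics.isLittleO_one_iff]
      have : Filter.Tendsto (fun y : ℝ => (y-x)*(y-x)) (nhds x) (nhds ((x-x)*(x-x))) :=
        ((continuous_id.sub continuous_const).mul (continuous_id.sub continuous_const)).tendsto x
      simpa using this
    have h2 := (Asymptotics.isBigO_refl (fun y : ℝ => y - x) (nhds x)).mul_isLittleO h3
    have h4 := h1.trans_isLittleO h2
    simpa only [mul_one] using h4
  · have h1 : an x < x := an_lt ha hx
    have h2 : x < bn x := bn_gt hb hx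
    have hev : Gf an bn =ᶠ[nhds x] (fun y => (y - an x)^3 * (bn x - y)^3) := by
      filter_upwards [Ioo_mem_nhds h1 h2] with y hy
      rw [Gf, (locconst ha hb hy.1 hy.2).1, (locconst ha hb hy.1 hy.2).2]
    have hA := ((hasDerivAt_id x).sub_const (an x)).fun_pow 3
    have hB := ((hasDerivAt_id x).const_sub (bn x)).fun_pow 3
    have hP := hA.fun_mul hB
    have : HasDerivAt (fun y : ℝ => (y - an x)^3 * (bn x - y)^3) (Gf1 an bn x) x := by
      refine hP.congr_deriv ?_
      rw [Gf1]; push_cast [id_eq]; ring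
    exact this.congr_of_eventuallyEq hev

lemma Gf1_hasDeriv (ha : ∀ x, IsGreatest (En ∩ Iic x) (an x))
    (hb : ∀ x, IsLeast (En ∩ Ici x) (bn x)) (hbig : (Set.Ioo (-1:ℝ) 2)ᶜ ⊆ En)
    (x : ℝ) : HasDerivAt (Gf1 an bn) (Gf2 an bn x) x := by
  by_cases hx : x ∈ En
  · have hGx : Gf1 an bn x = 0 := by rw [Gf1, aeq ha hx, beq hb hx]; ring
    have hG2x : Gf2 an bn x = 0 := by rw [Gf2, aeq ha hx, beq hb hx]; ring
    rw [hasDerivAt_iff_isLittleO, hGx, hG2x]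
    simp only [smul_zero, sub_zero]
    have h1 : (fun y : ℝ => Gf1 an bn y) =O[nhds x] (fun y => (y-x)*(y-x)) := by
      rw [Asymptotics.isBigO_iff]
      refine ⟨81, Filter.Eventually.of_forall fun y => ?_⟩
      obtain ⟨hu, hv, hsum⟩ := uv_basic ha hb hbig y
      have hk := key_small ha hb hbig hx y
      have huv : 0 ≤ (y - an y)*(bn y - y) := mul_nonneg hu hv
      have hG1y : |Gf1 an bn y| = 3*((y - an y)*(bn y - y))^2 * |(bn y - y) - (y - an y)| := by
        rw [Gf1, abs_mul,
          abs_of_nonneg (show (0:ℝ) ≤ 3*((y - an y)^2*(bn y - y)^2) by positivity)]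
        ring
      rw [Real.norm_eq_abs, Real.norm_eq_abs, hG1y]
      have hd : |(bn y - y) - (y - an y)| ≤ 3 := by
        rw [abs_le]; constructor <;> linarith
      have hsq : ((y - an y)*(bn y - y))^2 ≤ (3*|y-x|)^2 := by
        apply sq_le_sq' (by nlinarith [abs_nonneg (y-x)]) hk
      have hr : |(y-x)*(y-x)| = |y-x|^2 := by rw [abs_mul]; ring
      rw [hr]
      nlinarith [abs_nonneg (y-x), abs_nonneg ((bn y - y) - (y - an y)), sq_nonneg (y-x),
        mul_nonneg (mul_nonneg (by norm_num : (0:ℝ) ≤ 3) (sq_nonneg ((y - an y)*(bn y - y)))) (abs_nonneg ((bn y - y) - (y - an y)))]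
    have h3 : (fun y : ℝ => (y-x)) =o[nhds x] (fun _ : ℝ => (1:ℝ)) := by
      rw [Asymptotics.isLittleO_one_iff]
      have : Filter.Tendsto (fun y : ℝ => y-x) (nhds x) (nhds (x-x)) :=
        (continuous_id.sub continuous_const).tendsto x
      simpa using this
    have h2 := (Asymptotics.isBigO_refl (fun y : ℝ => y - x) (nhds x)).mul_isLittleO h3
    have h4 := h1.trans_isLittleO h2
    simpa only [mul_one] using h4
  · have h1 : an x < x := an_lt ha hx
    have h2 : x < bn x := bn_gt hb hx
    have hev : Gf1 an bn =ᶠ[nhds x]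
        (fun y => 3*((y - an x)^2*(bn x - y)^2)*((bn x - y) - (y - an x))) := by
      filter_upwards [Ioo_mem_nhds h1 h2] with y hy
      rw [Gf1, (locconst ha hb hy.1 hy.2).1, (locconst ha hb hy.1 hy.2).2]
    have hA := ((hasDerivAt_id x).sub_const (an x)).fun_pow 2
    have hB := ((hasDerivAt_id x).const_sub (bn x)).fun_pow 2
    have hC := (((hasDerivAt_id x).const_sub (bn x)).fun_sub ((hasDerivAt_id x).sub_const (an x)))
    have hP := (((hA.fun_mul hB).const_mul 3).fun_mul hC)
    have : HasDerivAt (fun y : ℝ => 3*((y - an x)^2*(bn x - y)^2)*((bn x - y) - (y - an x)))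
        (Gf2 an bn x) x := by
      refine hP.congr_deriv ?_
      rw [Gf2]; push_cast [id_eq]; ring
    exact this.congr_of_eventuallyEq hev

lemma Gf2_continuous (ha : ∀ x, IsGreatest (En ∩ Iic x) (an x))
    (hb : ∀ x, IsLeast (En ∩ Ici x) (bn x)) (hbig : (Set.Ioo (-1:ℝ) 2)ᶜ ⊆ En) :
    Continuous (Gf2 an bn) := by
  rw [continuous_iff_continuousAt]
  intro x
  by_cases hx : x ∈ En
  · have hG2x : Gf2 an bn x = 0 := by rw [Gf2, aeq ha hx, beq hb hx]; ring
    rw [ContinuousAt, hG2x]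
    have tend : Filter.Tendsto (fun y : ℝ => 288*|y - x|) (nhds x) (nhds 0) := by
      have : Filter.Tendsto (fun y : ℝ => 288*|y - x|) (nhds x) (nhds (288*|x - x|)) :=
        (continuous_const.mul ((continuous_id.sub continuous_const).abs)).tendsto x
      simpa using this
    apply squeeze_zero_norm _ tend
    · intro y
      obtain ⟨hu, hv, hsum⟩ := uv_basic ha hb hbig y
      have hk := key_small ha hb hbig hx y
      have huv : 0 ≤ (y - an y)*(bn y - y) := mul_nonneg hu hv
      have habs : |(y - an y)^2 - 3*((y - an y)*(bn y - y)) + (bn y - y)^2| ≤ 16 := by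
        rw [abs_le]; constructor <;> nlinarith
      have hGy : |Gf2 an bn y| = 6*((y - an y)*(bn y - y)) *
          |(y - an y)^2 - 3*((y - an y)*(bn y - y)) + (bn y - y)^2| := by
        rw [Gf2, abs_mul,
          abs_of_nonneg (show (0:ℝ) ≤ 6*((y - an y)*(bn y - y)) by positivity)]
      rw [Real.norm_eq_abs, hGy]
      nlinarith [abs_nonneg ((y - an y)^2 - 3*((y - an y)*(bn y - y)) + (bn y - y)^2),
        abs_nonneg (y - x)]
  · have h1 : an x < x := an_lt ha hx
    have h2 : x < bn x := bn_gt hb hx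
    have hev : Gf2 an bn =ᶠ[nhds x]
        (fun y => 6*((y - an x)*(bn x - y))*((y - an x)^2 - 3*((y - an x)*(bn x - y)) + (bn x - y)^2)) := by
      filter_upwards [Ioo_mem_nhds h1 h2] with y hy
      rw [Gf2, (locconst ha hb hy.1 hy.2).1, (locconst ha hb hy.1 hy.2).2]
    apply ContinuousAt.congr _ hev.symm
    fun_prop

lemma Gf_nonneg (ha : ∀ x, IsGreatest (En ∩ Iic x) (an x))
    (hb : ∀ x, IsLeast (En ∩ Ici x) (bn x)) (x : ℝ) : 0 ≤ Gf an bn x := by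
  rw [Gf]
  have h1 : 0 ≤ x - an x := by linarith [Set.mem_Iic.mp (ha x).1.2]
  have h2 : 0 ≤ bn x - x := by linarith [Set.mem_Ici.mp (hb x).1.2]
  positivity

lemma Gf_le (ha : ∀ x, IsGreatest (En ∩ Iic x) (an x))
    (hb : ∀ x, IsLeast (En ∩ Ici x) (bn x)) (hbig : (Set.Ioo (-1:ℝ) 2)ᶜ ⊆ En) (x : ℝ) :
    Gf an bn x ≤ 100 := by
  obtain ⟨hu, hv, hsum⟩ := uv_basic ha hb hbig x
  rw [Gf]
  have huv : (x - an x)*(bn x - x) ≤ 9/4 := by nlinarith [sq_nonneg ((x - an x) - (bn x - x))]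
  have huv0 : 0 ≤ (x - an x)*(bn x - x) := mul_nonneg hu hv
  have h3 : ((x - an x)*(bn x - x))^3 ≤ (9/4)^3 := pow_le_pow_left₀ huv0 huv 3
  nlinarith [h3]

lemma Gf1_abs (ha : ∀ x, IsGreatest (En ∩ Iic x) (an x))
    (hb : ∀ x, IsLeast (En ∩ Ici x) (bn x)) (hbig : (Set.Ioo (-1:ℝ) 2)ᶜ ⊆ En) (x : ℝ) :
    |Gf1 an bn x| ≤ 100 := by
  obtain ⟨hu, hv, hsum⟩ := uv_basic ha hb hbig x
  rw [Gf1, abs_le]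
  have huv : (x - an x)*(bn x - x) ≤ 9/4 := by nlinarith [sq_nonneg ((x - an x) - (bn x - x))]
  have huv0 : 0 ≤ (x - an x)*(bn x - x) := mul_nonneg hu hv
  constructor <;> nlinarith [sq_nonneg ((x - an x)*(bn x - x))]

lemma Gf2_abs (ha : ∀ x, IsGreatest (En ∩ Iic x) (an x))
    (hb : ∀ x, IsLeast (En ∩ Ici x) (bn x)) (hbig : (Set.Ioo (-1:ℝ) 2)ᶜ ⊆ En) (x : ℝ) :
    |Gf2 an bn x| ≤ 400 := by
  obtain ⟨hu, hv, hsum⟩ := uv_basic ha hb hbig x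
  rw [Gf2, abs_le]
  have huv : (x - an x)*(bn x - x) ≤ 9/4 := by nlinarith [sq_nonneg ((x - an x) - (bn x - x))]
  have huv0 : 0 ≤ (x - an x)*(bn x - x) := mul_nonneg hu hv
  constructor <;> nlinarith [sq_nonneg ((x - an x)*(bn x - x)), sq_nonneg ((x - an x) - (bn x - x)), sq_nonneg ((x - an x) + (bn x - x))]

end Gap

noncomputable def fstL : ℝ × ℝ →L[ℝ] ℝ := ContinuousLinearMap.fst ℝ ℝ ℝ
noncomputable def sndL : ℝ × ℝ →L[ℝ] ℝ := ContinuousLinearMap.snd ℝ ℝ ℝ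

lemma prodHasFDeriv {φ χ : ℝ → ℝ} {d1 d2 : ℝ} {p : ℝ × ℝ}
    (hφ : HasDerivAt φ d1 p.1) (hχ : HasDerivAt χ d2 p.2) :
    HasFDerivAt (fun q : ℝ × ℝ => φ q.1 * χ q.2)
      ((d1 * χ p.2) • fstL + (φ p.1 * d2) • sndL) p := by
  have hx : HasFDerivAt (fun q : ℝ × ℝ => φ q.1) (d1 • fstL) p :=
    hφ.comp_hasFDerivAt p (hasFDerivAt_fst)
  have hz : HasFDerivAt (fun q : ℝ × ℝ => χ q.2) (d2 • sndL) p :=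
    hχ.comp_hasFDerivAt p (hasFDerivAt_snd)
  have h := hx.fun_mul hz
  refine h.congr_fderiv ?_
  refine ContinuousLinearMap.ext fun v => ?_
  simp [fstL, sndL, smul_smul]
  ring

lemma prod_norm_le {s t : ℝ} : ‖s • fstL + t • sndL‖ ≤ |s| + |t| := by
  refine le_trans (norm_add_le _ _) ?_
  have a1 : ‖s • fstL‖ ≤ ‖s‖ * ‖fstL‖ := norm_smul_le s fstL
  have a2 : ‖t • sndL‖ ≤ ‖t‖ * ‖sndL‖ := norm_smul_le t sndL
  have h1 : ‖fstL‖ ≤ 1 := by rw [fstL, ContinuousLinearMap.norm_fst]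
  have h2 : ‖sndL‖ ≤ 1 := by rw [sndL, ContinuousLinearMap.norm_snd]
  rw [Real.norm_eq_abs] at a1 a2
  nlinarith [abs_nonneg s, abs_nonneg t, norm_nonneg fstL, norm_nonneg sndL]

lemma smulRight_expand (s t : ℝ) (K : ℝ × ℝ →L[ℝ] ℝ) :
    (s • fstL + t • sndL).smulRight K = s • (fstL.smulRight K) + t • (sndL.smulRight K) := by
  refine ContinuousLinearMap.ext fun v => ?_
  simp [fstL, sndL, smul_smul]
  module

lemma smulconst_hasFDeriv {s : ℝ × ℝ → ℝ} {s' : ℝ × ℝ →L[ℝ] ℝ} {p : ℝ × ℝ}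
    (K : ℝ × ℝ →L[ℝ] ℝ) (hs : HasFDerivAt s s' p) :
    HasFDerivAt (fun q => s q • K) (s'.smulRight K) p := by
  have := hs.fun_smul (hasFDerivAt_const K p)
  simpa only [smul_zero, zero_add] using this

lemma contDiff_two_series
    {A A1 A2 B B1 B2 : ℕ → ℝ → ℝ} {w : ℕ → ℝ}
    (hA : ∀ n x, HasDerivAt (A n) (A1 n x) x)
    (hA1 : ∀ n x, HasDerivAt (A1 n) (A2 n x) x)
    (hA2c : ∀ n, Continuous (A2 n))
    (hB : ∀ n z, HasDerivAt (B n) (B1 n z) z)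
    (hB1 : ∀ n z, HasDerivAt (B1 n) (B2 n z) z)
    (hB2c : ∀ n, Continuous (B2 n))
    (hw : Summable w)
    (hb0 : ∀ n x z, |A n x * B n z| ≤ w n)
    (hb1 : ∀ n x z, |A1 n x * B n z| ≤ w n)
    (hb2 : ∀ n x z, |A n x * B1 n z| ≤ w n)
    (hb3 : ∀ n x z, |A2 n x * B n z| ≤ w n)
    (hb4 : ∀ n x z, |A1 n x * B1 n z| ≤ w n)
    (hb5 : ∀ n x z, |A n x * B2 n z| ≤ w n) :
    ContDiff ℝ 2 (fun p : ℝ × ℝ => ∑' n, A n p.1 * B n p.2) := by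
  set F : ℕ → ℝ × ℝ → ℝ := fun n p => A n p.1 * B n p.2 with hFdef
  set F' : ℕ → ℝ × ℝ → (ℝ × ℝ →L[ℝ] ℝ) := fun n p =>
    (A1 n p.1 * B n p.2) • fstL + (A n p.1 * B1 n p.2) • sndL with hF'def
  set F'' : ℕ → ℝ × ℝ → (ℝ × ℝ →L[ℝ] (ℝ × ℝ →L[ℝ] ℝ)) := fun n p =>
    ((A2 n p.1 * B n p.2) • fstL + (A1 n p.1 * B1 n p.2) • sndL).smulRight fstL +
    ((A1 n p.1 * B1 n p.2) • fstL + (A n p.1 * B2 n p.2) • sndL).smulRight sndL with hF''def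
  have hF' : ∀ n p, HasFDerivAt (F n) (F' n p) p := fun n p =>
    prodHasFDeriv (hA n p.1) (hB n p.2)
  have hF'' : ∀ n p, HasFDerivAt (F' n) (F'' n p) p := by
    intro n p
    exact (smulconst_hasFDeriv fstL (prodHasFDeriv (hA1 n p.1) (hB n p.2))).add
      (smulconst_hasFDeriv sndL (prodHasFDeriv (hA n p.1) (hB1 n p.2)))
  have hF'b : ∀ n p, ‖F' n p‖ ≤ 2 * w n := by
    intro n p
    refine le_trans prod_norm_le ?_
    have := hb1 n p.1 p.2
    have := hb2 n p.1 p.2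
    linarith
  have hw0 : ∀ n, 0 ≤ w n := fun n => le_trans (abs_nonneg _) (hb0 n 0 0)
  have hF''b : ∀ n p, ‖F'' n p‖ ≤ 4 * w n := by
    intro n p
    refine le_trans (norm_add_le
      (((A2 n p.1 * B n p.2) • fstL + (A1 n p.1 * B1 n p.2) • sndL).smulRight fstL)
      (((A1 n p.1 * B1 n p.2) • fstL + (A n p.1 * B2 n p.2) • sndL).smulRight sndL)) ?_
    rw [ContinuousLinearMap.norm_smulRight_apply, ContinuousLinearMap.norm_smulRight_apply]
    have e1 : ‖((A2 n p.1 * B n p.2) • fstL + (A1 n p.1 * B1 n p.2) • sndL)‖ ≤ 2 * w n := by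
      refine le_trans prod_norm_le ?_
      have := hb3 n p.1 p.2
      have := hb4 n p.1 p.2
      linarith
    have e2 : ‖((A1 n p.1 * B1 n p.2) • fstL + (A n p.1 * B2 n p.2) • sndL)‖ ≤ 2 * w n := by
      refine le_trans prod_norm_le ?_
      have := hb4 n p.1 p.2
      have := hb5 n p.1 p.2
      linarith
    have h1 : ‖fstL‖ ≤ 1 := by rw [fstL, ContinuousLinearMap.norm_fst]
    have h2 : ‖sndL‖ ≤ 1 := by rw [sndL, ContinuousLinearMap.norm_snd]
    nlinarith [norm_nonneg ((A2 n p.1 * B n p.2) • fstL + (A1 n p.1 * B1 n p.2) • sndL),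
      norm_nonneg ((A1 n p.1 * B1 n p.2) • fstL + (A n p.1 * B2 n p.2) • sndL),
      norm_nonneg fstL, norm_nonneg sndL, hw0 n]
  have hsum0 : ∀ p : ℝ × ℝ, Summable (fun n => F n p) := by
    intro p
    apply Summable.of_norm_bounded hw
    intro n
    exact hb0 n p.1 p.2
  have hdiff1 : Differentiable ℝ (fun p : ℝ × ℝ => ∑' n, F n p) :=
    differentiable_tsum (hw.mul_left 2) hF' hF'b
  have hfd : (fderiv ℝ fun p : ℝ × ℝ => ∑' n, F n p) = fun p => ∑' n, F' n p := by
    have h0 := fderiv_tsum (hw.mul_left 2) (fun n => fun p => (hF' n p).differentiableAt)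
      (fun n p => by rw [(hF' n p).fderiv]; exact hF'b n p) (hsum0 (0, 0))
    rw [h0]
    funext p
    exact tsum_congr fun n => (hF' n p).fderiv
  have hdiff2 : Differentiable ℝ (fun p : ℝ × ℝ => ∑' n, F' n p) :=
    differentiable_tsum (hw.mul_left 4) hF'' hF''b
  have hfd2 : (fderiv ℝ fun p : ℝ × ℝ => ∑' n, F' n p) = fun p => ∑' n, F'' n p := by
    have hp0 : Summable fun n => F' n (0, 0) := by
      apply Summable.of_norm_bounded (hw.mul_left 2)
      intro n
      exact hF'b n (0, 0)
    have h0 := fderiv_tsum (hw.mul_left 4) (fun n => fun p => (hF'' n p).differentiableAt)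
      (fun n p => by rw [(hF'' n p).fderiv]; exact hF''b n p) hp0
    rw [h0]
    funext p
    exact tsum_congr fun n => (hF'' n p).fderiv
  have hBc : ∀ n, Continuous (B n) := by
    intro n
    rw [continuous_iff_continuousAt]
    exact fun z => (hB n z).continuousAt
  have hB1c : ∀ n, Continuous (B1 n) := by
    intro n
    rw [continuous_iff_continuousAt]
    exact fun z => (hB1 n z).continuousAt
  have hAc : ∀ n, Continuous (A n) := by
    intro n
    rw [continuous_iff_continuousAt]
    exact fun x => (hA n x).continuousAt
  have hA1c : ∀ n, Continuous (A1 n) := by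
    intro n
    rw [continuous_iff_continuousAt]
    exact fun x => (hA1 n x).continuousAt
  have hcont2 : Continuous (fun p : ℝ × ℝ => ∑' n, F'' n p) := by
    letI tag : IsTopologicalAddGroup (ℝ × ℝ →L[ℝ] ℝ × ℝ →L[ℝ] ℝ) := inferInstance
    letI ca : ContinuousAdd (ℝ × ℝ →L[ℝ] ℝ × ℝ →L[ℝ] ℝ) := by exact tag.toContinuousAdd
    apply continuous_tsum (f := F'') _ (hw.mul_left 4) (fun n p => hF''b n p)
    intro n
    rw [hF''def]
    simp only [smulRight_expand]
    apply Continuous.fun_add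
    · apply Continuous.fun_add
      · exact (((hA2c n).comp continuous_fst).mul ((hBc n).comp continuous_snd)).smul
          continuous_const
      · exact (((hA1c n).comp continuous_fst).mul ((hB1c n).comp continuous_snd)).smul
          continuous_const
    · apply Continuous.fun_add
      · exact (((hA1c n).comp continuous_fst).mul ((hB1c n).comp continuous_snd)).smul
          continuous_const
      · exact (((hAc n).comp continuous_fst).mul ((hB2c n).comp continuous_snd)).smul
          continuous_const
  have h2eq : (2 : WithTop ℕ∞) = 1 + 1 := by norm_num
  rw [h2eq, contDiff_succ_iff_fderiv]
  refine ⟨hdiff1, ?_, ?_⟩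
  · intro h
    simp at h
  · rw [hfd, contDiff_one_iff_fderiv]
    exact ⟨hdiff2, by rw [hfd2]; exact hcont2⟩

theorem stmt_11
    (E : ℕ → Set ℝ)
    (hEclosed : ∀ n, IsClosed (E n))
    (hEmono : ∀ n, E n ⊆ E (n + 1))
    (hEbig : ∀ n, (Set.Ioo (-1 : ℝ) 2)ᶜ ⊆ E n)
    (a b : ℕ → ℝ → ℝ)
    (ha : ∀ n x, IsGreatest (E n ∩ Set.Iic x) (a n x))
    (hb : ∀ n x, IsLeast (E n ∩ Set.Ici x) (b n x))
    (c : ℕ → ℝ) (hc : ∀ n, 0 < c n)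
    (hsummable : Summable fun n : ℕ => (81 ^ 2 / 6 : ℝ) * ((n : ℝ) + 1) ^ 3 * c n)
    (hsum : ∑' n : ℕ, (81 ^ 2 / 6 : ℝ) * ((n : ℝ) + 1) ^ 3 * c n < 1)
    (f : ℝ → ℝ → ℝ)
    (hf : ∀ x z, 0 ≤ z → f x z = x ^ 2 + ∑' n : ℕ,
      c n * ((x - a n x) ^ 3 * (b n x - x) ^ 3) * max ((n : ℝ) + 1 - z) 0 ^ 3)
    : ContDiffOn ℝ 2 (fun p : ℝ × ℝ => f p.1 p.2) (Set.univ ×ˢ Set.Ici (0 : ℝ)) ∧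
      ConvexOn ℝ (Set.univ ×ˢ Set.Ici (0 : ℝ)) (fun p : ℝ × ℝ => f p.1 p.2) := by
  classical
  set th : ℕ → ℝ := fun n => (81 ^ 2 / 6 : ℝ) * ((n : ℝ) + 1) ^ 3 * c n with hth
  set Mz : ℕ → ℝ := fun n => (n : ℝ) + 1 with hMz
  have hM1 : ∀ n, 1 ≤ Mz n := by
    intro n
    rw [hMz]
    have := Nat.cast_nonneg (α := ℝ) n
    simp only []
    linarith
  set A : ℕ → ℝ → ℝ := fun n x => c n * Gf (a n) (b n) x with hA
  set A1 : ℕ → ℝ → ℝ := fun n x => c n * Gf1 (a n) (b n) x with hA1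
  set A2 : ℕ → ℝ → ℝ := fun n x => c n * Gf2 (a n) (b n) x with hA2
  set B : ℕ → ℝ → ℝ := fun n => Bf (Mz n) with hB
  set B1 : ℕ → ℝ → ℝ := fun n => Bf1 (Mz n) with hB1
  set B2 : ℕ → ℝ → ℝ := fun n => Bf2 (Mz n) with hB2
  have hAd : ∀ n x, HasDerivAt (A n) (A1 n x) x := fun n x =>
    (Gf_hasDeriv (ha n) (hb n) (hEbig n) x).const_mul (c n)
  have hA1d : ∀ n x, HasDerivAt (A1 n) (A2 n x) x := fun n x =>
    (Gf1_hasDeriv (ha n) (hb n) (hEbig n) x).const_mul (c n)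
  have hA2c : ∀ n, Continuous (A2 n) := fun n =>
    continuous_const.mul (Gf2_continuous (ha n) (hb n) (hEbig n))
  have hBd : ∀ n z, HasDerivAt (B n) (B1 n z) z := fun n z => Bf_hasDeriv (Mz n) z
  have hB1d : ∀ n z, HasDerivAt (B1 n) (B2 n z) z := fun n z => Bf1_hasDeriv (Mz n) z
  have hB2c : ∀ n, Continuous (B2 n) := fun n => Bf2_continuous (Mz n)
  -- summability
  have hcM : Summable (fun n => c n * Mz n ^ 3) := by
    apply Summable.congr (hsummable.mul_left (6 / 81 ^ 2))
    intro n
    rw [hth, hMz]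
    ring
  set w : ℕ → ℝ := fun n => 20000 * (c n * Mz n ^ 3) with hw
  have hws : Summable w := hcM.mul_left 20000
  -- abs bounds
  have mulb : ∀ {p q P Q : ℝ}, |p| ≤ P → |q| ≤ Q → |p * q| ≤ P * Q := by
    intro p q P Q hp hq
    rw [abs_mul]
    exact mul_le_mul hp hq (abs_nonneg _) (le_trans (abs_nonneg _) hp)
  have hAb : ∀ n x, |A n x| ≤ c n * 100 := by
    intro n x
    rw [hA, abs_mul, abs_of_pos (hc n)]
    have h1 := Gf_nonneg (ha n) (hb n) x
    have h2 := Gf_le (ha n) (hb n) (hEbig n) x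
    have : |Gf (a n) (b n) x| ≤ 100 := abs_le.mpr ⟨by linarith, h2⟩
    nlinarith [abs_nonneg (Gf (a n) (b n) x), (hc n).le]
  have hA1b : ∀ n x, |A1 n x| ≤ c n * 100 := by
    intro n x
    rw [hA1, abs_mul, abs_of_pos (hc n)]
    have := Gf1_abs (ha n) (hb n) (hEbig n) x
    nlinarith [abs_nonneg (Gf1 (a n) (b n) x), (hc n).le]
  have hA2b : ∀ n x, |A2 n x| ≤ c n * 400 := by
    intro n x
    rw [hA2, abs_mul, abs_of_pos (hc n)]
    have := Gf2_abs (ha n) (hb n) (hEbig n) x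
    nlinarith [abs_nonneg (Gf2 (a n) (b n) x), (hc n).le]
  have hBb : ∀ n z, |B n z| ≤ 8 * Mz n ^ 3 := by
    intro n z
    rw [hB, abs_of_nonneg (Bf_nonneg _ _)]
    exact Bf_le (hM1 n) z
  have hB1b : ∀ n z, |B1 n z| ≤ 12 * Mz n ^ 2 := fun n z => Bf1_abs (hM1 n) z
  have hB2b : ∀ n z, |B2 n z| ≤ 108 * Mz n ^ 2 := fun n z => Bf2_abs (hM1 n) z
  have hMfacts : ∀ n, 0 ≤ Mz n ∧ Mz n ^ 2 ≤ Mz n ^ 3 := by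
    intro n
    have h1 := hM1 n
    constructor
    · linarith
    · nlinarith
  have hb0 : ∀ n x z, |A n x * B n z| ≤ w n := by
    intro n x z
    refine le_trans (mulb (hAb n x) (hBb n z)) ?_
    obtain ⟨h0, h2⟩ := hMfacts n
    simp only [hw]
    nlinarith [(hc n).le, pow_nonneg h0 3]
  have hb1 : ∀ n x z, |A1 n x * B n z| ≤ w n := by
    intro n x z
    refine le_trans (mulb (hA1b n x) (hBb n z)) ?_
    obtain ⟨h0, h2⟩ := hMfacts n
    simp only [hw]
    nlinarith [(hc n).le, pow_nonneg h0 3]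
  have hb2 : ∀ n x z, |A n x * B1 n z| ≤ w n := by
    intro n x z
    refine le_trans (mulb (hAb n x) (hB1b n z)) ?_
    obtain ⟨h0, h2⟩ := hMfacts n
    simp only [hw]
    nlinarith [(hc n).le, pow_nonneg h0 3, pow_nonneg h0 2]
  have hb3 : ∀ n x z, |A2 n x * B n z| ≤ w n := by
    intro n x z
    refine le_trans (mulb (hA2b n x) (hBb n z)) ?_
    obtain ⟨h0, h2⟩ := hMfacts n
    simp only [hw]
    nlinarith [(hc n).le, pow_nonneg h0 3]
  have hb4 : ∀ n x z, |A1 n x * B1 n z| ≤ w n := by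
    intro n x z
    refine le_trans (mulb (hA1b n x) (hB1b n z)) ?_
    obtain ⟨h0, h2⟩ := hMfacts n
    simp only [hw]
    nlinarith [(hc n).le, pow_nonneg h0 3, pow_nonneg h0 2]
  have hb5 : ∀ n x z, |A n x * B2 n z| ≤ w n := by
    intro n x z
    refine le_trans (mulb (hAb n x) (hB2b n z)) ?_
    obtain ⟨h0, h2⟩ := hMfacts n
    simp only [hw]
    nlinarith [(hc n).le, pow_nonneg h0 3, pow_nonneg h0 2]
  have hcd2 : ContDiff ℝ 2 (fun p : ℝ × ℝ => ∑' n, A n p.1 * B n p.2) :=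
    contDiff_two_series hAd hA1d hA2c hBd hB1d hB2c hws hb0 hb1 hb2 hb3 hb4 hb5
  set Fhat : ℝ × ℝ → ℝ := fun p => p.1 ^ 2 + ∑' n, A n p.1 * B n p.2 with hFhat
  have hFhatcd : ContDiff ℝ 2 Fhat := (contDiff_fst.pow 2).add hcd2
  set s : Set (ℝ × ℝ) := Set.univ ×ˢ Set.Ici (0 : ℝ) with hs
  have hsconv : Convex ℝ s := convex_univ.prod (convex_Ici 0)
  have hval : ∀ p ∈ s, f p.1 p.2 = Fhat p := by
    intro p hp
    have hz : 0 ≤ p.2 := (Set.mem_prod.mp hp).2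
    rw [hf p.1 p.2 hz]
    simp only [hFhat]
    congr 1
    refine tsum_congr fun n => ?_
    simp only [hA, hB, hMz, Gf, Bf_val hz]
  refine ⟨(hFhatcd.contDiffOn).congr hval, ?_⟩
  -- convexity part
  set Tq : ℕ → ℝ × ℝ → ℝ := fun n r => th n * r.1 ^ 2 + A n r.1 * B n r.2 with hTq
  have hth0 : ∀ n, 0 ≤ th n := by
    intro n
    simp only [hth]
    exact mul_nonneg (by positivity) (hc n).le
  have hthe : ∀ n, th n = (81 ^ 2 / 6) * (Mz n) ^ 3 * c n := by
    intro n
    simp only [hth, hMz]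
  have hA0 : ∀ n x, 0 ≤ A n x := by
    intro n x
    simp only [hA]
    exact mul_nonneg (hc n).le (Gf_nonneg (ha n) (hb n) x)
  have hB0 : ∀ n z, 0 ≤ B n z := by
    intro n z
    simp only [hB]
    exact Bf_nonneg _ _
  have hTco : ∀ n, ConvexOn ℝ s (Tq n) := by
    intro n
    refine ⟨hsconv, ?_⟩
    intro p hp q hq α β hα hβ hαβ
    have hα' : α = 1 - β := by linarith
    subst hα'
    have hzp : 0 ≤ p.2 := (Set.mem_prod.mp hp).2
    have hzq : 0 ≤ q.2 := (Set.mem_prod.mp hq).2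
    set dx : ℝ := q.1 - p.1 with hdx
    set dz : ℝ := q.2 - p.2 with hdz
    have hlinex : ∀ t : ℝ, HasDerivAt (fun t : ℝ => p.1 + t * dx) dx t := by
      intro t
      simpa using (hasDerivAt_mul_const dx).const_add p.1
    have hlinez : ∀ t : ℝ, HasDerivAt (fun t : ℝ => p.2 + t * dz) dz t := by
      intro t
      simpa using (hasDerivAt_mul_const dz).const_add p.2
    set φ : ℝ → ℝ := fun t => th n * (p.1 + t * dx) ^ 2
      + A n (p.1 + t * dx) * B n (p.2 + t * dz) with hφ
    set φ1 : ℝ → ℝ := fun t => th n * (2 * (p.1 + t * dx) * dx)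
      + (A1 n (p.1 + t * dx) * dx * B n (p.2 + t * dz)
        + A n (p.1 + t * dx) * (B1 n (p.2 + t * dz) * dz)) with hφ1
    set φ2 : ℝ → ℝ := fun t => th n * (2 * dx * dx)
      + ((A2 n (p.1 + t * dx) * dx * dx * B n (p.2 + t * dz)
          + A1 n (p.1 + t * dx) * dx * (B1 n (p.2 + t * dz) * dz))
        + (A1 n (p.1 + t * dx) * dx * (B1 n (p.2 + t * dz) * dz)
          + A n (p.1 + t * dx) * (B2 n (p.2 + t * dz) * dz * dz))) with hφ2
    have hφd : ∀ t, HasDerivAt φ (φ1 t) t := by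
      intro t
      have h1 : HasDerivAt (fun t : ℝ => (p.1 + t * dx) ^ 2) (2 * (p.1 + t * dx) * dx) t := by
        simpa using (hlinex t).fun_pow 2
      have h2 : HasDerivAt (fun t : ℝ => A n (p.1 + t * dx)) (A1 n (p.1 + t * dx) * dx) t :=
        (hAd n _).comp t (hlinex t)
      have h3 : HasDerivAt (fun t : ℝ => B n (p.2 + t * dz)) (B1 n (p.2 + t * dz) * dz) t :=
        (hBd n _).comp t (hlinez t)
      exact (h1.const_mul (th n)).add (h2.fun_mul h3)
    have hφ1d : ∀ t, HasDerivAt φ1 (φ2 t) t := by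
      intro t
      have h1 : HasDerivAt (fun t : ℝ => 2 * (p.1 + t * dx) * dx) (2 * dx * dx) t := by
        simpa using ((hlinex t).const_mul 2).mul_const dx
      have h2 : HasDerivAt (fun t : ℝ => A1 n (p.1 + t * dx)) (A2 n (p.1 + t * dx) * dx) t :=
        (hA1d n _).comp t (hlinex t)
      have h3 : HasDerivAt (fun t : ℝ => B n (p.2 + t * dz)) (B1 n (p.2 + t * dz) * dz) t :=
        (hBd n _).comp t (hlinez t)
      have h4 : HasDerivAt (fun t : ℝ => A n (p.1 + t * dx)) (A1 n (p.1 + t * dx) * dx) t :=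
        (hAd n _).comp t (hlinex t)
      have h5 : HasDerivAt (fun t : ℝ => B1 n (p.2 + t * dz)) (B2 n (p.2 + t * dz) * dz) t :=
        (hB1d n _).comp t (hlinez t)
      exact (h1.const_mul (th n)).add (((h2.mul_const dx).fun_mul h3).add (h4.fun_mul (h5.mul_const dz)))
    have hφcont : ContinuousOn φ (Set.Icc (0:ℝ) 1) := by
      apply Continuous.continuousOn
      rw [continuous_iff_continuousAt]
      exact fun t => (hφd t).continuousAt
    have hconv01 : ConvexOn ℝ (Set.Icc (0:ℝ) 1) φ := by
      apply convexOn_of_hasDerivWithinAt2_nonneg (convex_Icc 0 1) hφcont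
        (f' := φ1) (f'' := φ2)
      · intro t ht
        exact (hφd t).hasDerivWithinAt
      · intro t ht
        exact (hφ1d t).hasDerivWithinAt
      · intro t ht
        rw [interior_Icc] at ht
        have hzt : 0 ≤ p.2 + t * dz := by
          rw [hdz]
          nlinarith [mul_nonneg ht.1.le hzq, mul_nonneg (sub_nonneg.mpr ht.2.le) hzp]
        obtain ⟨hu, hv, huv⟩ := uv_basic (ha n) (hb n) (hEbig n) (p.1 + t * dx)
        have hm0 : 0 ≤ max (Mz n - (p.2 + t * dz)) 0 := le_max_right _ _
        have hmM : max (Mz n - (p.2 + t * dz)) 0 ≤ Mz n :=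
          max_le (by linarith) (by linarith [hM1 n])
        have key := Qkey (p.1 + t * dx - a n (p.1 + t * dx))
          (b n (p.1 + t * dx) - (p.1 + t * dx)) (max (Mz n - (p.2 + t * dz)) 0) (Mz n)
          (c n) dx dz hu hv huv hm0 hmM (hc n).le
        simp only [hφ2]
        rw [hthe n]
        simp only [hA, hA1, hA2, hB, hB1, hB2, Gf, Gf1, Gf2]
        rw [Bf_val hzt, Bf1_val hzt, Bf2_val hzt]
        convert key using 1
        ring
    have h0m : (0:ℝ) ∈ Set.Icc (0:ℝ) 1 := Set.left_mem_Icc.mpr zero_le_one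
    have h1m : (1:ℝ) ∈ Set.Icc (0:ℝ) 1 := Set.right_mem_Icc.mpr zero_le_one
    have hcc := hconv01.2 h0m h1m hα hβ hαβ
    simp only [smul_eq_mul, mul_zero, mul_one, zero_add] at hcc
    have e0 : φ 0 = Tq n p := by
      simp only [hφ, hTq]
      norm_num
    have e1 : φ 1 = Tq n q := by
      simp only [hφ, hTq]
      rw [show p.1 + 1 * dx = q.1 by rw [hdx]; ring,
        show p.2 + 1 * dz = q.2 by rw [hdz]; ring]
    have eβ : φ β = Tq n ((1 - β) • p + β • q) := by
      simp only [hφ, hTq, Prod.fst_add, Prod.snd_add, Prod.smul_fst, Prod.smul_snd,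
        smul_eq_mul]
      rw [show p.1 + β * dx = (1 - β) * p.1 + β * q.1 by rw [hdx]; ring,
        show p.2 + β * dz = (1 - β) * p.2 + β * q.2 by rw [hdz]; ring]
    rw [e0, e1, eβ] at hcc
    simpa only [smul_eq_mul] using hcc
  have hTnonneg : ∀ n (r : ℝ × ℝ), 0 ≤ Tq n r := by
    intro n r
    simp only [hTq]
    have := mul_nonneg (hA0 n r.1) (hB0 n r.2)
    nlinarith [hth0 n, sq_nonneg r.1]
  have hTsum : ∀ r : ℝ × ℝ, Summable (fun n => Tq n r) := by
    intro r
    refine Summable.of_nonneg_of_le ?_ ?_ ((hsummable.mul_right (r.1 ^ 2)).add hws)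
    · exact fun n => hTnonneg n r
    · intro n
      simp only [hTq]
      have h1 := le_trans (le_abs_self _) (hb0 n r.1 r.2)
      linarith
  have hABsum : ∀ r : ℝ × ℝ, Summable (fun n => A n r.1 * B n r.2) := by
    intro r
    refine Summable.of_nonneg_of_le ?_ ?_ hws
    · exact fun n => mul_nonneg (hA0 n r.1) (hB0 n r.2)
    · exact fun n => le_trans (le_abs_self _) (hb0 n r.1 r.2)
  have hSconv : ConvexOn ℝ s (fun r : ℝ × ℝ => ∑' n, Tq n r) := by
    refine ⟨hsconv, ?_⟩
    intro p hp q hq α β hα hβ hαβ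
    have hterm : ∀ n, Tq n (α • p + β • q) ≤ α * Tq n p + β * Tq n q := by
      intro n
      have := (hTco n).2 hp hq hα hβ hαβ
      simpa only [smul_eq_mul] using this
    have hsum1 : Summable fun n => α * Tq n p + β * Tq n q :=
      ((hTsum p).mul_left α).add ((hTsum q).mul_left β)
    simp only [smul_eq_mul]
    calc (∑' n, Tq n (α • p + β • q)) ≤ ∑' n, (α * Tq n p + β * Tq n q) :=
          Summable.tsum_le_tsum hterm (hTsum _) hsum1
      _ = α * (∑' n, Tq n p) + β * (∑' n, Tq n q) := by
          rw [Summable.tsum_add ((hTsum p).mul_left α) ((hTsum q).mul_left β),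
            tsum_mul_left, tsum_mul_left]
  have h1S : 0 ≤ 1 - ∑' n, th n := by linarith
  have hres : ConvexOn ℝ s (fun r : ℝ × ℝ => (1 - ∑' n, th n) * r.1 ^ 2) := by
    refine ⟨hsconv, ?_⟩
    intro p hp q hq α β hα hβ hαβ
    simp only [smul_eq_mul, Prod.fst_add, Prod.smul_fst]
    have hKey : α * ((1 - ∑' n, th n) * p.1 ^ 2) + β * ((1 - ∑' n, th n) * q.1 ^ 2)
        - (1 - ∑' n, th n) * (α * p.1 + β * q.1) ^ 2
        = (1 - ∑' n, th n) * (α * β) * (p.1 - q.1) ^ 2 := by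
      have hβ' : β = 1 - α := by linarith
      rw [hβ']; ring
    have hpos : 0 ≤ (1 - ∑' n, th n) * (α * β) * (p.1 - q.1) ^ 2 :=
      mul_nonneg (mul_nonneg h1S (mul_nonneg hα hβ)) (sq_nonneg _)
    linarith
  have heq : ∀ r : ℝ × ℝ, (∑' n, Tq n r) + (1 - ∑' n, th n) * r.1 ^ 2 = Fhat r := by
    intro r
    have h1 : (∑' n, Tq n r) = (∑' n, th n * r.1 ^ 2) + ∑' n, A n r.1 * B n r.2 := by
      rw [← Summable.tsum_add (hsummable.mul_right (r.1 ^ 2)) (hABsum r)]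
    rw [h1, tsum_mul_right]
    simp only [hFhat]
    ring
  refine ⟨hsconv, ?_⟩
  intro p hp q hq α β hα hβ hαβ
  have hmem : α • p + β • q ∈ s := hsconv hp hq hα hβ hαβ
  have key := (hSconv.add hres).2 hp hq hα hβ hαβ
  simp only [smul_eq_mul, Pi.add_apply] at key
  simp only [smul_eq_mul]
  rw [hval p hp, hval q hq, hval _ hmem, ← heq p, ← heq q, ← heq (α • p + β • q)]
  linarith [key]
end

section
/- For every x ∈ ℝ: x ∈ ⋃_{n=1}^∞ E_n if and only if there exists z ≥ 0 with f(x,z) = x². -/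
theorem stmt_12
    (E : ℕ → Set ℝ)
    (hEclosed : ∀ n, IsClosed (E n))
    (hEmono : ∀ n, E n ⊆ E (n + 1))
    (hEbig : ∀ n, (Set.Ioo (-1 : ℝ) 2)ᶜ ⊆ E n)
    (a b : ℕ → ℝ → ℝ)
    (ha : ∀ n x, IsGreatest (E n ∩ Set.Iic x) (a n x))
    (hb : ∀ n x, IsLeast (E n ∩ Set.Ici x) (b n x))
    (c : ℕ → ℝ) (hc : ∀ n, 0 < c n)
    (hsummable : Summable fun n : ℕ => (81 ^ 2 / 6 : ℝ) * ((n : ℝ) + 1) ^ 3 * c n)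
    (hsum : ∑' n : ℕ, (81 ^ 2 / 6 : ℝ) * ((n : ℝ) + 1) ^ 3 * c n < 1)
    (f : ℝ → ℝ → ℝ)
    (hf : ∀ x z, 0 ≤ z → f x z = x ^ 2 + ∑' n : ℕ,
      c n * ((x - a n x) ^ 3 * (b n x - x) ^ 3) * max ((n : ℝ) + 1 - z) 0 ^ 3)
    : ∀ x : ℝ, (x ∈ ⋃ n : ℕ, E n) ↔ ∃ z : ℝ, 0 ≤ z ∧ f x z = x ^ 2 := by
  intro x
  -- basic facts about a and b
  have hale : ∀ n, a n x ≤ x := fun n => (ha n x).1.2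
  have hble : ∀ n, x ≤ b n x := fun n => (hb n x).1.2
  have haE : ∀ n, a n x ∈ E n := fun n => (ha n x).1.1
  have hbE : ∀ n, b n x ∈ E n := fun n => (hb n x).1.1
  have haeq : ∀ n, x ∈ E n → a n x = x := fun n hx =>
    le_antisymm (hale n) ((ha n x).2 ⟨hx, le_refl x⟩)
  -- monotonicity of E
  have hmono : ∀ m n : ℕ, m ≤ n → E m ⊆ E n := by
    intro m n h
    induction h with
    | refl => exact subset_rfl
    | step _ ih => exact ih.trans (hEmono _)
  -- bounds on x - a n x and b n x - x
  have hA : ∀ n, x - a n x ≤ 3 := by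
    intro n
    rcases le_or_gt x (-1) with h | h
    · have : x ∈ E n := hEbig n (by simp [Set.mem_Ioo]; intro h1; linarith)
      rw [haeq n this]; linarith
    · have hm1 : (-1 : ℝ) ∈ E n := hEbig n (by simp [Set.mem_Ioo])
      have : (-1 : ℝ) ≤ a n x := (ha n x).2 ⟨hm1, by simpa [Set.mem_Iic] using h.le⟩
      rcases le_or_gt x 2 with h2 | h2
      · linarith
      · have : x ∈ E n := hEbig n (by simp [Set.mem_Ioo]; intro _; linarith)
        rw [haeq n this]; linarith
  have hB : ∀ n, b n x - x ≤ 3 := by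
    intro n
    rcases le_or_gt 2 x with h | h
    · have hx : x ∈ E n := hEbig n (by simp [Set.mem_Ioo]; intro _; linarith)
      have : b n x ≤ x := (hb n x).2 ⟨hx, le_refl x⟩
      linarith
    · have h2 : (2 : ℝ) ∈ E n := hEbig n (by simp [Set.mem_Ioo])
      have hb2 : b n x ≤ 2 := (hb n x).2 ⟨h2, by simpa [Set.mem_Ici] using h.le⟩
      rcases le_or_gt (-1) x with h1 | h1
      · linarith
      · have hx : x ∈ E n := hEbig n (by simp [Set.mem_Ioo]; intro h'; linarith)
        have : b n x ≤ x := (hb n x).2 ⟨hx, le_refl x⟩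
        linarith
  constructor
  · -- forward: x ∈ ⋃ E n → ∃ z
    intro hx
    rw [Set.mem_iUnion] at hx
    obtain ⟨N, hxN⟩ := hx
    refine ⟨(N : ℝ) + 1, by positivity, ?_⟩
    rw [hf x ((N : ℝ) + 1) (by positivity)]
    have hzero : ∀ n : ℕ,
        c n * ((x - a n x) ^ 3 * (b n x - x) ^ 3) * max ((n : ℝ) + 1 - ((N : ℝ) + 1)) 0 ^ 3 = 0 := by
      intro n
      rcases le_or_gt n N with h | h
      · have : ((n : ℝ) + 1 - ((N : ℝ) + 1)) ≤ 0 := by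
          have : (n : ℝ) ≤ N := Nat.cast_le.2 h
          linarith
        rw [max_eq_right this]
        simp
      · have hxn : x ∈ E n := hmono N n h.le hxN
        rw [haeq n hxn]
        simp
    rw [tsum_congr hzero, tsum_zero, add_zero]
  · -- backward
    rintro ⟨z, hz, hfz⟩
    rw [hf x z hz] at hfz
    set F : ℕ → ℝ := fun n =>
      c n * ((x - a n x) ^ 3 * (b n x - x) ^ 3) * max ((n : ℝ) + 1 - z) 0 ^ 3 with hF
    have htsum0 : ∑' n, F n = 0 := by linarith
    have hFnonneg : ∀ n, 0 ≤ F n := by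
      intro n
      have h1 : 0 ≤ x - a n x := by linarith [hale n]
      have h2 : 0 ≤ b n x - x := by linarith [hble n]
      have h3 : (0:ℝ) ≤ max ((n : ℝ) + 1 - z) 0 := le_max_right _ _
      rw [hF]
      exact mul_nonneg (mul_nonneg (hc n).le
        (mul_nonneg (pow_nonneg h1 3) (pow_nonneg h2 3))) (pow_nonneg h3 3)
    have hFsummable : Summable F := by
      apply Summable.of_nonneg_of_le hFnonneg ?_ hsummable
      intro n
      have h1 : 0 ≤ x - a n x := by linarith [hale n]
      have h2 : 0 ≤ b n x - x := by linarith [hble n]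
      have h3 : max ((n : ℝ) + 1 - z) 0 ≤ (n : ℝ) + 1 := by
        apply max_le
        · linarith
        · positivity
      have h3' : (0:ℝ) ≤ max ((n : ℝ) + 1 - z) 0 := le_max_right _ _
      have t1 : (x - a n x) ^ 3 * (b n x - x) ^ 3 ≤ 3 ^ 3 * 3 ^ 3 :=
        mul_le_mul (pow_le_pow_left₀ h1 (hA n) 3) (pow_le_pow_left₀ h2 (hB n) 3)
          (pow_nonneg h2 3) (by norm_num)
      have t2 : max ((n : ℝ) + 1 - z) 0 ^ 3 ≤ ((n : ℝ) + 1) ^ 3 :=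
        pow_le_pow_left₀ h3' h3 3
      have step : F n ≤ c n * (3 ^ 3 * 3 ^ 3) * ((n : ℝ) + 1) ^ 3 := by
        rw [hF]
        exact mul_le_mul (mul_le_mul le_rfl t1
            (mul_nonneg (pow_nonneg h1 3) (pow_nonneg h2 3)) (hc n).le) t2
          (pow_nonneg h3' 3) (mul_nonneg (hc n).le (by norm_num))
      refine step.trans ?_
      have hn : (0:ℝ) ≤ ((n:ℝ) + 1) ^ 3 := by positivity
      nlinarith [hc n, hn]
    have hterm0 : ∀ n, F n = 0 := by
      intro n
      have hle : F n ≤ ∑' m, F m := Summable.le_tsum hFsummable n (fun m _ => hFnonneg m)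
      have := hFnonneg n
      linarith [htsum0 ▸ hle]
    -- pick n = ⌈z⌉₊
    set n := ⌈z⌉₊ with hn
    have hzn : z ≤ (n : ℝ) := Nat.le_ceil z
    have hpos : 0 < max ((n : ℝ) + 1 - z) 0 := lt_max_of_lt_left (by linarith)
    have h0 := hterm0 n
    rw [hF] at h0
    have hg : (x - a n x) ^ 3 * (b n x - x) ^ 3 = 0 := by
      by_contra hne
      have hc' := (hc n).ne'
      have hm : max ((n : ℝ) + 1 - z) 0 ^ 3 ≠ 0 := pow_ne_zero _ hpos.ne'
      exact hne (by
        have := mul_eq_zero.1 h0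
        rcases this with h | h
        · rcases mul_eq_zero.1 h with h' | h'
          · exact absurd h' hc'
          · exact h'
        · exact absurd h hm)
    rw [Set.mem_iUnion]
    refine ⟨n, ?_⟩
    rcases mul_eq_zero.1 hg with h | h
    · have : x - a n x = 0 := pow_eq_zero_iff (by norm_num) |>.1 h
      have : x = a n x := by linarith
      rw [this]; exact haE n
    · have : b n x - x = 0 := pow_eq_zero_iff (by norm_num) |>.1 h
      have : x = b n x := by linarith
      rw [this]; exact hbE n
end

section
/- For every x ∈ ℝ and z ≥ 0, if f(x,z) > x² then the partial derivative ∂f/∂z(x,z) is strictly negative. -/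
open Filter Topology

lemma maxcube_hasDerivAt (u : ℝ) :
    HasDerivAt (fun v : ℝ => max v 0 ^ 3) (3 * max u 0 ^ 2) u := by
  rcases lt_trichotomy u 0 with hu | hu | hu
  · have h0 : HasDerivAt (fun _ : ℝ => (0:ℝ)) 0 u := hasDerivAt_const u 0
    have hev : (fun v : ℝ => max v 0 ^ 3) =ᶠ[𝓝 u] fun _ => (0:ℝ) := by
      filter_upwards [Iio_mem_nhds hu] with v hv
      simp [max_eq_right (le_of_lt (Set.mem_Iio.mp hv))]
    rw [show (3 : ℝ) * max u 0 ^ 2 = 0 by rw [max_eq_right hu.le]; ring]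
    exact h0.congr_of_eventuallyEq hev
  · subst hu
    rw [show (3 : ℝ) * max 0 0 ^ 2 = 0 by simp]
    rw [hasDerivAt_iff_isLittleO]
    rw [Asymptotics.isLittleO_iff]
    intro ε hε
    have hev : ∀ᶠ v : ℝ in 𝓝 (0:ℝ), |v - 0| < Real.sqrt ε :=
      eventually_abs_sub_lt 0 (Real.sqrt_pos.mpr hε)
    filter_upwards [hev] with v hv
    have h1 : |v| < Real.sqrt ε := by simpa using hv
    have h2 : v ^ 2 ≤ ε := by
      nlinarith [Real.sq_sqrt hε.le, Real.sqrt_nonneg ε, sq_abs v, abs_nonneg v]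
    have h3 : max v 0 ≤ |v| := by
      rcases le_total v 0 with h | h
      · simp [max_eq_right h, abs_nonneg]
      · simp [max_eq_left h, le_abs_self]
    have h4 : (0:ℝ) ≤ max v 0 := le_max_right v 0
    simp only [sub_zero, smul_eq_mul, mul_zero, Real.norm_eq_abs, max_eq_right le_rfl]
    have h5 : |max v 0 ^ 3 - 0 ^ 3| = max v 0 ^ 3 := by
      rw [show (0:ℝ)^3 = 0 by norm_num, sub_zero, abs_of_nonneg (by positivity)]
    rw [h5]
    have hm3 : max v 0 ^ 3 ≤ |v| ^ 3 := pow_le_pow_left₀ h4 h3 3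
    have : max v 0 ^ 3 ≤ v ^ 2 * |v| := by nlinarith [sq_abs v]
    nlinarith [abs_nonneg v]
  · have hpow : HasDerivAt (fun v : ℝ => v ^ 3) (3 * u ^ 2) u := by
      simpa using hasDerivAt_pow 3 u
    have hev : (fun v : ℝ => max v 0 ^ 3) =ᶠ[𝓝 u] fun v => v ^ 3 := by
      filter_upwards [Ioi_mem_nhds hu] with v hv
      rw [max_eq_left (le_of_lt (Set.mem_Ioi.mp hv))]
    rw [show (3 : ℝ) * max u 0 ^ 2 = 3 * u ^ 2 by rw [max_eq_left hu.le]]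
    exact hpow.congr_of_eventuallyEq hev

lemma term_hasDerivAt (C t : ℝ) :
    HasDerivAt (fun s : ℝ => max (C - s) 0 ^ 3) (-(3 * max (C - t) 0 ^ 2)) t := by
  have h1 := maxcube_hasDerivAt (C - t)
  have h2 : HasDerivAt (fun s : ℝ => C - s) (-1) t := by
    simpa using (hasDerivAt_id t).const_sub C
  have h3 := h1.comp t h2
  simp only [Function.comp_def] at h3
  rw [show -(3 * max (C - t) 0 ^ 2) = 3 * max (C - t) 0 ^ 2 * -1 by ring]
  exact h3

theorem stmt_13
    (E : ℕ → Set ℝ)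
    (hEclosed : ∀ n, IsClosed (E n))
    (hEmono : ∀ n, E n ⊆ E (n + 1))
    (hEbig : ∀ n, (Set.Ioo (-1 : ℝ) 2)ᶜ ⊆ E n)
    (a b : ℕ → ℝ → ℝ)
    (ha : ∀ n x, IsGreatest (E n ∩ Set.Iic x) (a n x))
    (hb : ∀ n x, IsLeast (E n ∩ Set.Ici x) (b n x))
    (c : ℕ → ℝ) (hc : ∀ n, 0 < c n)
    (hsummable : Summable fun n : ℕ => (81 ^ 2 / 6 : ℝ) * ((n : ℝ) + 1) ^ 3 * c n)
    (hsum : ∑' n : ℕ, (81 ^ 2 / 6 : ℝ) * ((n : ℝ) + 1) ^ 3 * c n < 1)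
    (f : ℝ → ℝ → ℝ)
    (hf : ∀ x z, 0 ≤ z → f x z = x ^ 2 + ∑' n : ℕ,
      c n * ((x - a n x) ^ 3 * (b n x - x) ^ 3) * max ((n : ℝ) + 1 - z) 0 ^ 3)
    : ∀ x z : ℝ, 0 ≤ z → x ^ 2 < f x z →
      ∃ d : ℝ, HasDerivWithinAt (fun t => f x t) d (Set.Ici 0) z ∧ d < 0 := by
  intro x z hz hfx
  set g : ℕ → ℝ := fun n => (x - a n x) ^ 3 * (b n x - x) ^ 3 with hg_def
  -- bounds on x - a and b - x
  have hp : ∀ n, 0 ≤ x - a n x ∧ x - a n x ≤ 3 ∧ 0 ≤ b n x - x ∧ b n x - x ≤ 3 := by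
    intro n
    have h1 : a n x ≤ x := (ha n x).1.2
    have h2 : x ≤ b n x := (hb n x).1.2
    by_cases hx : x ∈ Set.Ioo (-1 : ℝ) 2
    · have hm1 : (-1 : ℝ) ∈ E n := hEbig n (by simp)
      have h2m : (2 : ℝ) ∈ E n := hEbig n (by simp)
      have ha1 : (-1 : ℝ) ≤ a n x := (ha n x).2 ⟨hm1, hx.1.le⟩
      have hb2 : b n x ≤ 2 := (hb n x).2 ⟨h2m, hx.2.le⟩
      exact ⟨by linarith, by linarith [hx.2], by linarith, by linarith [hx.1]⟩
    · have hxE : x ∈ E n := hEbig n hx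
      have hax : x ≤ a n x := (ha n x).2 ⟨hxE, le_refl x⟩
      have hbx : b n x ≤ x := (hb n x).2 ⟨hxE, le_refl x⟩
      refine ⟨by linarith, by linarith, by linarith, by linarith⟩
  have hg0 : ∀ n, 0 ≤ g n := fun n => mul_nonneg (pow_nonneg (hp n).1 3)
    (pow_nonneg (hp n).2.2.1 3)
  have hg729 : ∀ n, g n ≤ 729 := by
    intro n
    obtain ⟨h1, h2, h3, h4⟩ := hp n
    have hA : (x - a n x) ^ 3 ≤ 27 := by
      have := pow_le_pow_left₀ h1 h2 3; norm_num at this; linarith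
    have hB : (b n x - x) ^ 3 ≤ 27 := by
      have := pow_le_pow_left₀ h3 h4 3; norm_num at this; linarith
    have := mul_le_mul hA hB (pow_nonneg h3 3) (by norm_num)
    simp only [hg_def]
    nlinarith [this]
  -- the series
  set F : ℕ → ℝ → ℝ := fun n t => c n * g n * max ((n : ℝ) + 1 - t) 0 ^ 3 with hF_def
  set F' : ℕ → ℝ → ℝ := fun n t => c n * g n * (-(3 * max ((n : ℝ) + 1 - t) 0 ^ 2)) with hF'_def
  set u : ℕ → ℝ := fun n => 8 * ((81 ^ 2 / 6 : ℝ) * ((n : ℝ) + 1) ^ 3 * c n) with hu_def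
  have hu_sum : Summable u := hsummable.mul_left 8
  have hderiv : ∀ n t, HasDerivAt (F n) (F' n t) t := fun n t =>
    (term_hasDerivAt ((n : ℝ) + 1) t).const_mul (c n * g n)
  have hM : ∀ n : ℕ, ∀ t : ℝ, t ∈ Set.Ioi (-1 : ℝ) →
      max ((n : ℝ) + 1 - t) 0 ≤ 2 * ((n : ℝ) + 1) := by
    intro n t ht
    have ht' : -1 < t := ht
    have hn : (0 : ℝ) ≤ (n : ℝ) := Nat.cast_nonneg n
    exact max_le (by linarith) (by linarith)
  have hbound : ∀ n : ℕ, ∀ t : ℝ, t ∈ Set.Ioi (-1 : ℝ) → ‖F' n t‖ ≤ u n := by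
    intro n t ht
    have hM1 := hM n t ht
    have hM0 : (0 : ℝ) ≤ max ((n : ℝ) + 1 - t) 0 := le_max_right _ _
    have hn1 : (1 : ℝ) ≤ (n : ℝ) + 1 := by
      have := Nat.cast_nonneg (α := ℝ) n; linarith
    have habs : ‖F' n t‖ = c n * g n * (3 * max ((n : ℝ) + 1 - t) 0 ^ 2) := by
      have he : F' n t = -(c n * g n * (3 * max ((n : ℝ) + 1 - t) 0 ^ 2)) := by
        simp only [hF'_def]; ring
      rw [he, Real.norm_eq_abs, abs_neg]
      exact abs_of_nonneg (mul_nonneg (mul_nonneg (hc n).le (hg0 n)) (by positivity))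
    rw [habs, hu_def]
    have e1 : max ((n : ℝ) + 1 - t) 0 ^ 2 ≤ (2 * ((n : ℝ) + 1)) ^ 2 :=
      pow_le_pow_left₀ hM0 hM1 2
    have e2 : g n * max ((n : ℝ) + 1 - t) 0 ^ 2 ≤ 729 * (2 * ((n : ℝ) + 1)) ^ 2 :=
      mul_le_mul (hg729 n) e1 (by positivity) (by norm_num)
    have e3 : c n * (g n * max ((n : ℝ) + 1 - t) 0 ^ 2)
        ≤ c n * (729 * (2 * ((n : ℝ) + 1)) ^ 2) := mul_le_mul_of_nonneg_left e2 (hc n).le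
    have e4 : ((n : ℝ) + 1) ^ 2 ≤ ((n : ℝ) + 1) ^ 3 :=
      pow_le_pow_right₀ hn1 (by norm_num)
    nlinarith [mul_le_mul_of_nonneg_left e4 (hc n).le]
  -- membership
  have hzmem : z ∈ Set.Ioi (-1 : ℝ) := by simp only [Set.mem_Ioi]; linarith
  -- summability at z
  have hF0 : ∀ n, 0 ≤ F n z :=
    fun n => mul_nonneg (mul_nonneg (hc n).le (hg0 n)) (by positivity)
  have hFle : ∀ n, F n z ≤ u n := by
    intro n
    have hM1 := hM n z hzmem
    have hM0 : (0 : ℝ) ≤ max ((n : ℝ) + 1 - z) 0 := le_max_right _ _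
    have hn1 : (1 : ℝ) ≤ (n : ℝ) + 1 := by
      have := Nat.cast_nonneg (α := ℝ) n; linarith
    have e1 : max ((n : ℝ) + 1 - z) 0 ^ 3 ≤ (2 * ((n : ℝ) + 1)) ^ 3 :=
      pow_le_pow_left₀ hM0 hM1 3
    have e2 : g n * max ((n : ℝ) + 1 - z) 0 ^ 3 ≤ 729 * (2 * ((n : ℝ) + 1)) ^ 3 :=
      mul_le_mul (hg729 n) e1 (by positivity) (by norm_num)
    have e3 : c n * (g n * max ((n : ℝ) + 1 - z) 0 ^ 3)
        ≤ c n * (729 * (2 * ((n : ℝ) + 1)) ^ 3) := mul_le_mul_of_nonneg_left e2 (hc n).le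
    simp only [hF_def, hu_def]
    nlinarith [e3, mul_nonneg (hc n).le (pow_nonneg (by positivity : (0:ℝ) ≤ (n : ℝ) + 1) 3)]
  have hFsum : Summable (fun n => F n z) := Summable.of_nonneg_of_le hF0 hFle hu_sum
  -- derivative of the sum
  have hkey : HasDerivAt (fun t => ∑' n, F n t) (∑' n, F' n z) z :=
    hasDerivAt_tsum_of_isPreconnected hu_sum isOpen_Ioi (convex_Ioi (-1 : ℝ)).isPreconnected
      (fun n y _ => hderiv n y) hbound hzmem hFsum hzmem
  have hkey2 : HasDerivAt (fun t => x ^ 2 + ∑' n, F n t) (∑' n, F' n z) z :=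
    hkey.const_add (x ^ 2)
  have hDW : HasDerivWithinAt (fun t => f x t) (∑' n, F' n z) (Set.Ici 0) z := by
    refine hkey2.hasDerivWithinAt.congr (fun t ht => ?_) (hf x z hz)
    exact hf x t ht
  refine ⟨∑' n, F' n z, hDW, ?_⟩
  -- negativity of the derivative
  have hF'sum : Summable (fun n => F' n z) :=
    Summable.of_norm_bounded hu_sum (fun n => hbound n z hzmem)
  have hF'le : ∀ n, F' n z ≤ 0 := by
    intro n
    have he : F' n z = -(c n * g n * (3 * max ((n : ℝ) + 1 - z) 0 ^ 2)) := by
      simp only [hF'_def]; ring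
    rw [he]
    exact neg_nonpos_of_nonneg (mul_nonneg (mul_nonneg (hc n).le (hg0 n)) (by positivity))
  have hex : ∃ n, 0 < F n z := by
    by_contra hno
    push_neg at hno
    have hall : ∀ n, F n z = 0 := fun n => le_antisymm (hno n) (hF0 n)
    have hts : (∑' n : ℕ, c n * ((x - a n x) ^ 3 * (b n x - x) ^ 3)
        * max ((n : ℝ) + 1 - z) 0 ^ 3) = 0 := by
      rw [show (fun n : ℕ => c n * ((x - a n x) ^ 3 * (b n x - x) ^ 3)
          * max ((n : ℝ) + 1 - z) 0 ^ 3) = fun n : ℕ => (0 : ℝ) from funext fun n => hall n]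
      exact tsum_zero
    rw [hf x z hz, hts] at hfx
    linarith
  obtain ⟨n₀, hn₀⟩ := hex
  have hgpos : 0 < g n₀ := by
    rcases (hg0 n₀).lt_or_eq with h | h
    · exact h
    · exfalso
      have : F n₀ z = 0 := by simp only [hF_def, ← h, mul_zero, zero_mul]
      linarith
  have hMpos : 0 < max ((n₀ : ℝ) + 1 - z) 0 := by
    rcases (le_max_right ((n₀ : ℝ) + 1 - z) 0).lt_or_eq with h | h
    · exact h
    · exfalso
      have : F n₀ z = 0 := by simp only [hF_def, ← h]; ring
      linarith
  have hn₀neg : F' n₀ z < 0 := by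
    have hsq : 0 < max ((n₀ : ℝ) + 1 - z) 0 ^ 2 := pow_pos hMpos 2
    have h1 : 0 < c n₀ * g n₀ * (3 * max ((n₀ : ℝ) + 1 - z) 0 ^ 2) :=
      mul_pos (mul_pos (hc n₀) hgpos) (by linarith)
    have he : F' n₀ z = -(c n₀ * g n₀ * (3 * max ((n₀ : ℝ) + 1 - z) 0 ^ 2)) := by
      simp only [hF'_def]; ring
    rw [he]; linarith
  have hT : Summable (fun n => -(F' n z)) := hF'sum.neg
  have h1 : -(F' n₀ z) ≤ ∑' n, -(F' n z) :=
    Summable.le_tsum hT n₀ (fun j _ => neg_nonneg.mpr (hF'le j))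
  have h2 : (∑' n, F' n z) = -(∑' n, -(F' n z)) := by rw [tsum_neg, neg_neg]
  rw [h2]
  linarith
end

section
/- Let H be a real Hilbert space and let A_1, A_2 be nonempty, convex, closed subsets of H. Then the set {α ∈ [0,1] : P_{A_2}^α ∘ P_{A_1}^α has a fixed point} equals either {0} or [0,1]. -/
open InnerProductSpace

/-- Variational inequality for a nearest point in a convex set. -/
lemma nearest_inner {H : Type*} [NormedAddCommGroup H] [InnerProductSpace ℝ H]
    {A : Set H} (hA : Convex ℝ A) {x a : H} (ha : a ∈ A)
    (hmin : ∀ z ∈ A, ‖x - a‖ ≤ ‖x - z‖) : ∀ z ∈ A, ⟪x - a, z - a⟫_ℝ ≤ 0 := by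
  have : Nonempty ↥A := ⟨⟨a, ha⟩⟩
  have hbdd : BddBelow (Set.range fun w : A => ‖x - (w : H)‖) := by
    refine ⟨0, ?_⟩
    rintro r ⟨w, rfl⟩
    positivity
  have heq : ‖x - a‖ = ⨅ w : A, ‖x - (w : H)‖ := by
    refine le_antisymm (le_ciInf fun w => hmin w w.2) ?_
    exact ciInf_le hbdd ⟨a, ha⟩
  exact (norm_eq_iInf_iff_real_inner_le_zero hA ha).mp heq

/-- If `a ∈ A` satisfies the variational inequality for `x`, then any metric projection of
`x` onto `A` equals `a`. -/
lemma proj_eq {H : Type*} [NormedAddCommGroup H] [InnerProductSpace ℝ H]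
    {A : Set H} {P : H → H} (hP : IsMetricProj A P) {x a : H} (ha : a ∈ A)
    (h : ∀ z ∈ A, ⟪x - a, z - a⟫_ℝ ≤ 0) : P x = a := by
  have hp := (hP x).1
  have hle := (hP x).2 a ha
  rw [dist_eq_norm, dist_eq_norm] at hle
  have h1 := h (P x) hp
  have e2 : ‖x - P x‖ ^ 2 = ‖x - a‖ ^ 2 - 2 * ⟪x - a, P x - a⟫_ℝ + ‖P x - a‖ ^ 2 := by
    rw [show x - P x = (x - a) - (P x - a) by abel, norm_sub_sq_real]
  have h3 : ‖P x - a‖ ^ 2 ≤ 0 := by nlinarith [norm_nonneg (x - P x), norm_nonneg (x - a)]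
  have h4 : ‖P x - a‖ = 0 := by nlinarith [norm_nonneg (P x - a)]
  exact sub_eq_zero.mp (norm_eq_zero.mp h4)

set_option maxHeartbeats 1000000 in
theorem stmt_15 {H : Type*} [NormedAddCommGroup H] [InnerProductSpace ℝ H] [CompleteSpace H]
    (A₁ A₂ : Set H)
    (hA₁ : A₁.Nonempty ∧ Convex ℝ A₁ ∧ IsClosed A₁)
    (hA₂ : A₂.Nonempty ∧ Convex ℝ A₂ ∧ IsClosed A₂)
    (P₁ P₂ : H → H) (hP₁ : IsMetricProj A₁ P₁) (hP₂ : IsMetricProj A₂ P₂) :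
    {α : ℝ | α ∈ Set.Icc (0 : ℝ) 1 ∧ ∃ x, relax α P₂ (relax α P₁ x) = x} = {(0 : ℝ)} ∨
    {α : ℝ | α ∈ Set.Icc (0 : ℝ) 1 ∧ ∃ x, relax α P₂ (relax α P₁ x) = x} = Set.Icc 0 1 := by
  obtain ⟨a₀, ha₀⟩ := hA₁.1
  by_cases hD : ∃ a ∈ A₁, ∃ b ∈ A₂, ∀ z₁ ∈ A₁, ∀ z₂ ∈ A₂, ‖a - b‖ ≤ ‖z₁ - z₂‖
  · -- distance attained : the set is all of [0,1]
    right
    obtain ⟨a, ha, b, hb, hmin⟩ := hD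
    have hia : ∀ z ∈ A₁, ⟪b - a, z - a⟫_ℝ ≤ 0 := by
      refine nearest_inner hA₁.2.1 ha fun z hz => ?_
      rw [norm_sub_rev b a, norm_sub_rev b z]; exact hmin z hz b hb
    have hib : ∀ z ∈ A₂, ⟪a - b, z - b⟫_ℝ ≤ 0 :=
      nearest_inner hA₂.2.1 hb fun z hz => hmin a ha z hz
    ext α
    simp only [Set.mem_setOf_eq, Set.mem_Icc]
    constructor
    · exact fun h => h.1
    · rintro ⟨h0, h1⟩
      refine ⟨⟨h0, h1⟩, ?_⟩
      rcases eq_or_lt_of_le h0 with rfl | hpos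
      · exact ⟨a, by simp [relax]⟩
      have hs2 : (2 : ℝ) - α ≠ 0 := by linarith
      obtain ⟨s, hs_def⟩ : ∃ s : ℝ, s = (2 - α)⁻¹ := ⟨_, rfl⟩
      have hss : (2 - α) * s = 1 := by rw [hs_def]; exact mul_inv_cancel₀ hs2
      have hs_nonneg : 0 ≤ s := hs_def ▸ inv_nonneg.mpr (by linarith)
      refine ⟨a + s • (b - a), ?_⟩
      have hP1x : P₁ (a + s • (b - a)) = a := by
        refine proj_eq hP₁ ha fun z hz => ?_
        rw [add_sub_cancel_left, real_inner_smul_left]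
        exact mul_nonpos_iff.mpr (Or.inl ⟨hs_nonneg, hia z hz⟩)
      have hy : relax α P₁ (a + s • (b - a)) = b + s • (a - b) := by
        simp only [relax, hP1x]
        match_scalars <;>
        first
          | ring1
          | linear_combination (norm := ring1) hss
          | linear_combination (norm := ring1) -hss
      have hP2y : P₂ (b + s • (a - b)) = b := by
        refine proj_eq hP₂ hb fun z hz => ?_
        rw [add_sub_cancel_left, real_inner_smul_left]
        exact mul_nonpos_iff.mpr (Or.inl ⟨hs_nonneg, hib z hz⟩)
      rw [hy]
      simp only [relax, hP2y]
      match_scalars <;>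
        first
          | ring1
          | linear_combination (norm := ring1) hss
          | linear_combination (norm := ring1) -hss
  · -- distance not attained : the set is {0}
    left
    ext α
    simp only [Set.mem_setOf_eq, Set.mem_Icc, Set.mem_singleton_iff]
    constructor
    · rintro ⟨⟨h0, hα1⟩, x, hx⟩
      by_contra hα0
      have hαpos : 0 < α := lt_of_le_of_ne h0 (Ne.symm hα0)
      have hαne : α ≠ 0 := ne_of_gt hαpos
      exfalso
      apply hD
      obtain ⟨a, ha_def⟩ : ∃ a, a = P₁ x := ⟨_, rfl⟩
      obtain ⟨y, hy1⟩ : ∃ y, y = α • a + (1 - α) • x := ⟨_, rfl⟩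
      have hyrel : y = relax α P₁ x := by simp only [relax, hy1, ha_def]
      obtain ⟨b, hb_def⟩ : ∃ b, b = P₂ y := ⟨_, rfl⟩
      have ha : a ∈ A₁ := ha_def ▸ (hP₁ x).1
      have hb : b ∈ A₂ := hb_def ▸ (hP₂ y).1
      have hx1 : α • b + (1 - α) • y = x := by
        rw [← hyrel] at hx
        simp only [relax] at hx
        rw [hb_def]; exact hx
      obtain ⟨v, hv_def⟩ : ∃ v, v = x - y := ⟨_, rfl⟩
      have hαα : α * α⁻¹ = 1 := mul_inv_cancel₀ hαne
      have hxa : x - a = α⁻¹ • v := by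
        rw [hv_def, hy1]
        match_scalars <;>
        first
          | ring1
          | linear_combination (norm := ring1) hαα
          | linear_combination (norm := ring1) -hαα
      have hyb : y - b = -(α⁻¹ • v) := by
        rw [hv_def, ← hx1]
        match_scalars <;>
        first
          | ring1
          | linear_combination (norm := ring1) hαα
          | linear_combination (norm := ring1) -hαα
      have hab : a - b = (1 - 2 * α⁻¹) • v := by
        have e1 : a = x - α⁻¹ • v := by rw [← hxa]; abel
        have e2 : b = y + α⁻¹ • v := by
          have h := hyb
          rw [sub_eq_iff_eq_add] at h
          rw [h]; abel
        rw [e1, e2, hv_def]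
        module
      -- variational inequalities
      have h1 := nearest_inner hA₁.2.1 ha fun z hz => by
        rw [ha_def]
        have := (hP₁ x).2 z hz; rwa [dist_eq_norm, dist_eq_norm] at this
      have h2 := nearest_inner hA₂.2.1 hb fun z hz => by
        rw [hb_def]
        have := (hP₂ y).2 z hz; rwa [dist_eq_norm, dist_eq_norm] at this
      refine ⟨a, ha, b, hb, fun z₁ hz₁ z₂ hz₂ => ?_⟩
      have hpos' : 0 < α⁻¹ := inv_pos.mpr hαpos
      have h1' : ⟪v, z₁ - a⟫_ℝ ≤ 0 := by
        have e : ⟪v, z₁ - a⟫_ℝ = α * ⟪x - a, z₁ - a⟫_ℝ := by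
          rw [hxa, real_inner_smul_left, ← mul_assoc, mul_inv_cancel₀ hαne, one_mul]
        rw [e]
        exact mul_nonpos_iff.mpr (Or.inl ⟨h0, h1 z₁ hz₁⟩)
      have h2' : ⟪v, b - z₂⟫_ℝ ≤ 0 := by
        have h := h2 z₂ hz₂
        rw [hyb, inner_neg_left, real_inner_smul_left, neg_nonpos] at h
        have h' : 0 ≤ ⟪v, z₂ - b⟫_ℝ := by nlinarith [h, hpos']
        rw [show b - z₂ = -(z₂ - b) by abel, inner_neg_right]
        linarith
      obtain ⟨c, hc_def⟩ : ∃ c : ℝ, c = 1 - 2 * α⁻¹ := ⟨_, rfl⟩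
      have hc : c ≤ 0 := by
        have hinv : 1 ≤ α⁻¹ := by nlinarith [mul_inv_cancel₀ hαne, hαpos, hα1, hpos']
        rw [hc_def]; linarith
      have hab' : a - b = c • v := by rw [hc_def]; exact hab
      have hmid : ⟪v, a - b⟫_ℝ = c * ‖v‖ ^ 2 := by
        rw [hab', real_inner_smul_right, real_inner_self_eq_norm_sq]
      have hsum : ⟪v, z₁ - z₂⟫_ℝ ≤ c * ‖v‖ ^ 2 := by
        have e : z₁ - z₂ = (z₁ - a) + ((a - b) + (b - z₂)) := by abel
        rw [e, inner_add_right, inner_add_right]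
        linarith [h1' , h2', hmid.le, hmid.ge]
      have hinner : ⟪a - b, z₁ - z₂⟫_ℝ = c * ⟪v, z₁ - z₂⟫_ℝ := by
        rw [hab', real_inner_smul_left]
      have hnormsq : ‖a - b‖ ^ 2 = c ^ 2 * ‖v‖ ^ 2 := by
        rw [hab', norm_smul, Real.norm_eq_abs, mul_pow, sq_abs]
      have hCS : ⟪a - b, z₁ - z₂⟫_ℝ ≤ ‖a - b‖ * ‖z₁ - z₂‖ := real_inner_le_norm _ _
      have hkey : ‖a - b‖ ^ 2 ≤ ‖a - b‖ * ‖z₁ - z₂‖ := by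
        have : c * (c * ‖v‖ ^ 2) ≤ c * ⟪v, z₁ - z₂⟫_ℝ :=
          mul_le_mul_of_nonpos_left hsum hc
        nlinarith [this, hCS, hinner, hnormsq]
      nlinarith [hkey, norm_nonneg (a - b), norm_nonneg (z₁ - z₂)]
    · rintro rfl
      exact ⟨⟨le_refl 0, zero_le_one⟩, a₀, by simp [relax]⟩
end

section
/- Let k ≥ 1 be an integer and let A_1, …, A_k be nonempty, convex, closed subsets of ℝ. Then for every α ∈ [0,1] the composition P_{A_k}^α ∘ P_{A_{k−1}}^α ∘ ⋯ ∘ P_{A_1}^α : ℝ → ℝ has a fixed point; that is, {α ∈ [0,1] : the composition has a fixed point} = [0,1]. -/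
lemma proj_monotone {A : Set ℝ} {P : ℝ → ℝ} (hP : IsMetricProj A P) : Monotone P := by
  intro x y hxy
  rcases eq_or_lt_of_le hxy with rfl | hlt
  · exact le_refl _
  have h1 := (hP x).2 (P y) (hP y).1
  have h2 := (hP y).2 (P x) (hP x).1
  rw [Real.dist_eq, Real.dist_eq] at h1 h2
  have h1' : (x - P x) ^ 2 ≤ (x - P y) ^ 2 := by
    have := sq_abs (x - P x); have := sq_abs (x - P y)
    nlinarith [abs_nonneg (x - P x), abs_nonneg (x - P y)]
  have h2' : (y - P y) ^ 2 ≤ (y - P x) ^ 2 := by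
    have := sq_abs (y - P y); have := sq_abs (y - P x)
    nlinarith [abs_nonneg (y - P y), abs_nonneg (y - P x)]
  nlinarith [h1', h2']

lemma proj_mem_Icc {A : Set ℝ} {P : ℝ → ℝ} (hP : IsMetricProj A P) (hconv : Convex ℝ A)
    {a m M x : ℝ} (ha : a ∈ A) (hma : m ≤ a) (haM : a ≤ M) (hx : x ∈ Set.Icc m M) :
    P x ∈ Set.Icc m M := by
  have hmem : P x ∈ A := (hP x).1
  have hd := (hP x).2
  have hoc := hconv.ordConnected
  have hfix : x ∈ A → P x = x := by
    intro hxA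
    have h0 := hd x hxA
    rw [dist_self] at h0
    have : dist x (P x) = 0 := le_antisymm h0 dist_nonneg
    exact (dist_eq_zero.mp this).symm
  constructor
  · by_contra h
    push_neg at h
    have hpa : P x < a := lt_of_lt_of_le h hma
    have hpx : P x < x := lt_of_lt_of_le h hx.1
    rcases le_or_gt a x with hax | hxa
    · have := hd a ha
      rw [Real.dist_eq, Real.dist_eq, abs_of_pos (by linarith), abs_of_nonneg (by linarith)] at this
      linarith
    · have hxA : x ∈ A := hoc.out hmem ha ⟨le_of_lt hpx, le_of_lt hxa⟩
      have := hfix hxA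
      linarith
  · by_contra h
    push_neg at h
    have hpa : a < P x := lt_of_le_of_lt haM h
    have hpx : x < P x := lt_of_le_of_lt hx.2 h
    rcases le_or_gt x a with hax | hxa
    · have := hd a ha
      rw [Real.dist_eq, Real.dist_eq, abs_of_neg (by linarith)] at this
      rw [abs_of_nonpos (by linarith)] at this
      linarith
    · have hxA : x ∈ A := hoc.out ha hmem ⟨le_of_lt hxa, le_of_lt hpx⟩
      have := hfix hxA
      linarith

lemma fix_of_monotone (f : ℝ → ℝ) (hf : Monotone f) (m M : ℝ) (hmM : m ≤ M)
    (hmap : Set.MapsTo f (Set.Icc m M) (Set.Icc m M)) : ∃ x, f x = x := by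
  set S := {x | x ∈ Set.Icc m M ∧ x ≤ f x} with hS
  have hmS : m ∈ S := ⟨⟨le_refl m, hmM⟩, (hmap ⟨le_refl m, hmM⟩).1⟩
  have hbdd : BddAbove S := ⟨M, fun x hx => hx.1.2⟩
  set s := sSup S with hs
  have hsM : s ≤ M := csSup_le ⟨m, hmS⟩ (fun x hx => hx.1.2)
  have hms : m ≤ s := le_csSup hbdd hmS
  have h1 : s ≤ f s := csSup_le ⟨m, hmS⟩ fun x hx => hx.2.trans (hf (le_csSup hbdd hx))
  have hfs : f s ∈ Set.Icc m M := hmap ⟨hms, hsM⟩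
  have h2 : f s ≤ s := le_csSup hbdd ⟨hfs, hf h1⟩
  exact ⟨s, le_antisymm h2 h1⟩

lemma foldl_good (m M : ℝ) (l : List (ℝ → ℝ))
    (hl : ∀ f ∈ l, Monotone f ∧ Set.MapsTo f (Set.Icc m M) (Set.Icc m M)) :
    ∀ g : ℝ → ℝ, Monotone g → Set.MapsTo g (Set.Icc m M) (Set.Icc m M) →
      Monotone (l.foldl (fun g f => f ∘ g) g) ∧
      Set.MapsTo (l.foldl (fun g f => f ∘ g) g) (Set.Icc m M) (Set.Icc m M) := by
  induction l with
  | nil => intro g hg hgm; exact ⟨hg, hgm⟩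
  | cons f t ih =>
    intro g hg hgm
    have hf := hl f List.mem_cons_self
    exact ih (fun f' hf' => hl f' (List.mem_cons_of_mem f hf')) (f ∘ g)
      (hf.1.comp hg) (hf.2.comp hgm)

theorem stmt_16 (k : ℕ) (hk : 1 ≤ k) (A : Fin k → Set ℝ)
    (hA : ∀ i, (A i).Nonempty ∧ Convex ℝ (A i) ∧ IsClosed (A i))
    (P : Fin k → ℝ → ℝ) (hP : ∀ i, IsMetricProj (A i) (P i)) :
    ∀ α ∈ Set.Icc (0 : ℝ) 1, ∃ x : ℝ, compFold (fun i => relax α (P i)) x = x := by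
  intro α hα
  obtain ⟨hα0, hα1⟩ := hα
  haveI : Nonempty (Fin k) := ⟨⟨0, hk⟩⟩
  -- choose a point in each set
  set a : Fin k → ℝ := fun i => (hA i).1.choose with ha
  have haA : ∀ i, a i ∈ A i := fun i => (hA i).1.choose_spec
  set m : ℝ := Finset.univ.inf' Finset.univ_nonempty a with hm
  set M : ℝ := Finset.univ.sup' Finset.univ_nonempty a with hM
  have hma : ∀ i, m ≤ a i := fun i => Finset.inf'_le a (Finset.mem_univ i)
  have haM : ∀ i, a i ≤ M := fun i => Finset.le_sup' a (Finset.mem_univ i)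
  have hmM : m ≤ M := le_trans (hma ⟨0, hk⟩) (haM ⟨0, hk⟩)
  -- each relaxed projection is monotone and maps [m,M] to itself
  have hmono : ∀ i, Monotone (relax α (P i)) := by
    intro i x y hxy
    have hp := proj_monotone (hP i) hxy
    simp only [relax, smul_eq_mul]
    have : α * P i x ≤ α * P i y := mul_le_mul_of_nonneg_left hp hα0
    nlinarith
  have hmaps : ∀ i, Set.MapsTo (relax α (P i)) (Set.Icc m M) (Set.Icc m M) := by
    intro i x hx
    have hpx := proj_mem_Icc (hP i) (hA i).2.1 (haA i) (hma i) (haM i) hx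
    simp only [relax, smul_eq_mul]
    constructor
    · nlinarith [hpx.1, hx.1]
    · nlinarith [hpx.2, hx.2]
  -- the composition is monotone and maps [m,M] to itself
  have key := foldl_good m M (List.ofFn fun i => relax α (P i))
    (by
      intro f hf
      rw [List.mem_ofFn] at hf
      obtain ⟨i, rfl⟩ := hf
      exact ⟨hmono i, hmaps i⟩)
    id monotone_id (Set.mapsTo_id _)
  exact fix_of_monotone _ key.1 m M hmM key.2
end

section
/- Let A_1, …, A_k be nonempty, convex, closed subsets of a real Hilbert space H, let α ∈ [0,1], let T = P_{A_k}^α ∘ P_{A_{k−1}}^α ∘ ⋯ ∘ P_{A_1}^α, and let r > 0. If (x_n) is a sequence in H with ‖x_n‖ ≤ r for all n and ‖T(x_n) − x_n‖ → 0 as n → ∞, then T has a fixed point x₀ with ‖x₀‖ ≤ r. -/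
open Filter Topology
open scoped RealInnerProductSpace

section Helpers

variable {H : Type*} [NormedAddCommGroup H] [InnerProductSpace ℝ H]

lemma metricProj_inner_le {A : Set H} {P : H → H} (hconv : Convex ℝ A)
    (hproj : IsMetricProj A P) (x : H) {y : H} (hy : y ∈ A) :
    ⟪x - P x, y - P x⟫ ≤ 0 := by
  have hPx : P x ∈ A := (hproj x).1
  haveI : Nonempty A := ⟨⟨P x, hPx⟩⟩
  have hinf : ‖x - P x‖ = ⨅ w : A, ‖x - w‖ := by
    refine le_antisymm (le_ciInf fun w => ?_) (ciInf_le (show BddBelow (Set.range fun w : A => ‖x - w‖) from ⟨0, ?_⟩) ⟨P x, hPx⟩)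
    · simpa [dist_eq_norm] using (hproj x).2 w w.2
    · rintro b ⟨w, rfl⟩; exact norm_nonneg _
  exact (norm_eq_iInf_iff_real_inner_le_zero hconv hPx).1 hinf y hy

lemma metricProj_nonexpansive {A : Set H} {P : H → H} (hconv : Convex ℝ A)
    (hproj : IsMetricProj A P) (a b : H) : ‖P a - P b‖ ≤ ‖a - b‖ := by
  have h1 := metricProj_inner_le hconv hproj a (hproj b).1
  have h2 := metricProj_inner_le hconv hproj b (hproj a).1
  have key : ‖P a - P b‖ ^ 2 ≤ ⟪a - b, P a - P b⟫ := by
    have e1 : ⟪a - b, P a - P b⟫ - ‖P a - P b‖ ^ 2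
        = (-⟪a - P a, P b - P a⟫) + (-⟪b - P b, P a - P b⟫) := by
      rw [← real_inner_self_eq_norm_sq]
      simp only [inner_sub_left, inner_sub_right]
      ring
    nlinarith [h1, h2]
  have h3 : ⟪a - b, P a - P b⟫ ≤ ‖a - b‖ * ‖P a - P b‖ := real_inner_le_norm _ _
  rcases (norm_nonneg (P a - P b)).eq_or_lt with h | h
  · rw [← h]; exact norm_nonneg _
  · have : ‖P a - P b‖ * ‖P a - P b‖ ≤ ‖a - b‖ * ‖P a - P b‖ := by nlinarith
    exact le_of_mul_le_mul_right this h

lemma relax_nonexpansive {P : H → H} (hP : ∀ a b, ‖P a - P b‖ ≤ ‖a - b‖) {α : ℝ}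
    (h0 : 0 ≤ α) (h1 : α ≤ 1) (a b : H) : ‖relax α P a - relax α P b‖ ≤ ‖a - b‖ := by
  have e : relax α P a - relax α P b = α • (P a - P b) + (1 - α) • (a - b) := by
    simp only [relax, smul_sub]; abel
  rw [e]
  calc ‖α • (P a - P b) + (1 - α) • (a - b)‖
      ≤ ‖α • (P a - P b)‖ + ‖(1 - α) • (a - b)‖ := norm_add_le _ _
    _ = α * ‖P a - P b‖ + (1 - α) * ‖a - b‖ := by
        rw [norm_smul, norm_smul, Real.norm_of_nonneg h0, Real.norm_of_nonneg (by linarith)]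
    _ ≤ α * ‖a - b‖ + (1 - α) * ‖a - b‖ := by nlinarith [hP a b]
    _ = ‖a - b‖ := by ring

lemma foldl_nonexpansive (l : List (H → H)) (hl : ∀ f ∈ l, ∀ a b, ‖f a - f b‖ ≤ ‖a - b‖) :
    ∀ g : H → H, (∀ a b, ‖g a - g b‖ ≤ ‖a - b‖) →
      ∀ a b, ‖(l.foldl (fun g f => f ∘ g) g) a - (l.foldl (fun g f => f ∘ g) g) b‖ ≤ ‖a - b‖ := by
  induction l with
  | nil => intro g hg; exact hg
  | cons f t ih =>
    intro g hg a b
    simp only [List.foldl_cons]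
    exact ih (fun f' hf' => hl f' (List.mem_cons_of_mem _ hf')) (f ∘ g)
      (fun a b => (hl f List.mem_cons_self _ _).trans (hg a b)) a b

lemma compFold_nonexpansive {k : ℕ} (T : Fin k → H → H)
    (h : ∀ i a b, ‖T i a - T i b‖ ≤ ‖a - b‖) :
    ∀ a b, ‖compFold T a - compFold T b‖ ≤ ‖a - b‖ := by
  refine foldl_nonexpansive _ ?_ id (by simp)
  intro f hf
  rw [List.mem_ofFn] at hf
  obtain ⟨i, rfl⟩ := hf
  exact h i

lemma half_sum_norm_sq (u v : H) :
    ‖(1 / 2 : ℝ) • (u + v)‖ ^ 2 = ‖u‖ ^ 2 / 2 + ‖v‖ ^ 2 / 2 - ‖u - v‖ ^ 2 / 4 := by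
  have hpar := parallelogram_law_with_norm ℝ u v
  have : ‖(1 / 2 : ℝ) • (u + v)‖ = (1 / 2) * ‖u + v‖ := by
    rw [norm_smul]; norm_num
  rw [this]
  nlinarith [hpar]

lemma limsup_half (g : ℕ → ℝ) (hb : IsBoundedUnder (· ≤ ·) atTop g)
    (hc : IsCoboundedUnder (· ≤ ·) atTop g) :
    Filter.limsup (fun n => g n / 2) atTop = (Filter.limsup g atTop) / 2 := by
  have hm : Monotone (fun a : ℝ => a / 2) := fun a b h => by linarith
  have := hm.map_limsup_of_continuousAt g ((continuous_id.div_const 2).continuousAt) hb hc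
  simpa [Function.comp_def] using this.symm

end Helpers

set_option maxHeartbeats 1000000 in
theorem stmt_18 {H : Type*} [NormedAddCommGroup H] [InnerProductSpace ℝ H] [CompleteSpace H]
    (k : ℕ) (hk : 1 ≤ k) (A : Fin k → Set H)
    (hA : ∀ i, (A i).Nonempty ∧ Convex ℝ (A i) ∧ IsClosed (A i))
    (P : Fin k → H → H) (hP : ∀ i, IsMetricProj (A i) (P i))
    (α : ℝ) (hα : α ∈ Set.Icc (0 : ℝ) 1) (r : ℝ) (hr : 0 < r)
    (x : ℕ → H) (hx : ∀ n, ‖x n‖ ≤ r)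
    (hTx : Filter.Tendsto
      (fun n => ‖compFold (fun i => relax α (P i)) (x n) - x n‖) Filter.atTop (nhds 0)) :
    ∃ x₀ : H, compFold (fun i => relax α (P i)) x₀ = x₀ ∧ ‖x₀‖ ≤ r := by
  set T : H → H := compFold (fun i => relax α (P i)) with hTdef
  have hT : ∀ a b, ‖T a - T b‖ ≤ ‖a - b‖ := by
    refine compFold_nonexpansive _ fun i => relax_nonexpansive ?_ hα.1 hα.2
    exact metricProj_nonexpansive (hA i).2.1 (hP i)
  -- the asymptotic radius function
  set F : H → ℕ → ℝ := fun y n => ‖x n - y‖ ^ 2 with hFdef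
  set S : H → ℝ := fun y => Filter.limsup (F y) atTop with hSdef
  have hF_nonneg : ∀ y n, 0 ≤ F y n := fun y n => sq_nonneg _
  have hF_ub : ∀ y n, F y n ≤ (r + ‖y‖) ^ 2 := by
    intro y n
    have h1 : ‖x n - y‖ ≤ r + ‖y‖ := (norm_sub_le _ _).trans (by linarith [hx n])
    exact pow_le_pow_left₀ (norm_nonneg _) h1 2
  have hFb : ∀ y, IsBoundedUnder (· ≤ ·) atTop (F y) :=
    fun y => isBoundedUnder_of ⟨(r + ‖y‖) ^ 2, hF_ub y⟩
  have hFge : ∀ y, IsBoundedUnder (· ≥ ·) atTop (F y) :=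
    fun y => isBoundedUnder_of ⟨0, hF_nonneg y⟩
  have hFc : ∀ y, IsCoboundedUnder (· ≤ ·) atTop (F y) :=
    fun y => (hFge y).isCoboundedUnder_le
  have hS0 : ∀ y, 0 ≤ S y := fun y =>
    le_limsup_of_frequently_le (Eventually.frequently (Eventually.of_forall (hF_nonneg y))) (hFb y)
  -- midpoint inequality
  have key1 : ∀ y z : H, S ((1 / 2 : ℝ) • (y + z)) ≤ S y / 2 + S z / 2 - ‖y - z‖ ^ 2 / 4 := by
    intro y z
    have hpt : ∀ n, F ((1 / 2 : ℝ) • (y + z)) n = (F y n / 2 + F z n / 2) + (-(‖y - z‖ ^ 2 / 4)) := by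
      intro n
      have h := half_sum_norm_sq (x n - y) (x n - z)
      have e2 : (1 / 2 : ℝ) • ((x n - y) + (x n - z)) = x n - (1 / 2 : ℝ) • (y + z) := by
        module
      have e3 : (x n - y) - (x n - z) = z - y := by abel
      rw [e2, e3] at h
      simp only [hFdef]
      rw [h, norm_sub_rev z y]
      ring
    have hbsum : IsBoundedUnder (· ≤ ·) atTop (fun n => F y n / 2 + F z n / 2) :=
      isBoundedUnder_of ⟨(r + ‖y‖) ^ 2 / 2 + (r + ‖z‖) ^ 2 / 2,
        fun n => by have := hF_ub y n; have := hF_ub z n; linarith⟩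
    have hcsum : IsCoboundedUnder (· ≤ ·) atTop (fun n => F y n / 2 + F z n / 2) :=
      IsBoundedUnder.isCoboundedUnder_le
        (isBoundedUnder_of ⟨0, fun n => by have := hF_nonneg y n; have := hF_nonneg z n; linarith⟩)
    have hby2 : IsBoundedUnder (· ≤ ·) atTop (fun n => F y n / 2) :=
      isBoundedUnder_of ⟨(r + ‖y‖) ^ 2 / 2, fun n => by have := hF_ub y n; linarith⟩
    have hbz2 : IsBoundedUnder (· ≤ ·) atTop (fun n => F z n / 2) :=
      isBoundedUnder_of ⟨(r + ‖z‖) ^ 2 / 2, fun n => by have := hF_ub z n; linarith⟩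
    have hgy2 : IsBoundedUnder (· ≥ ·) atTop (fun n => F y n / 2) :=
      isBoundedUnder_of ⟨0, fun n => by have := hF_nonneg y n; linarith⟩
    have hgz2 : IsCoboundedUnder (· ≤ ·) atTop (fun n => F z n / 2) :=
      IsBoundedUnder.isCoboundedUnder_le
        (isBoundedUnder_of ⟨0, fun n => by have := hF_nonneg z n; linarith⟩)
    calc S ((1 / 2 : ℝ) • (y + z))
        = Filter.limsup (fun n => (F y n / 2 + F z n / 2) + (-(‖y - z‖ ^ 2 / 4))) atTop := by
          simp only [hSdef]; congr 1; funext n; rw [hpt n]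
      _ = Filter.limsup (fun n => F y n / 2 + F z n / 2) atTop + (-(‖y - z‖ ^ 2 / 4)) :=
          limsup_add_const atTop _ _ hbsum hcsum
      _ ≤ (Filter.limsup (fun n => F y n / 2) atTop
            + Filter.limsup (fun n => F z n / 2) atTop) + (-(‖y - z‖ ^ 2 / 4)) := by
          refine add_le_add ?_ le_rfl
          exact limsup_add_le hgy2 hby2 hgz2 hbz2
      _ = S y / 2 + S z / 2 - ‖y - z‖ ^ 2 / 4 := by
          rw [limsup_half (F y) (hFb y) (hFc y), limsup_half (F z) (hFb z) (hFc z)]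
          simp only [hSdef]; ring
  -- continuity-type inequality
  have key3 : ∀ y z : H, S y ≤ S z + (2 * r + ‖y‖ + ‖z‖) * ‖y - z‖ := by
    intro y z
    have hpt : ∀ n, F y n ≤ F z n + (2 * r + ‖y‖ + ‖z‖) * ‖y - z‖ := by
      intro n
      have ha : ‖x n - y‖ ≤ ‖x n - z‖ + ‖y - z‖ := by
        calc ‖x n - y‖ = ‖(x n - z) - (y - z)‖ := by congr 1; abel
          _ ≤ ‖x n - z‖ + ‖y - z‖ := norm_sub_le _ _
      have hay : ‖x n - y‖ ≤ r + ‖y‖ := (norm_sub_le _ _).trans (by linarith [hx n])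
      have haz : ‖x n - z‖ ≤ r + ‖z‖ := (norm_sub_le _ _).trans (by linarith [hx n])
      have h0y : (0:ℝ) ≤ ‖x n - y‖ := norm_nonneg _
      have h0z : (0:ℝ) ≤ ‖x n - z‖ := norm_nonneg _
      have h0d : (0:ℝ) ≤ ‖y - z‖ := norm_nonneg _
      simp only [hFdef]
      rcases le_or_gt ‖x n - y‖ ‖x n - z‖ with hle | hlt
      · nlinarith
      · have hsum : ‖x n - y‖ + ‖x n - z‖ ≤ 2 * r + ‖y‖ + ‖z‖ := by linarith
        have hdiff : ‖x n - y‖ - ‖x n - z‖ ≤ ‖y - z‖ := by linarith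
        nlinarith [mul_le_mul hdiff hsum (by linarith) h0d]
    calc S y ≤ Filter.limsup (fun n => F z n + (2 * r + ‖y‖ + ‖z‖) * ‖y - z‖) atTop :=
          limsup_le_limsup (Eventually.of_forall hpt) (hFc y)
            (isBoundedUnder_of ⟨(r + ‖z‖) ^ 2 + (2 * r + ‖y‖ + ‖z‖) * ‖y - z‖,
              fun n => by have := hF_ub z n; linarith⟩)
      _ = S z + (2 * r + ‖y‖ + ‖z‖) * ‖y - z‖ := limsup_add_const atTop _ _ (hFb z) (hFc z)
  -- T decreases S
  have key2 : ∀ z : H, S (T z) ≤ S z := by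
    intro z
    set G : ℕ → ℝ := fun n => (2 * (r + ‖z‖) + ‖T (x n) - x n‖) * ‖T (x n) - x n‖ with hGdef
    have hG0 : Tendsto G atTop (𝓝 0) := by
      have := (tendsto_const_nhds (x := 2 * (r + ‖z‖)) (f := atTop)).add hTx
      have hmul := this.mul hTx
      simpa using hmul
    have hpt : ∀ n, F (T z) n ≤ F z n + G n := by
      intro n
      have h1 : ‖x n - T z‖ ≤ ‖T (x n) - x n‖ + ‖x n - z‖ := by
        calc ‖x n - T z‖ = ‖(x n - T (x n)) + (T (x n) - T z)‖ := by congr 1; abel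
          _ ≤ ‖x n - T (x n)‖ + ‖T (x n) - T z‖ := norm_add_le _ _
          _ ≤ ‖T (x n) - x n‖ + ‖x n - z‖ := by
              rw [norm_sub_rev (x n)]; exact add_le_add le_rfl (hT _ _)
      have haz : ‖x n - z‖ ≤ r + ‖z‖ := (norm_sub_le _ _).trans (by linarith [hx n])
      have h0a : (0:ℝ) ≤ ‖x n - T z‖ := norm_nonneg _
      have h0e : (0:ℝ) ≤ ‖T (x n) - x n‖ := norm_nonneg _
      have h0z : (0:ℝ) ≤ ‖x n - z‖ := norm_nonneg _
      simp only [hFdef, hGdef]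
      nlinarith [pow_le_pow_left₀ h0a h1 2]
    calc S (T z) ≤ Filter.limsup (fun n => F z n + G n) atTop := by
          refine limsup_le_limsup (Eventually.of_forall hpt) (hFc (T z)) ?_
          exact isBoundedUnder_le_add (hFb z) hG0.isBoundedUnder_le
      _ ≤ Filter.limsup (F z) atTop + Filter.limsup G atTop := by
          refine limsup_add_le (hFge z) (hFb z) ?_ hG0.isBoundedUnder_le
          exact hG0.isBoundedUnder_ge.isCoboundedUnder_le
      _ = S z := by rw [hG0.limsup_eq]; simp [hSdef]
  -- infimum
  have hSbdd : BddBelow (Set.range S) := ⟨0, by rintro _ ⟨y, rfl⟩; exact hS0 y⟩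
  set m : ℝ := ⨅ y : H, S y with hmdef
  have hm_le : ∀ y, m ≤ S y := fun y => ciInf_le hSbdd y
  -- minimizing sequence
  have hmin : ∀ j : ℕ, ∃ y : H, S y < m + 1 / (j + 1) := by
    intro j
    refine exists_lt_of_ciInf_lt ?_
    rw [← hmdef]
    have : (0:ℝ) < 1 / (j + 1) := by positivity
    linarith
  choose y hy using hmin
  -- Cauchy estimate
  have hcauchy_est : ∀ i j : ℕ, ‖y i - y j‖ ^ 2 ≤ 2 / (i + 1) + 2 / (j + 1) := by
    intro i j
    have h1 := key1 (y i) (y j)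
    have h2 := hm_le ((1 / 2 : ℝ) • (y i + y j))
    have h3 := hy i
    have h4 := hy j
    have e5 : 2 / ((i:ℝ) + 1) = 1 / ((i:ℝ) + 1) + 1 / ((i:ℝ) + 1) := by ring
    have e6 : 2 / ((j:ℝ) + 1) = 1 / ((j:ℝ) + 1) + 1 / ((j:ℝ) + 1) := by ring
    linarith
  have hCauchy : CauchySeq y := by
    rw [Metric.cauchySeq_iff]
    intro ε hε
    obtain ⟨N, hN⟩ := exists_nat_gt (4 / ε ^ 2)
    refine ⟨N, fun i hi j hj => ?_⟩
    have hNpos : (0:ℝ) < N + 1 := by positivity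
    have hd2 : dist (y i) (y j) ^ 2 ≤ 4 / (N + 1) := by
      rw [dist_eq_norm]
      have hi' : ((N:ℝ) + 1) ≤ (i:ℝ) + 1 := by
        have : (N:ℝ) ≤ i := Nat.cast_le.mpr hi
        linarith
      have hj' : ((N:ℝ) + 1) ≤ (j:ℝ) + 1 := by
        have : (N:ℝ) ≤ j := Nat.cast_le.mpr hj
        linarith
      have e1 : 2 / ((i:ℝ) + 1) ≤ 2 / ((N:ℝ) + 1) := by
        rw [div_le_div_iff₀ (by positivity) hNpos]; nlinarith
      have e2 : 2 / ((j:ℝ) + 1) ≤ 2 / ((N:ℝ) + 1) := by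
        rw [div_le_div_iff₀ (by positivity) hNpos]; nlinarith
      have e3 : 4 / ((N:ℝ) + 1) = 2 / ((N:ℝ) + 1) + 2 / ((N:ℝ) + 1) := by ring
      have := hcauchy_est i j
      linarith
    have hlt : 4 / ((N:ℝ) + 1) < ε ^ 2 := by
      rw [div_lt_iff₀ hNpos]
      have h4 : 4 / ε ^ 2 < (N:ℝ) := hN
      have hε2 : (0:ℝ) < ε ^ 2 := by positivity
      rw [div_lt_iff₀ hε2] at h4
      nlinarith
    have : dist (y i) (y j) ^ 2 < ε ^ 2 := lt_of_le_of_lt hd2 hlt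
    exact lt_of_pow_lt_pow_left₀ 2 hε.le this
  obtain ⟨z, hz⟩ := cauchySeq_tendsto_of_complete hCauchy
  -- S z = m
  have hSzm : S z = m := by
    refine le_antisymm ?_ (hm_le z)
    have hRj : ∀ j, S z ≤ (m + 1 / (j + 1)) + (2 * r + ‖z‖ + ‖y j‖) * ‖z - y j‖ := by
      intro j
      linarith [key3 z (y j), (hy j).le]
    have hlim : Tendsto (fun j : ℕ => (m + 1 / ((j:ℝ) + 1)) + (2 * r + ‖z‖ + ‖y j‖) * ‖z - y j‖)
        atTop (𝓝 ((m + 0) + (2 * r + ‖z‖ + ‖z‖) * 0)) := by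
      refine Tendsto.add (Tendsto.add tendsto_const_nhds ?_) (Tendsto.mul ?_ ?_)
      · exact tendsto_one_div_add_atTop_nhds_zero_nat
      · exact Tendsto.add tendsto_const_nhds hz.norm
      · have h0 : Tendsto (fun j => z - y j) atTop (𝓝 (0:H)) := by
          have h1 : Tendsto (fun j => z - y j) atTop (𝓝 (z - z)) := tendsto_const_nhds.sub hz
          rwa [sub_self] at h1
        have h2 := h0.norm
        rwa [norm_zero] at h2
    have : S z ≤ (m + 0) + (2 * r + ‖z‖ + ‖z‖) * 0 := ge_of_tendsto' hlim hRj
    linarith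
  -- fixed point
  have hfix : T z = z := by
    have h1 : S (T z) ≤ m := by rw [← hSzm]; exact key2 z
    have h2 : m ≤ S ((1 / 2 : ℝ) • (z + T z)) := hm_le _
    have h3 := key1 z (T z)
    have h4 : ‖z - T z‖ ^ 2 ≤ 0 := by linarith [hSzm ▸ hm_le z, hSzm.le]
    have h5 : ‖z - T z‖ = 0 := by nlinarith [sq_nonneg ‖z - T z‖, norm_nonneg (z - T z)]
    have := sub_eq_zero.mp (norm_eq_zero.mp h5)
    exact this.symm
  -- z is in the ball
  have hzr : ‖z‖ ≤ r := by
    set B : Set H := Metric.closedBall (0 : H) r with hBdef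
    have hBne : B.Nonempty := ⟨0, by simp [hBdef, hr.le]⟩
    have hBcomplete : IsComplete B := Metric.isClosed_closedBall.isComplete
    have hBconv : Convex ℝ B := convex_closedBall _ _
    obtain ⟨w, hwB, hwmin⟩ := exists_norm_eq_iInf_of_complete_convex hBne hBcomplete hBconv z
    have hvar := (norm_eq_iInf_iff_real_inner_le_zero hBconv hwB).1 hwmin
    have hxnB : ∀ n, x n ∈ B := fun n => by
      simp only [hBdef, Metric.mem_closedBall, dist_zero_right]; exact hx n
    have hpt : ∀ n, F w n ≤ F z n + (-(‖z - w‖ ^ 2)) := by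
      intro n
      have hexp := norm_sub_sq_real (x n - w) (z - w)
      have e : (x n - w) - (z - w) = x n - z := by abel
      rw [e] at hexp
      have hip : ⟪z - w, x n - w⟫ ≤ 0 := hvar (x n) (hxnB n)
      rw [real_inner_comm] at hip
      simp only [hFdef]
      linarith
    have h1 : S w ≤ m + (-(‖z - w‖ ^ 2)) := by
      calc S w ≤ Filter.limsup (fun n => F z n + (-(‖z - w‖ ^ 2))) atTop :=
            limsup_le_limsup (Eventually.of_forall hpt) (hFc w)
              (isBoundedUnder_of ⟨(r + ‖z‖) ^ 2, fun n => by
                have := hF_ub z n; nlinarith [sq_nonneg ‖z - w‖]⟩)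
        _ = S z + (-(‖z - w‖ ^ 2)) := limsup_add_const atTop _ _ (hFb z) (hFc z)
        _ = m + (-(‖z - w‖ ^ 2)) := by rw [hSzm]
    have h2 : ‖z - w‖ ^ 2 ≤ 0 := by linarith [hm_le w]
    have h3 : z = w := by
      have : ‖z - w‖ = 0 := by nlinarith [norm_nonneg (z - w)]
      exact sub_eq_zero.mp (norm_eq_zero.mp this)
    rw [h3]
    simpa [hBdef, Metric.mem_closedBall, dist_zero_right] using hwB
  exact ⟨z, hfix, hzr⟩
end
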